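/- arXiv:2506.09617 — 7 statements merged into one kernel-verified Lean document; each statement's English description precedes it below -/
import Mathlib

section
/- Let N ≥ 1 and α > 0. There exists a constant C > 0 depending only on α such that for all u, v ∈ ℝ^N one has (1/C)·|v^{⟨α⟩} − u^{⟨α⟩}| ≤ (|u| + |v|)^{α−1}·|v − u| ≤ C·|v^{⟨α⟩} − u^{⟨α⟩}| (where for u = v = 0 the middle expression is interpreted as 0). -/
/-- For `α > 0` and a vector `u`, the power `u^{⟨α⟩} := ‖u‖^(α-1) • u` (with `0^{⟨α⟩} = 0`). -/
noncomputable def vpow {E : Type*} [NormedAddCommGroup E] [NormedSpace ℝ E] (α : ℝ) (u : E) : E :=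
  (‖u‖ ^ (α - 1)) • u


open Real

lemma rpow_sub_one_mul {α x : ℝ} (hα : 0 < α) (hx : 0 ≤ x) : x ^ (α - 1) * x = x ^ α := by
  rw [← Real.rpow_add_one' hx (by linarith), sub_add_cancel]

lemma scalar_upper {α a b : ℝ} (hα : 1 ≤ α) (ha : 0 ≤ a) (hab : a ≤ b) :
    b ^ α - a ^ α ≤ α * ((a + b) ^ (α - 1) * (b - a)) := by
  rcases eq_or_lt_of_le (ha.trans hab) with hb | hb
  · have : a = 0 := le_antisymm (hab.trans hb.symm.le) ha
    simp [← hb, this]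
  -- Bernoulli: 1 + α*(a/b - 1) ≤ (a/b)^α
  have hb' : (0:ℝ) < b := hb
  have hst : (-1:ℝ) ≤ a / b - 1 := by
    have : 0 ≤ a / b := div_nonneg ha hb'.le
    linarith
  have key := one_add_mul_self_le_rpow_one_add hst hα
  rw [show 1 + (a / b - 1) = a / b by ring] at key
  rw [Real.div_rpow ha hb'.le] at key
  have hbα : (0:ℝ) < b ^ α := Real.rpow_pos_of_pos hb' α
  have k2 : (1 + α * (a / b - 1)) * b ^ α ≤ a ^ α := by
    calc (1 + α * (a / b - 1)) * b ^ α ≤ (a ^ α / b ^ α) * b ^ α :=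
          mul_le_mul_of_nonneg_right key hbα.le
      _ = a ^ α := by field_simp
  have hba : b ^ (α - 1) * b = b ^ α := rpow_sub_one_mul (by linarith) hb'.le
  have expand : (1 + α * (a / b - 1)) * b ^ α = b ^ α + α * (a * b ^ (α - 1) - b ^ α) := by
    rw [← hba]; field_simp
  rw [expand] at k2
  -- so b^α - a^α ≤ α * b^(α-1) * (b - a)
  have step1 : b ^ α - a ^ α ≤ α * (b ^ (α - 1) * (b - a)) := by
    rw [← hba] at k2 ⊢; nlinarith
  have step2 : b ^ (α - 1) ≤ (a + b) ^ (α - 1) :=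
    Real.rpow_le_rpow hb'.le (by linarith) (by linarith)
  have : α * (b ^ (α - 1) * (b - a)) ≤ α * ((a + b) ^ (α - 1) * (b - a)) := by
    have := mul_le_mul_of_nonneg_right step2 (by linarith : (0:ℝ) ≤ b - a)
    nlinarith
  linarith

lemma scalar_lower {α a b : ℝ} (hα : 1 ≤ α) (ha : 0 ≤ a) (hab : a ≤ b) :
    2 ^ (1 - α) * ((a + b) ^ (α - 1) * (b - a)) ≤ b ^ α - a ^ α := by
  have hb : 0 ≤ b := ha.trans hab
  have h1 : (a + b) ^ (α - 1) ≤ (2 * b) ^ (α - 1) :=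
    Real.rpow_le_rpow (by linarith) (by linarith) (by linarith)
  have h2 : ((2:ℝ) * b) ^ (α - 1) = 2 ^ (α - 1) * b ^ (α - 1) :=
    Real.mul_rpow (by norm_num) hb
  have h3 : (2:ℝ) ^ (1 - α) * 2 ^ (α - 1) = 1 := by
    rw [← Real.rpow_add two_pos]; norm_num
  have hm : (0:ℝ) ≤ 2 ^ (1 - α) := Real.rpow_nonneg (by norm_num) _
  have h4 : 2 ^ (1 - α) * ((a + b) ^ (α - 1) * (b - a)) ≤ b ^ (α - 1) * (b - a) := by
    have := mul_le_mul_of_nonneg_right h1 (by linarith : (0:ℝ) ≤ b - a)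
    calc 2 ^ (1 - α) * ((a + b) ^ (α - 1) * (b - a))
        ≤ 2 ^ (1 - α) * ((2 * b) ^ (α - 1) * (b - a)) := by nlinarith
      _ = (2 ^ (1 - α) * 2 ^ (α - 1)) * (b ^ (α - 1) * (b - a)) := by rw [h2]; ring
      _ = b ^ (α - 1) * (b - a) := by rw [h3, one_mul]
  have h5 : b ^ (α - 1) * (b - a) ≤ b ^ α - a ^ α := by
    have hba : b ^ (α - 1) * b = b ^ α := rpow_sub_one_mul (by linarith) hb
    have haa : a ^ (α - 1) * a = a ^ α := rpow_sub_one_mul (by linarith) ha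
    have : a ^ (α - 1) ≤ b ^ (α - 1) := Real.rpow_le_rpow ha hab (by linarith)
    nlinarith
  linarith

lemma sum_upper {α a b : ℝ} (hα : 1 ≤ α) (ha : 0 ≤ a) (hb : 0 ≤ b) :
    a ^ α + b ^ α ≤ (a + b) ^ α := by
  have h1 : a ^ (α - 1) ≤ (a + b) ^ (α - 1) := Real.rpow_le_rpow ha (by linarith) (by linarith)
  have h2 : b ^ (α - 1) ≤ (a + b) ^ (α - 1) := Real.rpow_le_rpow hb (by linarith) (by linarith)
  have ea : a ^ (α - 1) * a = a ^ α := rpow_sub_one_mul (by linarith) ha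
  have eb : b ^ (α - 1) * b = b ^ α := rpow_sub_one_mul (by linarith) hb
  have eab : (a + b) ^ (α - 1) * (a + b) = (a + b) ^ α := rpow_sub_one_mul (by linarith) (by linarith)
  nlinarith [mul_le_mul_of_nonneg_right h1 ha, mul_le_mul_of_nonneg_right h2 hb]

lemma sum_lower {α a b : ℝ} (hα : 1 ≤ α) (ha : 0 ≤ a) (hb : 0 ≤ b) :
    2 ^ (1 - α) * (a + b) ^ α ≤ a ^ α + b ^ α := by
  have hconv := (convexOn_rpow hα).2 (Set.mem_Ici.2 ha) (Set.mem_Ici.2 hb)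
    (by norm_num : (0:ℝ) ≤ 1/2) (by norm_num : (0:ℝ) ≤ 1/2) (by norm_num)
  simp only [smul_eq_mul] at hconv
  have hdiv : ((a + b) / 2) ^ α = (a + b) ^ α / 2 ^ α :=
    Real.div_rpow (by linarith) (by norm_num : (0:ℝ) ≤ 2) α
  rw [show (1:ℝ)/2 * a + 1/2 * b = (a+b)/2 by ring, hdiv] at hconv
  have h2α : (0:ℝ) < 2 ^ α := Real.rpow_pos_of_pos two_pos α
  have h3 : (2:ℝ) ^ (1 - α) * 2 ^ α = 2 := by
    rw [← Real.rpow_add two_pos]; norm_num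
  have := mul_le_mul_of_nonneg_right hconv h2α.le
  rw [div_mul_cancel₀ _ h2α.ne'] at this
  have hm : (0:ℝ) ≤ 2 ^ (1 - α) := Real.rpow_nonneg (by norm_num) _
  calc 2 ^ (1 - α) * (a + b) ^ α
      ≤ 2 ^ (1 - α) * ((1 / 2 * a ^ α + 1 / 2 * b ^ α) * 2 ^ α) :=
        mul_le_mul_of_nonneg_left this hm
    _ = (2 ^ (1 - α) * 2 ^ α) * (1 / 2 * a ^ α + 1 / 2 * b ^ α) := by ring
    _ = a ^ α + b ^ α := by rw [h3]; ring

lemma combo (α a b c A B A' B' M m : ℝ)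
    (hc1 : c ≤ a * b) (hc2 : -(a * b) ≤ c)
    (e1u : (B - A) ^ 2 ≤ (α * M) ^ 2 * (b - a) ^ 2)
    (e1l : m * M * (b - a) ^ 2 ≤ (B - A) * (b - a))
    (e2u : (A + B) ^ 2 ≤ (α * M) ^ 2 * (a + b) ^ 2)
    (e2l : m * M * (a + b) ^ 2 ≤ (A + B) * (a + b))
    (hABprod : A' * B' * (a * b) = A * B)
    (hAb : A' * (a * b) = A * b) (hBa : B' * (a * b) = B * a) :
    B ^ 2 + A ^ 2 - 2 * (A' * B') * c ≤ (α * M) ^ 2 * (a ^ 2 + b ^ 2 - 2 * c) ∧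
    m * M * (a ^ 2 + b ^ 2 - 2 * c) ≤ B * b + A * a - (A' + B') * c := by
  constructor
  · rcases le_or_gt (A' * B') ((α * M) ^ 2) with hK | hK
    · have hp := mul_le_mul_of_nonneg_left hK (sub_nonneg.2 hc1)
      nlinarith [e1u, hp, hABprod]
    · have hp := mul_le_mul_of_nonneg_left hK.le (by linarith : (0:ℝ) ≤ c + a * b)
      nlinarith [e2u, hp, hABprod]
  · rcases le_or_gt (2 * (m * M)) (A' + B') with hK | hK
    · have hp := mul_le_mul_of_nonneg_left hK (sub_nonneg.2 hc1)
      nlinarith [e1l, hp, hAb, hBa]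
    · have hp := mul_le_mul_of_nonneg_left hK.le (by linarith : (0:ℝ) ≤ c + a * b)
      nlinarith [e2l, hp, hAb, hBa]

variable {E : Type*} [NormedAddCommGroup E] [InnerProductSpace ℝ E]

lemma norm_vpow (α : ℝ) (hα : 0 < α) (u : E) : ‖vpow α u‖ = ‖u‖ ^ α := by
  rw [vpow, norm_smul, Real.norm_eq_abs, abs_of_nonneg (Real.rpow_nonneg (norm_nonneg u) _),
    rpow_sub_one_mul hα (norm_nonneg u)]

set_option maxHeartbeats 1000000 in
lemma key (α : ℝ) (hα : 1 ≤ α) (u v : E) :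
    ‖vpow α v - vpow α u‖ ≤ α * ((‖u‖ + ‖v‖) ^ (α - 1) * ‖v - u‖) ∧
    (‖u‖ + ‖v‖) ^ (α - 1) * ‖v - u‖ ≤ 2 ^ (α - 1) * ‖vpow α v - vpow α u‖ := by
  have hα0 : (0:ℝ) < α := by linarith
  have ha : (0:ℝ) ≤ ‖u‖ := norm_nonneg u
  have hb : (0:ℝ) ≤ ‖v‖ := norm_nonneg v
  have hc1 : (inner ℝ u v : ℝ) ≤ ‖u‖ * ‖v‖ := real_inner_le_norm u v
  have hc2 : -(‖u‖ * ‖v‖) ≤ (inner ℝ u v : ℝ) := by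
    have h := abs_real_inner_le_norm u v
    rw [abs_le] at h; exact h.1
  have hA'a : ‖u‖ ^ (α-1) * ‖u‖ = ‖u‖ ^ α := rpow_sub_one_mul hα0 ha
  have hB'b : ‖v‖ ^ (α-1) * ‖v‖ = ‖v‖ ^ α := rpow_sub_one_mul hα0 hb
  have hMab : (‖u‖ + ‖v‖) ^ (α-1) * (‖u‖ + ‖v‖) = (‖u‖ + ‖v‖) ^ α :=
    rpow_sub_one_mul hα0 (by linarith)
  have hA0 : (0:ℝ) ≤ ‖u‖ ^ α := Real.rpow_nonneg ha _
  have hB0 : (0:ℝ) ≤ ‖v‖ ^ α := Real.rpow_nonneg hb _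
  have hM0 : (0:ℝ) ≤ (‖u‖ + ‖v‖) ^ (α-1) := Real.rpow_nonneg (by linarith) _
  have hm0 : (0:ℝ) ≤ (2:ℝ) ^ (1-α) := Real.rpow_nonneg (by norm_num) _
  have hm1 : (2:ℝ) ^ (1-α) * (2:ℝ) ^ (α-1) = 1 := by
    rw [← Real.rpow_add two_pos]; norm_num
  -- norm identities
  have hw2 : ‖v - u‖ ^ 2 = ‖u‖ ^ 2 + ‖v‖ ^ 2 - 2 * (inner ℝ u v : ℝ) := by
    rw [norm_sub_sq_real, real_inner_comm]; ring
  have hnu : ‖vpow α u‖ = ‖u‖ ^ α := norm_vpow α hα0 u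
  have hnv : ‖vpow α v‖ = ‖v‖ ^ α := norm_vpow α hα0 v
  have hDinner : (inner ℝ (vpow α v) (vpow α u) : ℝ)
      = ‖v‖ ^ (α-1) * (‖u‖ ^ (α-1) * (inner ℝ u v : ℝ)) := by
    rw [vpow, vpow, real_inner_smul_left, real_inner_smul_right, real_inner_comm]
  have hD2 : ‖vpow α v - vpow α u‖ ^ 2
      = (‖v‖ ^ α) ^ 2 + (‖u‖ ^ α) ^ 2
        - 2 * (‖u‖ ^ (α-1) * ‖v‖ ^ (α-1)) * (inner ℝ u v : ℝ) := by
    rw [norm_sub_sq_real, hDinner, hnu, hnv]; ring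
  have hiw : (inner ℝ (vpow α v - vpow α u) (v - u) : ℝ)
      = ‖v‖ ^ α * ‖v‖ + ‖u‖ ^ α * ‖u‖
        - (‖u‖ ^ (α-1) + ‖v‖ ^ (α-1)) * (inner ℝ u v : ℝ) := by
    rw [vpow, vpow, inner_sub_left, inner_sub_right, inner_sub_right,
      real_inner_smul_left, real_inner_smul_left, real_inner_smul_left, real_inner_smul_left,
      real_inner_self_eq_norm_sq, real_inner_self_eq_norm_sq, real_inner_comm v u,
      ← hA'a, ← hB'b]
    ring
  -- endpoint facts
  have e1u : (‖v‖ ^ α - ‖u‖ ^ α) ^ 2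
      ≤ (α * (‖u‖ + ‖v‖) ^ (α-1)) ^ 2 * (‖v‖ - ‖u‖) ^ 2 := by
    rcases le_total ‖u‖ ‖v‖ with h | h
    · have h1 := scalar_upper hα ha h
      have h2 : (0:ℝ) ≤ ‖v‖ ^ α - ‖u‖ ^ α := by
        have := Real.rpow_le_rpow ha h hα0.le; linarith
      calc (‖v‖ ^ α - ‖u‖ ^ α) ^ 2
          ≤ (α * ((‖u‖ + ‖v‖) ^ (α-1) * (‖v‖ - ‖u‖))) ^ 2 := pow_le_pow_left₀ h2 h1 2
        _ = (α * (‖u‖ + ‖v‖) ^ (α-1)) ^ 2 * (‖v‖ - ‖u‖) ^ 2 := by ring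
    · have h1 := scalar_upper hα hb h
      rw [add_comm ‖v‖ ‖u‖] at h1
      have h2 : (0:ℝ) ≤ ‖u‖ ^ α - ‖v‖ ^ α := by
        have := Real.rpow_le_rpow hb h hα0.le; linarith
      calc (‖v‖ ^ α - ‖u‖ ^ α) ^ 2
          = (‖u‖ ^ α - ‖v‖ ^ α) ^ 2 := by ring
        _ ≤ (α * ((‖u‖ + ‖v‖) ^ (α-1) * (‖u‖ - ‖v‖))) ^ 2 := pow_le_pow_left₀ h2 h1 2
        _ = (α * (‖u‖ + ‖v‖) ^ (α-1)) ^ 2 * (‖v‖ - ‖u‖) ^ 2 := by ring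
  have e1l : (2:ℝ) ^ (1-α) * (‖u‖ + ‖v‖) ^ (α-1) * (‖v‖ - ‖u‖) ^ 2
      ≤ (‖v‖ ^ α - ‖u‖ ^ α) * (‖v‖ - ‖u‖) := by
    rcases le_total ‖u‖ ‖v‖ with h | h
    · have h1 := scalar_lower hα ha h
      calc (2:ℝ) ^ (1-α) * (‖u‖ + ‖v‖) ^ (α-1) * (‖v‖ - ‖u‖) ^ 2
          = ((2:ℝ) ^ (1-α) * ((‖u‖ + ‖v‖) ^ (α-1) * (‖v‖ - ‖u‖))) * (‖v‖ - ‖u‖) := by ring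
        _ ≤ (‖v‖ ^ α - ‖u‖ ^ α) * (‖v‖ - ‖u‖) :=
            mul_le_mul_of_nonneg_right h1 (by linarith)
    · have h1 := scalar_lower hα hb h
      rw [add_comm ‖v‖ ‖u‖] at h1
      calc (2:ℝ) ^ (1-α) * (‖u‖ + ‖v‖) ^ (α-1) * (‖v‖ - ‖u‖) ^ 2
          = ((2:ℝ) ^ (1-α) * ((‖u‖ + ‖v‖) ^ (α-1) * (‖u‖ - ‖v‖))) * (‖u‖ - ‖v‖) := by ring
        _ ≤ (‖u‖ ^ α - ‖v‖ ^ α) * (‖u‖ - ‖v‖) :=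
            mul_le_mul_of_nonneg_right h1 (by linarith)
        _ = (‖v‖ ^ α - ‖u‖ ^ α) * (‖v‖ - ‖u‖) := by ring
  have e2u : (‖u‖ ^ α + ‖v‖ ^ α) ^ 2
      ≤ (α * (‖u‖ + ‖v‖) ^ (α-1)) ^ 2 * (‖u‖ + ‖v‖) ^ 2 := by
    have h1 : ‖u‖ ^ α + ‖v‖ ^ α ≤ (‖u‖ + ‖v‖) ^ (α-1) * (‖u‖ + ‖v‖) := by
      rw [hMab]; exact sum_upper hα ha hb
    have h3 : (0:ℝ) ≤ (‖u‖ + ‖v‖) ^ (α-1) * (‖u‖ + ‖v‖) :=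
      mul_nonneg hM0 (by linarith)
    have h2 : ‖u‖ ^ α + ‖v‖ ^ α ≤ α * ((‖u‖ + ‖v‖) ^ (α-1) * (‖u‖ + ‖v‖)) := by nlinarith
    have h4 : (0:ℝ) ≤ ‖u‖ ^ α + ‖v‖ ^ α := by linarith
    calc (‖u‖ ^ α + ‖v‖ ^ α) ^ 2
        ≤ (α * ((‖u‖ + ‖v‖) ^ (α-1) * (‖u‖ + ‖v‖))) ^ 2 := pow_le_pow_left₀ h4 h2 2
      _ = (α * (‖u‖ + ‖v‖) ^ (α-1)) ^ 2 * (‖u‖ + ‖v‖) ^ 2 := by ring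
  have e2l : (2:ℝ) ^ (1-α) * (‖u‖ + ‖v‖) ^ (α-1) * (‖u‖ + ‖v‖) ^ 2
      ≤ (‖u‖ ^ α + ‖v‖ ^ α) * (‖u‖ + ‖v‖) := by
    have h1 : (2:ℝ) ^ (1-α) * ((‖u‖ + ‖v‖) ^ (α-1) * (‖u‖ + ‖v‖)) ≤ ‖u‖ ^ α + ‖v‖ ^ α := by
      rw [hMab]; exact sum_lower hα ha hb
    calc (2:ℝ) ^ (1-α) * (‖u‖ + ‖v‖) ^ (α-1) * (‖u‖ + ‖v‖) ^ 2
        = ((2:ℝ) ^ (1-α) * ((‖u‖ + ‖v‖) ^ (α-1) * (‖u‖ + ‖v‖))) * (‖u‖ + ‖v‖) := by ring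
      _ ≤ (‖u‖ ^ α + ‖v‖ ^ α) * (‖u‖ + ‖v‖) :=
          mul_le_mul_of_nonneg_right h1 (by linarith)
  obtain ⟨upper_sq, lower_in⟩ := combo α ‖u‖ ‖v‖ (inner ℝ u v : ℝ)
    (‖u‖ ^ α) (‖v‖ ^ α) (‖u‖ ^ (α-1)) (‖v‖ ^ (α-1)) ((‖u‖ + ‖v‖) ^ (α-1)) ((2:ℝ) ^ (1-α))
    hc1 hc2 e1u e1l e2u e2l
    (by rw [← hA'a, ← hB'b]; ring) (by rw [← hA'a]; ring) (by rw [← hB'b]; ring)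
  constructor
  · have hsq : ‖vpow α v - vpow α u‖ ^ 2 ≤ (α * ((‖u‖ + ‖v‖) ^ (α-1) * ‖v - u‖)) ^ 2 := by
      rw [hD2]
      calc (‖v‖ ^ α) ^ 2 + (‖u‖ ^ α) ^ 2
            - 2 * (‖u‖ ^ (α-1) * ‖v‖ ^ (α-1)) * (inner ℝ u v : ℝ)
          ≤ (α * (‖u‖ + ‖v‖) ^ (α-1)) ^ 2
              * (‖u‖ ^ 2 + ‖v‖ ^ 2 - 2 * (inner ℝ u v : ℝ)) := upper_sq
        _ = (α * (‖u‖ + ‖v‖) ^ (α-1)) ^ 2 * ‖v - u‖ ^ 2 := by rw [hw2]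
        _ = (α * ((‖u‖ + ‖v‖) ^ (α-1) * ‖v - u‖)) ^ 2 := by ring
    exact le_of_pow_le_pow_left₀ two_ne_zero (by positivity) hsq
  · rcases eq_or_lt_of_le (norm_nonneg (v - u)) with hw | hw
    · rw [← hw, mul_zero]; positivity
    · have hip : (2:ℝ) ^ (1-α) * (‖u‖ + ‖v‖) ^ (α-1) * ‖v - u‖ ^ 2
          ≤ ‖vpow α v - vpow α u‖ * ‖v - u‖ := by
        calc (2:ℝ) ^ (1-α) * (‖u‖ + ‖v‖) ^ (α-1) * ‖v - u‖ ^ 2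
            = (2:ℝ) ^ (1-α) * (‖u‖ + ‖v‖) ^ (α-1)
                * (‖u‖ ^ 2 + ‖v‖ ^ 2 - 2 * (inner ℝ u v : ℝ)) := by rw [hw2]
          _ ≤ ‖v‖ ^ α * ‖v‖ + ‖u‖ ^ α * ‖u‖
                - (‖u‖ ^ (α-1) + ‖v‖ ^ (α-1)) * (inner ℝ u v : ℝ) := lower_in
          _ = (inner ℝ (vpow α v - vpow α u) (v - u) : ℝ) := hiw.symm
          _ ≤ ‖vpow α v - vpow α u‖ * ‖v - u‖ := real_inner_le_norm _ _
      have hip' : ((2:ℝ) ^ (1-α) * ((‖u‖ + ‖v‖) ^ (α-1) * ‖v - u‖)) * ‖v - u‖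
          ≤ ‖vpow α v - vpow α u‖ * ‖v - u‖ := by
        calc ((2:ℝ) ^ (1-α) * ((‖u‖ + ‖v‖) ^ (α-1) * ‖v - u‖)) * ‖v - u‖
            = (2:ℝ) ^ (1-α) * (‖u‖ + ‖v‖) ^ (α-1) * ‖v - u‖ ^ 2 := by ring
          _ ≤ ‖vpow α v - vpow α u‖ * ‖v - u‖ := hip
      have hmm : (2:ℝ) ^ (1-α) * ((‖u‖ + ‖v‖) ^ (α-1) * ‖v - u‖)
          ≤ ‖vpow α v - vpow α u‖ := le_of_mul_le_mul_right hip' hw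
      calc (‖u‖ + ‖v‖) ^ (α-1) * ‖v - u‖
          = ((2:ℝ) ^ (1-α) * (2:ℝ) ^ (α-1)) * ((‖u‖ + ‖v‖) ^ (α-1) * ‖v - u‖) := by
            rw [hm1, one_mul]
        _ = (2:ℝ) ^ (α-1) * ((2:ℝ) ^ (1-α) * ((‖u‖ + ‖v‖) ^ (α-1) * ‖v - u‖)) := by ring
        _ ≤ (2:ℝ) ^ (α-1) * ‖vpow α v - vpow α u‖ :=
            mul_le_mul_of_nonneg_left hmm (Real.rpow_nonneg (by norm_num) _)

lemma vpow_vpow (α : ℝ) (hα : 0 < α) (u : E) : vpow α⁻¹ (vpow α u) = u := by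
  by_cases hu : u = 0
  · simp [hu, vpow]
  · have hn : 0 < ‖u‖ := norm_pos_iff.mpr hu
    conv_lhs => rw [vpow]
    rw [norm_vpow α hα u, vpow, smul_smul]
    have hcoef : (‖u‖ ^ α) ^ (α⁻¹ - 1) * ‖u‖ ^ (α - 1) = 1 := by
      rw [← Real.rpow_mul (norm_nonneg u), ← Real.rpow_add hn]
      rw [show α * (α⁻¹ - 1) + (α - 1) = 0 by rw [mul_sub, mul_inv_cancel₀ hα.ne']; ring, Real.rpow_zero]
    rw [hcoef, one_smul]


/-- There exists a constant `C > 0`, depending only on `α > 0`, such that for all `N ≥ 1` and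
all `u, v ∈ ℝ^N`:
`(1/C)·|v^{⟨α⟩} − u^{⟨α⟩}| ≤ (|u| + |v|)^{α−1}·|v − u| ≤ C·|v^{⟨α⟩} − u^{⟨α⟩}|`. -/
theorem stmt0 (α : ℝ) (hα : 0 < α) :
    ∃ C : ℝ, 0 < C ∧ ∀ (N : ℕ), 1 ≤ N → ∀ u v : EuclideanSpace ℝ (Fin N),
      (1 / C) * ‖vpow α v - vpow α u‖ ≤ (‖u‖ + ‖v‖) ^ (α - 1) * ‖v - u‖ ∧
      (‖u‖ + ‖v‖) ^ (α - 1) * ‖v - u‖ ≤ C * ‖vpow α v - vpow α u‖ := by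
  rcases le_or_gt 1 α with h1 | h1
  · -- α ≥ 1
    refine ⟨α * 2 ^ (α - 1), by positivity, fun N _ u v => ?_⟩
    obtain ⟨k1, k2⟩ := key α h1 u v
    have hX : (0:ℝ) ≤ (‖u‖ + ‖v‖) ^ (α - 1) * ‖v - u‖ :=
      mul_nonneg (Real.rpow_nonneg (by positivity) _) (norm_nonneg _)
    have h2 : (1:ℝ) ≤ 2 ^ (α - 1) := by
      have := Real.rpow_le_rpow_of_exponent_le one_le_two (by linarith : (0:ℝ) ≤ α - 1)
      rwa [Real.rpow_zero] at this
    constructor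
    · rw [one_div, inv_mul_le_iff₀ (by positivity)]
      calc ‖vpow α v - vpow α u‖ ≤ α * ((‖u‖ + ‖v‖) ^ (α - 1) * ‖v - u‖) := k1
        _ ≤ α * 2 ^ (α - 1) * ((‖u‖ + ‖v‖) ^ (α - 1) * ‖v - u‖) := by
            nlinarith [mul_nonneg hα.le hX]
    · calc (‖u‖ + ‖v‖) ^ (α - 1) * ‖v - u‖ ≤ 2 ^ (α - 1) * ‖vpow α v - vpow α u‖ := k2
        _ ≤ α * 2 ^ (α - 1) * ‖vpow α v - vpow α u‖ := by
            nlinarith [norm_nonneg (vpow α v - vpow α u),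
              mul_nonneg (by linarith : (0:ℝ) ≤ 2 ^ (α-1)) (norm_nonneg (vpow α v - vpow α u))]
  · -- 0 < α < 1
    have hβ : 1 ≤ α⁻¹ := by
      rw [one_le_inv_iff₀]; exact ⟨hα, h1.le⟩
    have hβ0 : (0:ℝ) ≤ α⁻¹ := by linarith
    set C := max (α⁻¹ * 2 ^ ((α⁻¹ - 1) * (1 - α))) (2 ^ (α⁻¹ - 1)) with hC_def
    have hCpos : 0 < C := lt_max_of_lt_right (Real.rpow_pos_of_pos two_pos _)
    refine ⟨C, hCpos, fun N _ u v => ?_⟩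
    by_cases hT : ‖u‖ + ‖v‖ = 0
    · have hu : u = 0 := norm_eq_zero.mp (by linarith [norm_nonneg u, norm_nonneg v])
      have hv : v = 0 := norm_eq_zero.mp (by linarith [norm_nonneg u, norm_nonneg v])
      rw [hu, hv]
      simp [vpow]
    · have hT' : 0 < ‖u‖ + ‖v‖ := lt_of_le_of_ne (by positivity) (Ne.symm hT)
      obtain ⟨k1, k2⟩ := key α⁻¹ hβ (vpow α u) (vpow α v)
      rw [vpow_vpow α hα u, vpow_vpow α hα v, norm_vpow α hα u, norm_vpow α hα v] at k1 k2
      -- abbreviations (only informally): S = ‖u‖^α + ‖v‖^α, T = ‖u‖+‖v‖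
      have hS0 : (0:ℝ) ≤ ‖u‖ ^ α + ‖v‖ ^ α := by
        have := Real.rpow_nonneg (norm_nonneg u) α
        have := Real.rpow_nonneg (norm_nonneg v) α
        linarith
      have hexpu : (‖u‖ ^ α) ^ α⁻¹ = ‖u‖ := by
        rw [← Real.rpow_mul (norm_nonneg u), mul_inv_cancel₀ hα.ne', Real.rpow_one]
      have hexpv : (‖v‖ ^ α) ^ α⁻¹ = ‖v‖ := by
        rw [← Real.rpow_mul (norm_nonneg v), mul_inv_cancel₀ hα.ne', Real.rpow_one]
      have s1 : ‖u‖ + ‖v‖ ≤ (‖u‖ ^ α + ‖v‖ ^ α) ^ α⁻¹ := by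
        have := sum_upper hβ (Real.rpow_nonneg (norm_nonneg u) α)
          (Real.rpow_nonneg (norm_nonneg v) α)
        rwa [hexpu, hexpv] at this
      have s2 : (‖u‖ ^ α + ‖v‖ ^ α) ^ α⁻¹ ≤ 2 ^ (α⁻¹ - 1) * (‖u‖ + ‖v‖) := by
        have h := sum_lower hβ (Real.rpow_nonneg (norm_nonneg u) α)
          (Real.rpow_nonneg (norm_nonneg v) α)
        rw [hexpu, hexpv] at h
        have hm1 : (2:ℝ) ^ (α⁻¹ - 1) * (2:ℝ) ^ (1 - α⁻¹) = 1 := by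
          rw [← Real.rpow_add two_pos]; norm_num
        have := mul_le_mul_of_nonneg_left h (Real.rpow_nonneg (by norm_num : (0:ℝ) ≤ 2) (α⁻¹-1))
        calc (‖u‖ ^ α + ‖v‖ ^ α) ^ α⁻¹
            = (2 ^ (α⁻¹ - 1) * 2 ^ (1 - α⁻¹)) * (‖u‖ ^ α + ‖v‖ ^ α) ^ α⁻¹ := by
              rw [hm1, one_mul]
          _ = 2 ^ (α⁻¹ - 1) * (2 ^ (1 - α⁻¹) * (‖u‖ ^ α + ‖v‖ ^ α) ^ α⁻¹) := by ring
          _ ≤ 2 ^ (α⁻¹ - 1) * (‖u‖ + ‖v‖) :=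
              mul_le_mul_of_nonneg_left h (Real.rpow_nonneg (by norm_num) _)
      have hSb : (‖u‖ ^ α + ‖v‖ ^ α) ^ (α⁻¹ - 1)
          = ((‖u‖ ^ α + ‖v‖ ^ α) ^ α⁻¹) ^ (1 - α) := by
        rw [← Real.rpow_mul hS0, show α⁻¹ * (1 - α) = α⁻¹ - 1 by field_simp]
      have g1 : (‖u‖ + ‖v‖) ^ (1 - α) ≤ (‖u‖ ^ α + ‖v‖ ^ α) ^ (α⁻¹ - 1) := by
        rw [hSb]
        exact Real.rpow_le_rpow hT'.le s1 (by linarith)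
      have g2 : (‖u‖ ^ α + ‖v‖ ^ α) ^ (α⁻¹ - 1)
          ≤ 2 ^ ((α⁻¹ - 1) * (1 - α)) * (‖u‖ + ‖v‖) ^ (1 - α) := by
        rw [hSb]
        calc ((‖u‖ ^ α + ‖v‖ ^ α) ^ α⁻¹) ^ (1 - α)
            ≤ (2 ^ (α⁻¹ - 1) * (‖u‖ + ‖v‖)) ^ (1 - α) :=
              Real.rpow_le_rpow (Real.rpow_nonneg hS0 _) s2 (by linarith)
          _ = (2 ^ (α⁻¹ - 1)) ^ (1 - α) * (‖u‖ + ‖v‖) ^ (1 - α) :=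
              Real.mul_rpow (Real.rpow_nonneg (by norm_num) _) hT'.le
          _ = 2 ^ ((α⁻¹ - 1) * (1 - α)) * (‖u‖ + ‖v‖) ^ (1 - α) := by
              rw [← Real.rpow_mul (by norm_num : (0:ℝ) ≤ 2)]
      have hTT : (‖u‖ + ‖v‖) ^ (α - 1) * (‖u‖ + ‖v‖) ^ (1 - α) = 1 := by
        rw [← Real.rpow_add hT']; norm_num
      have hM0 : (0:ℝ) ≤ (‖u‖ + ‖v‖) ^ (α - 1) := Real.rpow_nonneg hT'.le _
      constructor
      · -- (1/C) * ‖D‖ ≤ (T)^(α-1) * ‖w‖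
        rw [one_div, inv_mul_le_iff₀ hCpos]
        calc ‖vpow α v - vpow α u‖
            = ((‖u‖ + ‖v‖) ^ (α - 1) * (‖u‖ + ‖v‖) ^ (1 - α)) * ‖vpow α v - vpow α u‖ := by
              rw [hTT, one_mul]
          _ = (‖u‖ + ‖v‖) ^ (α - 1) * ((‖u‖ + ‖v‖) ^ (1 - α) * ‖vpow α v - vpow α u‖) := by
              ring
          _ ≤ (‖u‖ + ‖v‖) ^ (α - 1) * (2 ^ (α⁻¹ - 1) * ‖v - u‖) := by
              refine mul_le_mul_of_nonneg_left ?_ hM0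
              calc (‖u‖ + ‖v‖) ^ (1 - α) * ‖vpow α v - vpow α u‖
                  ≤ (‖u‖ ^ α + ‖v‖ ^ α) ^ (α⁻¹ - 1) * ‖vpow α v - vpow α u‖ :=
                    mul_le_mul_of_nonneg_right g1 (norm_nonneg _)
                _ ≤ 2 ^ (α⁻¹ - 1) * ‖v - u‖ := k2
          _ = 2 ^ (α⁻¹ - 1) * ((‖u‖ + ‖v‖) ^ (α - 1) * ‖v - u‖) := by ring
          _ ≤ C * ((‖u‖ + ‖v‖) ^ (α - 1) * ‖v - u‖) :=
              mul_le_mul_of_nonneg_right (le_max_right _ _)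
                (mul_nonneg hM0 (norm_nonneg _))
      · -- T^(α-1) * ‖w‖ ≤ C * ‖D‖
        calc (‖u‖ + ‖v‖) ^ (α - 1) * ‖v - u‖
            ≤ (‖u‖ + ‖v‖) ^ (α - 1)
                * (α⁻¹ * (2 ^ ((α⁻¹ - 1) * (1 - α)) * (‖u‖ + ‖v‖) ^ (1 - α)
                    * ‖vpow α v - vpow α u‖)) := by
              refine mul_le_mul_of_nonneg_left ?_ hM0
              calc ‖v - u‖
                  ≤ α⁻¹ * ((‖u‖ ^ α + ‖v‖ ^ α) ^ (α⁻¹ - 1) * ‖vpow α v - vpow α u‖) := k1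
                _ ≤ α⁻¹ * (2 ^ ((α⁻¹ - 1) * (1 - α)) * (‖u‖ + ‖v‖) ^ (1 - α)
                    * ‖vpow α v - vpow α u‖) := by
                    refine mul_le_mul_of_nonneg_left ?_ hβ0
                    exact mul_le_mul_of_nonneg_right g2 (norm_nonneg _)
          _ = (α⁻¹ * 2 ^ ((α⁻¹ - 1) * (1 - α)))
                * ((‖u‖ + ‖v‖) ^ (α - 1) * (‖u‖ + ‖v‖) ^ (1 - α))
                * ‖vpow α v - vpow α u‖ := by ring
          _ = (α⁻¹ * 2 ^ ((α⁻¹ - 1) * (1 - α))) * ‖vpow α v - vpow α u‖ := by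
              rw [hTT, mul_one]
          _ ≤ C * ‖vpow α v - vpow α u‖ :=
              mul_le_mul_of_nonneg_right (le_max_left _ _) (norm_nonneg _)
end

section
/- Let N ≥ 1 and α > 1. There exists a constant C > 0 depending only on α such that for all u, v ∈ ℝ^N one has |v − u|^α ≤ C·|v^{⟨α⟩} − u^{⟨α⟩}|. -/
open RealInnerProductSpace in
lemma vpow_key {E : Type*} [NormedAddCommGroup E] [InnerProductSpace ℝ E]
    (α : ℝ) (hα : 1 < α) (u v : E) :
    (2:ℝ)^(-α) * ‖v - u‖ ^ (α + 1) ≤ ⟪vpow α v - vpow α u, v - u⟫ := by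
  have ha0 : (0:ℝ) ≤ ‖u‖ := norm_nonneg u
  have hb0 : (0:ℝ) ≤ ‖v‖ := norm_nonneg v
  have hd0 : (0:ℝ) ≤ ‖v - u‖ := norm_nonneg _
  have hexp : (0:ℝ) ≤ α - 1 := by linarith
  have hA0 : (0:ℝ) ≤ ‖u‖ ^ (α - 1) := Real.rpow_nonneg ha0 _
  have hB0 : (0:ℝ) ≤ ‖v‖ ^ (α - 1) := Real.rpow_nonneg hb0 _
  -- expand the inner product
  have hinner : ⟪vpow α v - vpow α u, v - u⟫ =
      ‖v‖^(α-1) * ‖v‖^2 + ‖u‖^(α-1) * ‖u‖^2 - (‖u‖^(α-1) + ‖v‖^(α-1)) * ⟪u, v⟫ := by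
    simp only [vpow, inner_sub_left, inner_sub_right, real_inner_smul_left]
    rw [real_inner_self_eq_norm_sq, real_inner_self_eq_norm_sq, real_inner_comm v u]
    ring
  -- norm of difference squared
  have hdsq : ‖v - u‖^2 = ‖u‖^2 + ‖v‖^2 - 2 * ⟪u, v⟫ := by
    rw [← real_inner_self_eq_norm_sq]
    simp only [inner_sub_left, inner_sub_right]
    rw [real_inner_self_eq_norm_sq, real_inner_self_eq_norm_sq, real_inner_comm v u]
    ring
  -- cross term nonneg
  have hcross : 0 ≤ (‖v‖^(α-1) - ‖u‖^(α-1)) * (‖v‖^2 - ‖u‖^2) := by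
    rcases le_total ‖u‖ ‖v‖ with h | h
    · have h1 : ‖u‖^(α-1) ≤ ‖v‖^(α-1) := Real.rpow_le_rpow ha0 h hexp
      have h2 : ‖u‖^2 ≤ ‖v‖^2 := by nlinarith
      nlinarith
    · have h1 : ‖v‖^(α-1) ≤ ‖u‖^(α-1) := Real.rpow_le_rpow hb0 h hexp
      have h2 : ‖v‖^2 ≤ ‖u‖^2 := by nlinarith
      nlinarith
  -- lower bound on (A+B)/2
  have hmax : ‖v - u‖ ^ (α - 1) ≤ 2 ^ (α - 1) * (‖u‖^(α-1) + ‖v‖^(α-1)) := by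
    have hdab : ‖v - u‖ ≤ ‖v‖ + ‖u‖ := norm_sub_le v u
    have hab : ‖v‖ + ‖u‖ ≤ 2 * max ‖u‖ ‖v‖ := by
      rcases le_total ‖u‖ ‖v‖ with h | h
      · rw [max_eq_right h]; linarith
      · rw [max_eq_left h]; linarith
    have h1 : ‖v - u‖ ^ (α - 1) ≤ (2 * max ‖u‖ ‖v‖) ^ (α - 1) :=
      Real.rpow_le_rpow hd0 (hdab.trans hab) hexp
    have h2 : (2 * max ‖u‖ ‖v‖) ^ (α - 1) = 2 ^ (α - 1) * (max ‖u‖ ‖v‖) ^ (α - 1) :=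
      Real.mul_rpow (by norm_num) (le_max_of_le_left ha0)
    have h3 : (max ‖u‖ ‖v‖) ^ (α - 1) ≤ ‖u‖^(α-1) + ‖v‖^(α-1) := by
      rcases le_total ‖u‖ ‖v‖ with h | h
      · rw [max_eq_right h]; linarith
      · rw [max_eq_left h]; linarith
    have h2pow : (0:ℝ) < 2 ^ (α - 1) := Real.rpow_pos_of_pos (by norm_num) _
    calc ‖v - u‖ ^ (α - 1) ≤ 2 ^ (α - 1) * (max ‖u‖ ‖v‖) ^ (α - 1) := h2 ▸ h1
      _ ≤ 2 ^ (α - 1) * (‖u‖^(α-1) + ‖v‖^(α-1)) := by nlinarith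
  have hAB : (2:ℝ)^(-α) * ‖v - u‖ ^ (α - 1) ≤ (‖u‖^(α-1) + ‖v‖^(α-1)) / 2 := by
    have h2pos : (0:ℝ) < 2 ^ (-α) := Real.rpow_pos_of_pos (by norm_num) _
    have hstep := mul_le_mul_of_nonneg_left hmax h2pos.le
    have hcalc : (2:ℝ)^(-α) * (2 ^ (α - 1) * (‖u‖^(α-1) + ‖v‖^(α-1)))
        = (‖u‖^(α-1) + ‖v‖^(α-1)) / 2 := by
      rw [← mul_assoc, ← Real.rpow_add (by norm_num : (0:ℝ) < 2),
        show -α + (α - 1) = -1 by ring, Real.rpow_neg_one]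
      ring
    linarith [hcalc ▸ hstep]
  -- split d^(α+1)
  have hdsplit : ‖v - u‖ ^ (α + 1) = ‖v - u‖ ^ (α - 1) * ‖v - u‖ ^ 2 := by
    rw [show α + 1 = (α - 1) + 2 by ring,
      Real.rpow_add' hd0 (by intro h; linarith [show α - 1 + 2 = 0 from h])]
    norm_num
  rw [hinner, hdsplit]
  have hdp : (0:ℝ) ≤ ‖v - u‖ ^ (α - 1) := Real.rpow_nonneg hd0 _
  have hd2 : (0:ℝ) ≤ ‖v - u‖ ^ 2 := sq_nonneg _
  have step : (2:ℝ)^(-α) * ‖v - u‖ ^ (α - 1) * ‖v - u‖ ^ 2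
      ≤ (‖u‖^(α-1) + ‖v‖^(α-1)) / 2 * ‖v - u‖ ^ 2 :=
    mul_le_mul_of_nonneg_right hAB hd2
  calc (2:ℝ)^(-α) * (‖v - u‖ ^ (α - 1) * ‖v - u‖ ^ 2)
      = (2:ℝ)^(-α) * ‖v - u‖ ^ (α - 1) * ‖v - u‖ ^ 2 := by ring
    _ ≤ (‖u‖^(α-1) + ‖v‖^(α-1)) / 2 * ‖v - u‖ ^ 2 := step
    _ ≤ (‖u‖^(α-1) + ‖v‖^(α-1)) / 2 * ‖v - u‖ ^ 2
          + (‖v‖^(α-1) - ‖u‖^(α-1)) * (‖v‖^2 - ‖u‖^2) / 2 := by linarith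
    _ = ‖v‖^(α-1) * ‖v‖^2 + ‖u‖^(α-1) * ‖u‖^2 - (‖u‖^(α-1) + ‖v‖^(α-1)) * ⟪u, v⟫ := by
          rw [hdsq]; ring

/-- There exists a constant `C > 0`, depending only on `α > 1`, such that for all `N ≥ 1` and
all `u, v ∈ ℝ^N`: `|v − u|^α ≤ C·|v^{⟨α⟩} − u^{⟨α⟩}|`. -/
theorem stmt1 (α : ℝ) (hα : 1 < α) :
    ∃ C : ℝ, 0 < C ∧ ∀ (N : ℕ), 1 ≤ N → ∀ u v : EuclideanSpace ℝ (Fin N),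
      ‖v - u‖ ^ α ≤ C * ‖vpow α v - vpow α u‖ := by
  refine ⟨(2:ℝ)^α, Real.rpow_pos_of_pos (by norm_num) _, fun N _ u v => ?_⟩
  have hd0 : (0:ℝ) ≤ ‖v - u‖ := norm_nonneg _
  have key := vpow_key α hα u v
  have hCS : inner ℝ (vpow α v - vpow α u) (v - u) ≤ ‖vpow α v - vpow α u‖ * ‖v - u‖ :=
    real_inner_le_norm _ _
  have h2pos' : (0:ℝ) < 2 ^ α := Real.rpow_pos_of_pos (by norm_num) _
  have hsplit : ‖v - u‖ ^ (α + 1) = ‖v - u‖ ^ α * ‖v - u‖ := by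
    rw [Real.rpow_add' hd0 (by intro h; linarith), Real.rpow_one]
  rcases eq_or_lt_of_le hd0 with h0 | h0
  · have : ‖v - u‖ ^ α = 0 := by
      rw [← h0, Real.zero_rpow (by linarith)]
    rw [this]
    positivity
  · have h1 : (2:ℝ)^(-α) * (‖v - u‖ ^ α * ‖v - u‖) ≤ ‖vpow α v - vpow α u‖ * ‖v - u‖ := by
      rw [← hsplit]; exact key.trans hCS
    have h2 : (2:ℝ)^(-α) * ‖v - u‖ ^ α ≤ ‖vpow α v - vpow α u‖ :=
      le_of_mul_le_mul_right (by linarith) h0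
    have hid : (2:ℝ)^α * (2:ℝ)^(-α) = 1 := by
      rw [← Real.rpow_add (by norm_num : (0:ℝ) < 2), show α + -α = 0 by ring, Real.rpow_zero]
    calc ‖v - u‖ ^ α = (2:ℝ)^α * ((2:ℝ)^(-α) * ‖v - u‖ ^ α) := by
            rw [← mul_assoc, hid]; ring
      _ ≤ (2:ℝ)^α * ‖vpow α v - vpow α u‖ := by nlinarith
end

section
/- Let N ≥ 1 and q > 0. There exists a constant c > 0 depending only on q such that for all u, v ∈ ℝ^N one has |u^{⟨(q+1)/2⟩} − v^{⟨(q+1)/2⟩}|² ≤ c·𝔟[u,v] ≤ c·(v^{⟨q⟩} − u^{⟨q⟩})·(v − u), where · denotes the Euclidean inner product. In particular 𝔟[u,v] ≥ 0. -/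
/-- The boundary term `𝔟[u,v] := (1/(q+1))|v|^{q+1} + (q/(q+1))|u|^{q+1} − u^{⟨q⟩}·v`. -/
noncomputable def bterm {E : Type*} [NormedAddCommGroup E] [InnerProductSpace ℝ E]
    (q : ℝ) (u v : E) : ℝ :=
  (1 / (q + 1)) * ‖v‖ ^ (q + 1) + (q / (q + 1)) * ‖u‖ ^ (q + 1) - (inner ℝ (vpow q u) v : ℝ)

open Real in
lemma rpow_split {x : ℝ} (hx : 0 ≤ x) {y z w : ℝ} (h : y + z = w) (hw : w ≠ 0) :
    x ^ y * x ^ z = x ^ w := by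
  subst h; exact (Real.rpow_add' hx hw).symm

lemma rpow_succ {x : ℝ} (hx : 0 ≤ x) {y w : ℝ} (h : y + 1 = w) (hw : w ≠ 0) :
    x ^ y * x = x ^ w := by
  have := rpow_split hx h hw
  rwa [Real.rpow_one] at this

lemma rpow_rpow {x : ℝ} (hx : 0 ≤ x) {y z w : ℝ} (h : y * z = w) :
    (x ^ y) ^ z = x ^ w := by
  subst h; exact (Real.rpow_mul hx y z).symm

lemma one_sub_rpow_le {e r : ℝ} (he : 0 < e) (hr0 : 0 ≤ r) (hr1 : r ≤ 1) :
    1 - r ^ e ≤ (1 + e) * (1 - r) := by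
  rcases eq_or_lt_of_le hr0 with h0 | h0
  · rw [← h0, Real.zero_rpow he.ne']
    nlinarith
  rcases le_or_gt e 1 with h1 | h1
  · have h2 : r ^ (1:ℝ) ≤ r ^ e := Real.rpow_le_rpow_of_exponent_ge h0 hr1 h1
    rw [Real.rpow_one] at h2
    nlinarith
  · have hber := one_add_mul_self_le_rpow_one_add (show (-1:ℝ) ≤ r - 1 by linarith) h1.le
    rw [show (1:ℝ) + (r-1) = r by ring] at hber
    nlinarith

lemma youngG (q : ℝ) (hq : 0 < q) {a b : ℝ} (ha : 0 ≤ a) (hb : 0 ≤ b) :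
    (q+1) * (a ^ q * b) ≤ q * a ^ (q+1) + b ^ (q+1) := by
  have hq1 : (0:ℝ) < q + 1 := by linarith
  have h := Real.geom_mean_le_arith_mean2_weighted (w₁ := q/(q+1)) (w₂ := 1/(q+1))
    (p₁ := a^(q+1)) (p₂ := b^(q+1)) (by positivity) (by positivity)
    (Real.rpow_nonneg ha _) (Real.rpow_nonneg hb _) (by field_simp)
  rw [rpow_rpow ha (show (q+1)*(q/(q+1)) = q by field_simp),
      rpow_rpow hb (show (q+1)*(1/(q+1)) = 1 by field_simp), Real.rpow_one] at h
  have h2 := mul_le_mul_of_nonneg_left h hq1.le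
  have e1 : (q+1)*(q/(q+1)*a^(q+1)) = q*a^(q+1) := by field_simp
  have e2 : (q+1)*(1/(q+1)*b^(q+1)) = b^(q+1) := by field_simp
  nlinarith [h2, e1, e2]

lemma swapG (q : ℝ) (hq : 0 < q) {a b : ℝ} (ha : 0 ≤ a) (hb : 0 ≤ b) :
    a^(q+1) + q*b^(q+1) - (q+1)*(b^q*a) ≤
      (q + 1/q) * (b^(q+1) + q*a^(q+1) - (q+1)*(a^q*b)) := by
  have hq1 : (0:ℝ) < q + 1 := by linarith
  have hG : 0 ≤ b^(q+1) + q*a^(q+1) - (q+1)*(a^q*b) := by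
    have := youngG q hq ha hb; linarith
  have idA : a^q*a = a^(q+1) := rpow_succ ha rfl hq1.ne'
  rcases le_total 1 q with h1 | h1
  · -- q ≥ 1
    have idA1 : a^(q-1)*a = a^q := rpow_succ ha (by ring) hq.ne'
    have hgm := Real.geom_mean_le_arith_mean2_weighted (w₁ := (q-1)/q) (w₂ := 1/q)
      (p₁ := a^q) (p₂ := b^q) (by apply div_nonneg <;> linarith) (by positivity)
      (Real.rpow_nonneg ha _) (Real.rpow_nonneg hb _) (by field_simp; ring)
    rw [rpow_rpow ha (show q*((q-1)/q) = q-1 by field_simp),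
        rpow_rpow hb (show q*(1/q) = 1 by field_simp), Real.rpow_one] at hgm
    have hgm2 := mul_le_mul_of_nonneg_left hgm hq.le
    have e1 : q*((q-1)/q*a^q) = (q-1)*a^q := by field_simp
    have e2 : q*(1/q*b^q) = b^q := by field_simp
    have hgm' : q*(a^(q-1)*b) ≤ (q-1)*a^q + b^q := by nlinarith [hgm2, e1, e2]
    have hmul := mul_le_mul_of_nonneg_left hgm' ha
    have hbr : q*(a^q*b) ≤ (q-1)*a^(q+1) + b^q*a := by
      calc q*(a^q*b) = a*(q*(a^(q-1)*b)) := by rw [← idA1]; ring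
        _ ≤ a*((q-1)*a^q + b^q) := hmul
        _ = (q-1)*a^(q+1) + b^q*a := by rw [← idA]; ring
    have hbr2 := mul_le_mul_of_nonneg_left hbr hq1.le
    have hfrac : 0 ≤ (1/q) * (b^(q+1) + q*a^(q+1) - (q+1)*(a^q*b)) := by positivity
    nlinarith [hbr2, hfrac]
  · -- q ≤ 1
    have hgm := Real.geom_mean_le_arith_mean2_weighted (w₁ := 1-q) (w₂ := q)
      (p₁ := b^(q+1)) (p₂ := a*b^q) (by linarith) hq.le
      (Real.rpow_nonneg hb _) (mul_nonneg ha (Real.rpow_nonneg hb _)) (by ring)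
    have eg : (b^(q+1))^(1-q) * (a*b^q)^q = a^q * b := by
      rw [Real.mul_rpow ha (Real.rpow_nonneg hb _),
          rpow_rpow hb (rfl : (q+1)*(1-q) = (q+1)*(1-q)),
          rpow_rpow hb (rfl : q*q = q*q)]
      rw [mul_comm ((b^((q+1)*(1-q)))) _, mul_assoc]
      rw [rpow_split hb (show q*q + (q+1)*(1-q) = 1 by ring) one_ne_zero, Real.rpow_one]
    rw [eg] at hgm
    -- hgm : a^q*b ≤ (1-q)*b^(q+1) + q*(a*b^q)
    have key : q*(a^(q+1) + q*b^(q+1) - (q+1)*(b^q*a)) ≤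
        b^(q+1) + q*a^(q+1) - (q+1)*(a^q*b) := by nlinarith [hgm]
    have h2 : a^(q+1) + q*b^(q+1) - (q+1)*(b^q*a) ≤
        (1/q) * (b^(q+1) + q*a^(q+1) - (q+1)*(a^q*b)) := by
      have := mul_le_mul_of_nonneg_left key (le_of_lt (one_div_pos.mpr hq))
      have e3 : (1/q)*(q*(a^(q+1) + q*b^(q+1) - (q+1)*(b^q*a)))
          = a^(q+1) + q*b^(q+1) - (q+1)*(b^q*a) := by field_simp
      linarith [this, e3]
    have hqG : 0 ≤ q * (b^(q+1) + q*a^(q+1) - (q+1)*(a^q*b)) := mul_nonneg hq.le hG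
    nlinarith [h2, hqG]

lemma sqDiffAux (q : ℝ) (hq : 0 < q) {a b : ℝ} (hb : 0 ≤ b) (hba : b ≤ a) :
    (a^((q+1)/2) - b^((q+1)/2))^2 ≤
      (1+(q+1)/2)*(1+((q+1)/2)/q) * ((a^q - b^q)*(a-b)) := by
  have ha : 0 ≤ a := hb.trans hba
  set m := (q+1)/2 with hm
  have hmpos : 0 < m := by rw [hm]; linarith
  have hq1 : (0:ℝ) < q+1 := by linarith
  rcases eq_or_lt_of_le ha with h0 | h0
  · have hb0 : b = 0 := le_antisymm (h0 ▸ hba) hb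
    rw [← h0, hb0]
    rw [Real.zero_rpow hmpos.ne', Real.zero_rpow hq.ne']
    simp
  · obtain ⟨r, hr0, hr1, hbr⟩ : ∃ r : ℝ, 0 ≤ r ∧ r ≤ 1 ∧ b = a * r :=
      ⟨b/a, div_nonneg hb h0.le, (div_le_one h0).mpr hba, by field_simp⟩
    subst hbr
    have k1 : 1 - r^m ≤ (1+m)*(1-r) := one_sub_rpow_le hmpos hr0 hr1
    have hrq0 : 0 ≤ r^q := Real.rpow_nonneg hr0 _
    have hrq1 : r^q ≤ 1 := Real.rpow_le_one hr0 hr1 hq.le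
    have hmq : 0 < m/q := div_pos hmpos hq
    have k2 : 1 - (r^q)^(m/q) ≤ (1+m/q)*(1-r^q) := one_sub_rpow_le hmq hrq0 hrq1
    rw [rpow_rpow hr0 (show q*(m/q) = m by field_simp)] at k2
    have h3 : 0 ≤ 1 - r^m := by
      have := Real.rpow_le_one hr0 hr1 hmpos.le; linarith
    have h4 : (0:ℝ) ≤ 1 - r := by linarith
    have h5 : (0:ℝ) ≤ 1 - r^q := by linarith
    have key : (1-r^m)^2 ≤ ((1+m)*(1+m/q)) * ((1-r^q)*(1-r)) := by
      have hmm := mul_le_mul k1 k2 h3 (by positivity)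
      calc (1-r^m)^2 = (1-r^m)*(1-r^m) := by ring
        _ ≤ ((1+m)*(1-r)) * ((1+m/q)*(1-r^q)) := hmm
        _ = ((1+m)*(1+m/q)) * ((1-r^q)*(1-r)) := by ring
    have hA : (0:ℝ) < a^(q+1) := Real.rpow_pos_of_pos h0 _
    have hmain := mul_le_mul_of_nonneg_left key hA.le
    have idm2 : a^m*a^m = a^(q+1) := rpow_split h0.le (by rw [hm]; ring) hq1.ne'
    have idq1 : a^q*a = a^(q+1) := rpow_succ h0.le rfl hq1.ne'
    rw [Real.mul_rpow h0.le hr0, Real.mul_rpow h0.le hr0]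
    calc (a^m - a^m*r^m)^2 = a^(q+1) * ((1-r^m)^2) := by
          linear_combination (1-r^m)^2 * idm2
      _ ≤ a^(q+1) * (((1+m)*(1+m/q)) * ((1-r^q)*(1-r))) := hmain
      _ = (1+m)*(1+m/q) * ((a^q - a^q*r^q)*(a - a*r)) := by
          linear_combination (-((1+m)*(1+m/q))*((1-r^q)*(1-r)))*idq1

lemma sqDiff (q : ℝ) (hq : 0 < q) {a b : ℝ} (ha : 0 ≤ a) (hb : 0 ≤ b) :
    (a^((q+1)/2) - b^((q+1)/2))^2 ≤
      (1+(q+1)/2)*(1+((q+1)/2)/q) * ((a^q - b^q)*(a-b)) := by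
  rcases le_total b a with h | h
  · exact sqDiffAux q hq hb h
  · have := sqDiffAux q hq ha h
    nlinarith [this]

noncomputable def cc (q : ℝ) : ℝ :=
  (1+(q+1)/2)*(1+((q+1)/2)/q)*(1+(q+1/q)) + 2*(q+1)*(1+1/q)

lemma cc_pos {q : ℝ} (hq : 0 < q) : 0 < cc q := by
  have h1 : 0 < 1/q := one_div_pos.mpr hq
  have h2 : 0 < ((q+1)/2)/q := div_pos (by linarith) hq
  have : 0 < (1+(q+1)/2)*(1+((q+1)/2)/q)*(1+(q+1/q)) :=
    mul_pos (mul_pos (by linarith) (by linarith)) (by linarith)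
  have : 0 < 2*(q+1)*(1+1/q) := mul_pos (by linarith) (by linarith)
  rw [cc]; linarith

lemma linAux {α β p M : ℝ} (hp1 : -M ≤ p) (hp2 : p ≤ M)
    (h1 : 0 ≤ α + β*M) (h2 : 0 ≤ α - β*M) : 0 ≤ α + β*p := by
  rcases le_total 0 β with hbta | hbta
  · have : β * (-M) ≤ β * p := mul_le_mul_of_nonneg_left hp1 hbta
    nlinarith
  · have : β * M ≤ β * p := mul_le_mul_of_nonpos_left hp2 hbta
    linarith

set_option maxHeartbeats 1000000 in
lemma scalarMain (q : ℝ) (hq : 0 < q) (a b p : ℝ) (ha : 0 ≤ a) (hb : 0 ≤ b)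
    (hp1 : -(a*b) ≤ p) (hp2 : p ≤ a*b) :
    (q+1) * (a^(q+1) + b^(q+1) - 2*(a^((q+1)/2-1)*b^((q+1)/2-1))*p)
      ≤ cc q * (b^(q+1) + q*a^(q+1) - (q+1)*(a^(q-1)*p)) := by
  have hq1 : (0:ℝ) < q+1 := by linarith
  set m := (q+1)/2 with hm
  have hmpos : 0 < m := by rw [hm]; linarith
  have hccq : cc q = (1+m)*(1+m/q)*(1+(q+1/q)) + 2*(q+1)*(1+1/q) := by rw [cc]
  -- identities
  have idma : a^(m-1)*a = a^m := rpow_succ ha (by ring) hmpos.ne'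
  have idmb : b^(m-1)*b = b^m := rpow_succ hb (by ring) hmpos.ne'
  have idm2a : a^m*a^m = a^(q+1) := rpow_split ha (by rw [hm]; ring) hq1.ne'
  have idm2b : b^m*b^m = b^(q+1) := rpow_split hb (by rw [hm]; ring) hq1.ne'
  have idqa : a^(q-1)*a = a^q := rpow_succ ha (by ring) hq.ne'
  have idQa : a^q*a = a^(q+1) := rpow_succ ha rfl hq1.ne'
  have idQb : b^q*b = b^(q+1) := rpow_succ hb rfl hq1.ne'
  have hG : 0 ≤ b^(q+1) + q*a^(q+1) - (q+1)*(a^q*b) := by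
    have := youngG q hq ha hb; linarith
  -- endpoint +
  have Eplus : (q+1)*(a^(q+1) + b^(q+1) - 2*(a^m*b^m))
      ≤ cc q * (b^(q+1) + q*a^(q+1) - (q+1)*(a^q*b)) := by
    have hsq := sqDiff q hq ha hb
    rw [← hm] at hsq
    have hsum : (q+1)*((a^q - b^q)*(a-b)) =
        (b^(q+1)+q*a^(q+1)-(q+1)*(a^q*b)) + (a^(q+1)+q*b^(q+1)-(q+1)*(b^q*a)) := by
      linear_combination (q+1)*idQa + (q+1)*idQb
    have hsw := swapG q hq ha hb
    have hC1 : (0:ℝ) < (1+m)*(1+m/q) := by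
      have : 0 < m/q := div_pos hmpos hq
      have : 0 < 1 + m/q := by linarith
      exact mul_pos (by linarith) this
    have e : (q+1)*(a^(q+1)+b^(q+1)-2*(a^m*b^m)) = (q+1)*((a^m-b^m)^2) := by
      linear_combination (-(q+1))*idm2a + (-(q+1))*idm2b
    rw [e]
    calc (q+1)*((a^m-b^m)^2) ≤ (q+1)*((1+m)*(1+m/q) * ((a^q - b^q)*(a-b))) :=
          mul_le_mul_of_nonneg_left hsq hq1.le
      _ = (1+m)*(1+m/q) * ((q+1)*((a^q - b^q)*(a-b))) := by ring
      _ ≤ (1+m)*(1+m/q) * ((1+(q+1/q)) * (b^(q+1)+q*a^(q+1)-(q+1)*(a^q*b))) := by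
          apply mul_le_mul_of_nonneg_left _ hC1.le
          rw [hsum]; linarith [hsw]
      _ = ((1+m)*(1+m/q)*(1+(q+1/q))) * (b^(q+1)+q*a^(q+1)-(q+1)*(a^q*b)) := by ring
      _ ≤ cc q * (b^(q+1)+q*a^(q+1)-(q+1)*(a^q*b)) := by
          apply mul_le_mul_of_nonneg_right _ hG
          rw [hccq]
          have h1 : 0 < 1/q := one_div_pos.mpr hq
          have h2 : 0 ≤ 2*(q+1)*(1+1/q) := by
            apply mul_nonneg (by linarith) (by linarith)
          linarith
  -- endpoint -
  have Eminus : (q+1)*(a^(q+1) + b^(q+1) + 2*(a^m*b^m))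
      ≤ cc q * (b^(q+1) + q*a^(q+1) + (q+1)*(a^q*b)) := by
    have am2 : 2*(a^m*b^m) ≤ a^(q+1) + b^(q+1) := by
      nlinarith [sq_nonneg (a^m - b^m), idm2a, idm2b]
    have hA : 0 ≤ a^(q+1) := Real.rpow_nonneg ha _
    have hB : 0 ≤ b^(q+1) := Real.rpow_nonneg hb _
    have hab : 0 ≤ a^q*b := mul_nonneg (Real.rpow_nonneg ha _) hb
    have h1 : 0 < 1/q := one_div_pos.mpr hq
    have hccpos : 0 < cc q := cc_pos hq
    have hcc2 : 2*(q+1)*(1+1/q) ≤ cc q := by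
      rw [hccq]
      have h3 : 0 < m/q := div_pos hmpos hq
      have h4 : 0 ≤ (1+m)*(1+m/q)*(1+(q+1/q)) :=
        le_of_lt (mul_pos (mul_pos (by linarith) (by linarith)) (by linarith))
      linarith
    have hqcc : 2*(q+1)*(q+1) ≤ q * cc q := by
      have := mul_le_mul_of_nonneg_left hcc2 hq.le
      have e : q*(2*(q+1)*(1+1/q)) = 2*(q+1)*(q+1) := by field_simp
      linarith [this, e]
    have key1 : (q+1)*(a^(q+1) + b^(q+1) + 2*(a^m*b^m)) ≤ 2*(q+1)*(a^(q+1)+b^(q+1)) := by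
      have := mul_le_mul_of_nonneg_left am2 hq1.le
      linarith
    have s1 := mul_le_mul_of_nonneg_left key1 hq.le
    have s2 : q*(2*(q+1)*(a^(q+1)+b^(q+1))) ≤ 2*(q+1)*(q+1)*(b^(q+1) + q*a^(q+1)) := by
      have t1 : 0 ≤ (q+1)*b^(q+1) := mul_nonneg hq1.le hB
      have t2 : 0 ≤ (q+1)*(q*(q*a^(q+1))) :=
        mul_nonneg hq1.le (mul_nonneg hq.le (mul_nonneg hq.le hA))
      nlinarith [t1, t2]
    have s3 : 2*(q+1)*(q+1)*(b^(q+1) + q*a^(q+1)) ≤ (q*cc q)*(b^(q+1) + q*a^(q+1)) :=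
      mul_le_mul_of_nonneg_right hqcc (add_nonneg hB (mul_nonneg hq.le hA))
    have s4 : (q*cc q)*(b^(q+1) + q*a^(q+1)) ≤
        (q*cc q)*(b^(q+1) + q*a^(q+1) + (q+1)*(a^q*b)) := by
      apply mul_le_mul_of_nonneg_left _ (mul_nonneg hq.le hccpos.le)
      have := mul_nonneg hq1.le hab
      linarith
    have sfin : q*((q+1)*(a^(q+1) + b^(q+1) + 2*(a^m*b^m)))
        ≤ q*(cc q * (b^(q+1) + q*a^(q+1) + (q+1)*(a^q*b))) := by
      have e2 : (q*cc q)*(b^(q+1) + q*a^(q+1) + (q+1)*(a^q*b))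
          = q*(cc q * (b^(q+1) + q*a^(q+1) + (q+1)*(a^q*b))) := by ring
      linarith [s1, s2, s3, s4, e2]
    exact le_of_mul_le_mul_left sfin hq
  -- linear interpolation in p
  have e1 : (2*(q+1)*(a^(m-1)*b^(m-1)) - cc q*(q+1)*a^(q-1))*(a*b)
      = 2*(q+1)*(a^m*b^m) - cc q*(q+1)*(a^q*b) := by
    linear_combination (2*(q+1)*b^(m-1)*b) * idma + (2*(q+1)*a^m) * idmb
      - (cc q*(q+1)*b) * idqa
  have h1 : 0 ≤ (cc q*(b^(q+1)+q*a^(q+1)) - (q+1)*(a^(q+1)+b^(q+1)))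
      + (2*(q+1)*(a^(m-1)*b^(m-1)) - cc q*(q+1)*a^(q-1))*(a*b) := by
    rw [e1]; linarith [Eplus]
  have h2 : 0 ≤ (cc q*(b^(q+1)+q*a^(q+1)) - (q+1)*(a^(q+1)+b^(q+1)))
      - (2*(q+1)*(a^(m-1)*b^(m-1)) - cc q*(q+1)*a^(q-1))*(a*b) := by
    rw [e1]; linarith [Eminus]
  have hfin := linAux hp1 hp2 h1 h2
  linarith [hfin]

lemma part1 (q : ℝ) (hq : 0 < q) {E : Type*} [NormedAddCommGroup E] [InnerProductSpace ℝ E]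
    (u v : E) :
    ‖vpow ((q+1)/2) u - vpow ((q+1)/2) v‖^2 ≤ cc q * bterm q u v := by
  have hq1 : (0:ℝ) < q+1 := by linarith
  set m := (q+1)/2 with hm
  have hmpos : 0 < m := by rw [hm]; linarith
  set a := ‖u‖ with hA
  set b := ‖v‖ with hB
  set p : ℝ := inner ℝ u v with hp
  have ha : 0 ≤ a := norm_nonneg u
  have hb : 0 ≤ b := norm_nonneg v
  obtain ⟨hp1, hp2⟩ := abs_le.mp (abs_real_inner_le_norm u v)
  have idma : a^(m-1)*a = a^m := rpow_succ ha (by ring) hmpos.ne'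
  have idmb : b^(m-1)*b = b^m := rpow_succ hb (by ring) hmpos.ne'
  have idm2a : a^m*a^m = a^(q+1) := rpow_split ha (by rw [hm]; ring) hq1.ne'
  have idm2b : b^m*b^m = b^(q+1) := rpow_split hb (by rw [hm]; ring) hq1.ne'
  have hnu : ‖vpow m u‖ = a^(m-1) * a := by
    rw [vpow, norm_smul, Real.norm_eq_abs, abs_of_nonneg (Real.rpow_nonneg ha _)]
  have hnv : ‖vpow m v‖ = b^(m-1) * b := by
    rw [vpow, norm_smul, Real.norm_eq_abs, abs_of_nonneg (Real.rpow_nonneg hb _)]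
  have hinner : (inner ℝ (vpow m u) (vpow m v) : ℝ) = a^(m-1)*b^(m-1)*p := by
    rw [vpow, vpow, real_inner_smul_left, real_inner_smul_right, ← hp]; ring
  have hL : ‖vpow m u - vpow m v‖^2 = a^(q+1) + b^(q+1) - 2*(a^(m-1)*b^(m-1))*p := by
    rw [norm_sub_sq_real, hnu, hnv, hinner, idma, idmb]
    have id1 : (a^m)^2 = a^(q+1) := by rw [pow_two]; exact idm2a
    have id2 : (b^m)^2 = b^(q+1) := by rw [pow_two]; exact idm2b
    linear_combination id1 + id2
  have hBt : bterm q u v = 1/(q+1)*b^(q+1) + q/(q+1)*a^(q+1) - a^(q-1)*p := by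
    rw [bterm, vpow, real_inner_smul_left, ← hp]
  have hsc := scalarMain q hq a b p ha hb hp1 hp2
  rw [hL, hBt]
  have e : (q+1)*(cc q * (1/(q+1)*b^(q+1) + q/(q+1)*a^(q+1) - a^(q-1)*p))
      = cc q * (b^(q+1) + q*a^(q+1) - (q+1)*(a^(q-1)*p)) := by
    field_simp
    try ring
  apply le_of_mul_le_mul_left _ hq1
  rw [← hm] at hsc
  linarith [hsc, e]

/-- There exists a constant `c > 0`, depending only on `q > 0`, such that for all `N ≥ 1` and
all `u, v ∈ ℝ^N`:
`|u^{⟨(q+1)/2⟩} − v^{⟨(q+1)/2⟩}|² ≤ c·𝔟[u,v] ≤ c·(v^{⟨q⟩} − u^{⟨q⟩})·(v − u)`,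
and in particular `𝔟[u,v] ≥ 0`. -/
theorem stmt3 (q : ℝ) (hq : 0 < q) :
    ∃ c : ℝ, 0 < c ∧ ∀ (N : ℕ), 1 ≤ N → ∀ u v : EuclideanSpace ℝ (Fin N),
      ‖vpow ((q + 1) / 2) u - vpow ((q + 1) / 2) v‖ ^ 2 ≤ c * bterm q u v ∧
      c * bterm q u v ≤ c * (inner ℝ (vpow q v - vpow q u) (v - u) : ℝ) ∧
      0 ≤ bterm q u v := by
  have hcc := cc_pos hq
  have hq1 : (0:ℝ) < q+1 := by linarith
  refine ⟨cc q, hcc, fun N _ u v => ?_⟩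
  have h1 := part1 q hq u v
  have h1' := part1 q hq v u
  have hb1 : 0 ≤ bterm q u v := by
    have h0 : cc q * 0 ≤ cc q * bterm q u v := by
      rw [mul_zero]; exact le_trans (sq_nonneg _) h1
    exact le_of_mul_le_mul_left h0 hcc
  have hb2 : 0 ≤ bterm q v u := by
    have h0 : cc q * 0 ≤ cc q * bterm q v u := by
      rw [mul_zero]; exact le_trans (sq_nonneg _) h1'
    exact le_of_mul_le_mul_left h0 hcc
  refine ⟨h1, ?_, hb1⟩
  set a := ‖u‖ with hA
  set b := ‖v‖ with hB
  set p : ℝ := inner ℝ u v with hp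
  have ha : 0 ≤ a := norm_nonneg u
  have hb : 0 ≤ b := norm_nonneg v
  have idqa : a^(q-1)*a = a^q := rpow_succ ha (by ring) hq.ne'
  have idQa : a^q*a = a^(q+1) := rpow_succ ha rfl hq1.ne'
  have idqb : b^(q-1)*b = b^q := rpow_succ hb (by ring) hq.ne'
  have idQb : b^q*b = b^(q+1) := rpow_succ hb rfl hq1.ne'
  have hBt : bterm q u v = 1/(q+1)*b^(q+1) + q/(q+1)*a^(q+1) - a^(q-1)*p := by
    rw [bterm, vpow, real_inner_smul_left, ← hp]
  have hBt' : bterm q v u = 1/(q+1)*a^(q+1) + q/(q+1)*b^(q+1) - b^(q-1)*p := by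
    rw [bterm, vpow, real_inner_smul_left, real_inner_comm u v, ← hp]
  have hIn : (inner ℝ (vpow q v - vpow q u) (v - u) : ℝ)
      = b^(q+1) + a^(q+1) - b^(q-1)*p - a^(q-1)*p := by
    rw [vpow, vpow, inner_sub_left, inner_sub_right, inner_sub_right,
        real_inner_smul_left, real_inner_smul_left, real_inner_smul_left,
        real_inner_smul_left, real_inner_self_eq_norm_mul_norm,
        real_inner_self_eq_norm_mul_norm, real_inner_comm u v, ← hp, ← hA, ← hB]
    linear_combination b*idqb + idQb + a*idqa + idQa
  apply mul_le_mul_of_nonneg_left _ hcc.le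
  rw [hBt, hIn]
  rw [hBt'] at hb2
  have eA : 1/(q+1)*a^(q+1) + q/(q+1)*a^(q+1) = a^(q+1) := by field_simp; ring
  have eB : 1/(q+1)*b^(q+1) + q/(q+1)*b^(q+1) = b^(q+1) := by field_simp; ring
  linarith [hb2, eA, eB]
end

section
/- Let N ≥ 1 and q > 0. There exists a constant c > 0 depending only on q such that for all u, v ∈ ℝ^N one has 𝔟[u,v] ≤ c·(|u| + |v|)^q·|u − v|. -/
open Real in
lemma rpow_sub_rpow_le' {a b p : ℝ} (hb : 0 ≤ b) (hba : b ≤ a) (hp : 1 ≤ p) :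
    a ^ p - b ^ p ≤ p * a ^ (p - 1) * (a - b) := by
  rcases eq_or_lt_of_le (hb.trans hba) with h | ha
  · have hb0 : b = 0 := le_antisymm (hba.trans h.ge) hb
    simp [← h, hb0, Real.zero_rpow (by positivity : p ≠ 0)]
  · have hs : (-1 : ℝ) ≤ b / a - 1 := by
      have : 0 ≤ b / a := div_nonneg hb ha.le
      linarith
    have key := one_add_mul_self_le_rpow_one_add hs hp
    rw [show 1 + (b / a - 1) = b / a by ring, Real.div_rpow hb ha.le] at key
    have hap : 0 < a ^ p := rpow_pos_of_pos ha p
    have h1 : a ^ (p - 1) * a = a ^ p := by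
      rw [Real.rpow_sub_one ha.ne', div_mul_cancel₀ _ ha.ne']
    have key2 : (1 + p * (b / a - 1)) * a ^ p ≤ b ^ p := by
      rw [← le_div_iff₀ hap]; exact key
    have hd : (b / a) * a = b := div_mul_cancel₀ _ ha.ne'
    have h2 : (b / a - 1) * a ^ p = b * a ^ (p - 1) - a ^ p := by
      rw [← h1, sub_mul, one_mul,
        show b / a * (a ^ (p - 1) * a) = b / a * a * a ^ (p - 1) by ring, hd]
    nlinarith [key2, h2]

/-- There exists a constant `c > 0`, depending only on `q > 0`, such that for all `N ≥ 1` and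
all `u, v ∈ ℝ^N`: `𝔟[u,v] ≤ c·(|u| + |v|)^q·|u − v|`. -/
theorem stmt4 (q : ℝ) (hq : 0 < q) :
    ∃ c : ℝ, 0 < c ∧ ∀ (N : ℕ), 1 ≤ N → ∀ u v : EuclideanSpace ℝ (Fin N),
      bterm q u v ≤ c * (‖u‖ + ‖v‖) ^ q * ‖u - v‖ := by
  refine ⟨2, by norm_num, fun N _ u v => ?_⟩
  have hq1 : (0:ℝ) < q + 1 := by linarith
  have ha : 0 ≤ ‖u‖ := norm_nonneg u
  have hb : 0 ≤ ‖v‖ := norm_nonneg v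
  have hd : 0 ≤ ‖u - v‖ := norm_nonneg _
  have hs : 0 ≤ ‖u‖ + ‖v‖ := by linarith
  have hsq : 0 ≤ (‖u‖ + ‖v‖) ^ q := Real.rpow_nonneg hs q
  have hsd : 0 ≤ (‖u‖ + ‖v‖) ^ q * ‖u - v‖ := mul_nonneg hsq hd
  unfold bterm vpow
  rw [real_inner_smul_left]
  by_cases hu : u = 0
  · subst hu
    simp only [inner_zero_left, norm_zero, mul_zero, sub_zero, zero_sub, norm_neg, zero_add]
    rw [Real.zero_rpow (by positivity : q + 1 ≠ 0), mul_zero, add_zero]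
    have hb1 : ‖v‖ ^ (q + 1) ≤ ‖v‖ ^ q * ‖v‖ := by
      rcases eq_or_lt_of_le hb with h | h
      · rw [← h, Real.zero_rpow (by positivity : q + 1 ≠ 0)]; simp
      · rw [Real.rpow_add_one h.ne' q]
    have h2 : 1 / (q + 1) * ‖v‖ ^ (q + 1) ≤ ‖v‖ ^ (q + 1) := by
      have : 1 / (q + 1) ≤ 1 := by
        rw [div_le_one hq1]; linarith
      nlinarith [Real.rpow_nonneg hb (q + 1)]
    have h3 : 0 ≤ ‖v‖ ^ q * ‖v‖ := mul_nonneg (Real.rpow_nonneg hb q) hb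
    linarith
  · have ha0 : 0 < ‖u‖ := norm_pos_iff.mpr hu
    have h1 : ‖u‖ ^ (q - 1) * ‖u‖ = ‖u‖ ^ q := by
      rw [Real.rpow_sub_one ha0.ne', div_mul_cancel₀ _ ha0.ne']
    have ha2 : ‖u‖ ^ (q - 1) * ‖u‖ ^ 2 = ‖u‖ ^ (q + 1) := by
      rw [sq, ← mul_assoc, h1, Real.rpow_add_one ha0.ne']
    have hinner : (inner ℝ u (u - v) : ℝ) ≤ ‖u‖ * ‖u - v‖ := real_inner_le_norm u (u - v)
    have hiu : (inner ℝ u (u - v) : ℝ) = ‖u‖ ^ 2 - (inner ℝ u v : ℝ) := by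
      rw [inner_sub_right, real_inner_self_eq_norm_sq]
    have haq : ‖u‖ ^ q ≤ (‖u‖ + ‖v‖) ^ q :=
      Real.rpow_le_rpow ha (by linarith) hq.le
    have key2 : ‖u‖ ^ (q + 1) - ‖u‖ ^ (q - 1) * (inner ℝ u v : ℝ) ≤
        (‖u‖ + ‖v‖) ^ q * ‖u - v‖ := by
      have h4 : ‖u‖ ^ (q - 1) * (inner ℝ u (u - v) : ℝ) ≤ ‖u‖ ^ (q - 1) * (‖u‖ * ‖u - v‖) :=
        mul_le_mul_of_nonneg_left hinner (Real.rpow_nonneg ha _)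
      rw [hiu] at h4
      calc ‖u‖ ^ (q + 1) - ‖u‖ ^ (q - 1) * (inner ℝ u v : ℝ)
          = ‖u‖ ^ (q - 1) * (‖u‖ ^ 2 - (inner ℝ u v : ℝ)) := by rw [mul_sub, ha2]
        _ ≤ ‖u‖ ^ (q - 1) * (‖u‖ * ‖u - v‖) := h4
        _ = ‖u‖ ^ q * ‖u - v‖ := by rw [← mul_assoc, h1]
        _ ≤ (‖u‖ + ‖v‖) ^ q * ‖u - v‖ := mul_le_mul_of_nonneg_right haq hd
    have key1 : (1 / (q + 1)) * (‖v‖ ^ (q + 1) - ‖u‖ ^ (q + 1)) ≤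
        (‖u‖ + ‖v‖) ^ q * ‖u - v‖ := by
      rcases le_total ‖v‖ ‖u‖ with h | h
      · have : ‖v‖ ^ (q + 1) ≤ ‖u‖ ^ (q + 1) := Real.rpow_le_rpow hb h (by linarith)
        have h5 : 0 < 1 / (q + 1) := by positivity
        nlinarith
      · have hba := rpow_sub_rpow_le' ha h (by linarith : (1:ℝ) ≤ q + 1)
        rw [add_sub_cancel_right] at hba
        have hbs : ‖v‖ ^ q ≤ (‖u‖ + ‖v‖) ^ q :=
          Real.rpow_le_rpow hb (by linarith) hq.le
        have hdd : ‖v‖ - ‖u‖ ≤ ‖u - v‖ := by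
          have := abs_norm_sub_norm_le v u
          rw [norm_sub_rev] at this
          exact (abs_le.mp this).2.trans (le_of_eq rfl)
        have hvb : 0 ≤ ‖v‖ - ‖u‖ := by linarith
        have : ‖v‖ ^ (q + 1) - ‖u‖ ^ (q + 1) ≤ (q + 1) * ((‖u‖ + ‖v‖) ^ q * ‖u - v‖) := by
          calc ‖v‖ ^ (q + 1) - ‖u‖ ^ (q + 1) ≤ (q + 1) * ‖v‖ ^ q * (‖v‖ - ‖u‖) := hba
            _ ≤ (q + 1) * ((‖u‖ + ‖v‖) ^ q * ‖u - v‖) := by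
                rw [mul_assoc]
                refine mul_le_mul_of_nonneg_left ?_ hq1.le
                exact mul_le_mul hbs hdd hvb hsq
        rw [div_mul_eq_mul_div, one_mul, div_le_iff₀ hq1]
        linarith
    have hsplit : q / (q + 1) * ‖u‖ ^ (q + 1) =
        ‖u‖ ^ (q + 1) - 1 / (q + 1) * ‖u‖ ^ (q + 1) := by
      field_simp; ring
    linarith [key1, key2]
end

section
/- Let X be a real Banach space, 0 < T < ∞, 1 ≤ r < ∞, v_o ∈ X, and v ∈ L^r(0,T;X). Then for every h > 0 the Landes mollification [v]_h belongs to L^r(0,T;X), and for every t_o ∈ (0,T] one has the bound ‖[v]_h‖_{L^r(0,t_o;X)} ≤ ‖v‖_{L^r(0,t_o;X)} + [ (h/r)·(1 − e^{−t_o r/h}) ]^{1/r}·‖v_o‖_X. -/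
open MeasureTheory Set
open scoped ENNReal

/-- The Landes mollification `[v]_h(t) := e^{−t/h} v_o + (1/h) ∫_0^t e^{(s−t)/h} v(s) ds`. -/
noncomputable def landes {X : Type*} [NormedAddCommGroup X] [NormedSpace ℝ X]
    (h : ℝ) (v_o : X) (v : ℝ → X) (t : ℝ) : X :=
  Real.exp (-t / h) • v_o + (1 / h) • ∫ s in (0:ℝ)..t, Real.exp ((s - t) / h) • v s

lemma my_integral_exp_mul (c : ℝ) (hc : c ≠ 0) (a b : ℝ) :
    ∫ t in a..b, Real.exp (c * t) = (Real.exp (c * b) - Real.exp (c * a)) / c := by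
  have H : ∀ t : ℝ, HasDerivAt (fun u => Real.exp (c * u) / c) (Real.exp (c * t)) t := by
    intro t
    have h1 : HasDerivAt (fun u : ℝ => c * u) c t := by simpa using (hasDerivAt_id t).const_mul c
    have h2 := (Real.hasDerivAt_exp (c * t)).comp t h1
    have h3 := h2.div_const c
    simpa [mul_div_cancel_right₀ _ hc] using h3
  rw [intervalIntegral.integral_eq_sub_of_hasDerivAt (fun t _ => H t)]
  · ring
  · exact (Real.continuous_exp.comp (continuous_const.mul continuous_id)).intervalIntegrable a b

lemma my_mass1 {h : ℝ} (hh : 0 < h) (a b c : ℝ) (hab : a ≤ b) :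
    ∫ x in Set.Ioo a b, (1/h) * Real.exp ((x - c)/h) =
      Real.exp ((b-c)/h) - Real.exp ((a-c)/h) := by
  rw [← integral_Ioc_eq_integral_Ioo, ← intervalIntegral.integral_of_le hab]
  have he : ∀ x : ℝ, (1/h) * Real.exp ((x - c)/h)
      = ((1/h) * Real.exp (-(c/h))) * Real.exp ((1/h) * x) := by
    intro x
    rw [mul_assoc, ← Real.exp_add]
    congr 2
    ring
  simp_rw [he]
  rw [intervalIntegral.integral_const_mul, my_integral_exp_mul (1/h) (by positivity)]
  have key : ∀ x : ℝ, Real.exp (-c/h) * Real.exp (x/h) = Real.exp ((x-c)/h) := by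
    intro x; rw [← Real.exp_add]; congr 1; ring
  field_simp
  rw [← key, ← key]
  ring

lemma my_mass2 {h : ℝ} (hh : 0 < h) (a b c : ℝ) (hab : a ≤ b) :
    ∫ x in Set.Ioo a b, (1/h) * Real.exp ((c - x)/h) =
      Real.exp ((c-a)/h) - Real.exp ((c-b)/h) := by
  rw [← integral_Ioc_eq_integral_Ioo, ← intervalIntegral.integral_of_le hab]
  have he : ∀ x : ℝ, (1/h) * Real.exp ((c - x)/h)
      = ((1/h) * Real.exp (c/h)) * Real.exp ((-(1/h)) * x) := by
    intro x
    rw [mul_assoc, ← Real.exp_add]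
    congr 2
    ring
  simp_rw [he]
  rw [intervalIntegral.integral_const_mul,
    my_integral_exp_mul (-(1/h)) (neg_ne_zero.mpr (by positivity))]
  have key : ∀ x : ℝ, Real.exp (c/h) * Real.exp (-x/h) = Real.exp ((c-x)/h) := by
    intro x; rw [← Real.exp_add]; congr 1; ring
  field_simp
  rw [← key a, ← key b, neg_div, neg_div]
  ring

lemma my_aterm {h r : ℝ} (hh : 0 < h) (hr : 0 < r) {b : ℝ} (hb : 0 ≤ b) :
    ∫ x in Set.Ioo (0:ℝ) b, Real.exp (-(x*r)/h) = (h/r) * (1 - Real.exp (-(b*r)/h)) := by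
  rw [← integral_Ioc_eq_integral_Ioo, ← intervalIntegral.integral_of_le hb]
  have he : ∀ x : ℝ, Real.exp (-(x*r)/h) = Real.exp ((-(r/h)) * x) := by
    intro x; congr 1; ring
  simp_rw [he]
  rw [my_integral_exp_mul (-(r/h)) (neg_ne_zero.mpr (by positivity))]
  rw [← he b, mul_zero, Real.exp_zero]
  rw [div_eq_iff (neg_ne_zero.mpr (by positivity : r/h ≠ 0))]
  field_simp
  ring

lemma my_jensen {α : Type*} [MeasurableSpace α] (μ : Measure α) {f : α → ℝ≥0∞}
    (hf : AEMeasurable f μ) {r : ℝ} (hr : 1 ≤ r) (hμ : μ Set.univ ≤ 1) :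
    (∫⁻ x, f x ∂μ) ^ r ≤ ∫⁻ x, f x ^ r ∂μ := by
  rcases eq_or_lt_of_le hr with heq | hlt
  · simp [← heq]
  · have hpq : r.HolderConjugate (r / (r - 1)) := Real.HolderConjugate.conjExponent hlt
    have h1 : ∫⁻ x, f x ∂μ ≤ (∫⁻ x, f x ^ r ∂μ) ^ (1 / r) *
        (∫⁻ x, (1 : ℝ≥0∞) ^ (r / (r - 1)) ∂μ) ^ (1 / (r / (r - 1))) := by
      have := ENNReal.lintegral_mul_le_Lp_mul_Lq μ hpq hf aemeasurable_const (g := fun _ => 1)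
      simpa using this
    have h2 : (∫⁻ x, (1 : ℝ≥0∞) ^ (r / (r - 1)) ∂μ) ^ (1 / (r / (r - 1))) ≤ 1 := by
      simp only [ENNReal.one_rpow, lintegral_one]
      have h0 : (0:ℝ) < r - 1 := by linarith
      exact ENNReal.rpow_le_one hμ (by positivity)
    have h3 : ∫⁻ x, f x ∂μ ≤ (∫⁻ x, f x ^ r ∂μ) ^ (1 / r) :=
      h1.trans (by simpa using mul_le_mul_right h2 _)
    calc (∫⁻ x, f x ∂μ) ^ r ≤ ((∫⁻ x, f x ^ r ∂μ) ^ (1 / r)) ^ r :=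
          ENNReal.rpow_le_rpow h3 (by positivity)
      _ = ∫⁻ x, f x ^ r ∂μ := by
          rw [← ENNReal.rpow_mul, one_div, inv_mul_cancel₀ (by positivity : r ≠ 0),
            ENNReal.rpow_one]

lemma my_lint_ofReal {f : ℝ → ℝ} (hf : Continuous f) (hpos : ∀ x, 0 ≤ f x) (a b : ℝ) :
    ∫⁻ x in Set.Ioo a b, ENNReal.ofReal (f x) = ENNReal.ofReal (∫ x in Set.Ioo a b, f x) := by
  rw [← ofReal_integral_eq_lintegral_ofReal]
  · exact (hf.integrableOn_Icc).mono_set Set.Ioo_subset_Icc_self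
  · exact Filter.Eventually.of_forall fun x => hpos x

lemma my_ofReal_norm {E : Type*} [SeminormedAddCommGroup E] (a : E) :
    ENNReal.ofReal ‖a‖ = (‖a‖₊ : ℝ≥0∞) := ofReal_norm a

/-- Pointwise identity for the Landes mollification for `0 ≤ t`. -/
lemma landes_eq {X : Type*} [NormedAddCommGroup X] [NormedSpace ℝ X] [CompleteSpace X]
    (h : ℝ) (v_o : X) (v : ℝ → X) {t : ℝ} (ht : 0 ≤ t) :
    landes h v_o v t = Real.exp (-t / h) • v_o +
      (Real.exp (-t/h) / h) • ∫ s in Set.Ioc (0:ℝ) t, Real.exp (s/h) • v s := by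
  unfold landes
  rw [intervalIntegral.integral_of_le ht]
  have he : ∀ s : ℝ, Real.exp ((s - t)/h) • v s
      = Real.exp (-t/h) • (Real.exp (s/h) • v s) := by
    intro s
    rw [smul_smul, ← Real.exp_add]
    congr 2
    ring
  simp_rw [he]
  rw [integral_smul, smul_smul]
  congr 2
  ring

/-- If `v ∈ L^r(0,T;X)` with `1 ≤ r < ∞` and `v_o ∈ X`, then for every `h > 0` the Landes
mollification `[v]_h` belongs to `L^r(0,T;X)`, and for every `t_o ∈ (0,T]`:
`‖[v]_h‖_{L^r(0,t_o;X)} ≤ ‖v‖_{L^r(0,t_o;X)} + [(h/r)(1 − e^{−t_o r/h})]^{1/r}·‖v_o‖`. -/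
theorem stmt7 {X : Type*} [NormedAddCommGroup X] [NormedSpace ℝ X] [CompleteSpace X]
    (T r : ℝ) (hT : 0 < T) (hr : 1 ≤ r) (v_o : X) (v : ℝ → X)
    (hv : MemLp v (ENNReal.ofReal r) (volume.restrict (Set.Ioo 0 T)))
    (h : ℝ) (hh : 0 < h) :
    MemLp (landes h v_o v) (ENNReal.ofReal r) (volume.restrict (Set.Ioo 0 T)) ∧
    ∀ t_o ∈ Set.Ioc (0:ℝ) T,
      (∫ t in Set.Ioo (0:ℝ) t_o, ‖landes h v_o v t‖ ^ r) ^ (1 / r) ≤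
        (∫ t in Set.Ioo (0:ℝ) t_o, ‖v t‖ ^ r) ^ (1 / r) +
          ((h / r) * (1 - Real.exp (-(t_o * r) / h))) ^ (1 / r) * ‖v_o‖ := by
  have hr0 : (0:ℝ) < r := lt_of_lt_of_le one_pos hr
  have hp0 : (ENNReal.ofReal r) ≠ 0 := by
    simp [ENNReal.ofReal_eq_zero]; linarith
  have hptop : (ENNReal.ofReal r) ≠ ∞ := ENNReal.ofReal_ne_top
  have hpreal : (ENNReal.ofReal r).toReal = r := ENNReal.toReal_ofReal hr0.le
  haveI : IsFiniteMeasure (volume.restrict (Set.Ioo (0:ℝ) T)) :=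
    ⟨by rw [Measure.restrict_apply_univ]; exact measure_Ioo_lt_top⟩
  -- integrability of v
  have hvint : Integrable v (volume.restrict (Set.Ioo 0 T)) :=
    hv.integrable (ENNReal.one_le_ofReal.2 hr)
  -- measurable representative
  set w : ℝ → X := hv.1.mk v with hw_def
  have hw_meas : StronglyMeasurable w := hv.1.stronglyMeasurable_mk
  have hvw : v =ᵐ[volume.restrict (Set.Ioo 0 T)] w := hv.1.ae_eq_mk
  have hwEmeas : Measurable fun s => (‖w s‖₊ : ℝ≥0∞) := hw_meas.nnnorm.measurable.coe_nnreal_ennreal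
  -- the auxiliary function gw
  set gw : ℝ → X := fun s => Real.exp (s/h) • w s with hgw_def
  have hexp_mem : MemLp (fun s : ℝ => Real.exp (s/h)) ∞ (volume.restrict (Set.Ioo 0 T)) := by
    apply memLp_top_of_bound (C := Real.exp (T/h))
    · exact (Real.continuous_exp.comp (continuous_id.div_const h)).aestronglyMeasurable
    · filter_upwards [ae_restrict_mem measurableSet_Ioo] with s hs
      rw [Real.norm_eq_abs, abs_of_pos (Real.exp_pos _)]
      exact Real.exp_le_exp.2 (by gcongr; exact hs.2.le)
  have hgwint : Integrable gw (volume.restrict (Set.Ioo 0 T)) := by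
    have := (hvint.congr hvw).smul_of_top_right hexp_mem
    exact this
  -- a.e. strong measurability of landes
  have hmeas : AEStronglyMeasurable (landes h v_o v) (volume.restrict (Set.Ioo 0 T)) := by
    set gv : ℝ → X := fun s => Real.exp (s/h) • v s with hgv_def
    have hgvint : Integrable gv (volume.restrict (Set.Ioo 0 T)) :=
      hvint.smul_of_top_right hexp_mem
    have hgvIcc : IntegrableOn gv (Set.Icc 0 T) volume := by
      rw [integrableOn_Icc_iff_integrableOn_Ioo]
      exact hgvint
    have hcont : ContinuousOn (fun t => Real.exp (-t / h) • v_o +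
        (Real.exp (-t/h) / h) • ∫ s in Set.Ioc (0:ℝ) t, gv s) (Set.Icc 0 T) := by
      apply ContinuousOn.add
      · exact (((Real.continuous_exp.comp ((continuous_id.neg).div_const h))).smul
          continuous_const).continuousOn
      · exact ((Real.continuous_exp.comp ((continuous_id.neg).div_const h)).div_const
          h).continuousOn.smul (intervalIntegral.continuousOn_primitive hgvIcc)
    have hΦ : AEStronglyMeasurable (fun t => Real.exp (-t / h) • v_o +
        (Real.exp (-t/h) / h) • ∫ s in Set.Ioc (0:ℝ) t, gv s)
        (volume.restrict (Set.Ioo 0 T)) :=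
      (hcont.aestronglyMeasurable measurableSet_Icc).mono_measure
        (Measure.restrict_mono Set.Ioo_subset_Icc_self le_rfl)
    apply hΦ.congr
    filter_upwards [ae_restrict_mem measurableSet_Ioo] with t ht
    exact (landes_eq h v_o v ht.1.le).symm
  -- the core estimate in ℝ≥0∞
  have core : ∀ t_o ∈ Set.Ioc (0:ℝ) T,
      (∫⁻ t in Set.Ioo (0:ℝ) t_o, (‖landes h v_o v t‖₊ : ℝ≥0∞) ^ r) ^ (1/r) ≤
        (∫⁻ t in Set.Ioo (0:ℝ) t_o, (‖v t‖₊ : ℝ≥0∞) ^ r) ^ (1/r) +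
          ENNReal.ofReal (((h/r) * (1 - Real.exp (-(t_o*r)/h))) ^ (1/r)) *
            (‖v_o‖₊ : ℝ≥0∞) := by
    intro t_o ht_o
    have hsub : Set.Ioo (0:ℝ) t_o ⊆ Set.Ioo 0 T :=
      fun x hx => ⟨hx.1, lt_of_lt_of_le hx.2 ht_o.2⟩
    set A : ℝ → ℝ≥0∞ := fun t => ENNReal.ofReal (Real.exp (-t/h)) * (‖v_o‖₊ : ℝ≥0∞)
      with hA_def
    set B : ℝ → ℝ≥0∞ := fun t => ∫⁻ s in Set.Ioo 0 t,
      ENNReal.ofReal ((1/h) * Real.exp ((s-t)/h)) * (‖w s‖₊ : ℝ≥0∞) with hB_def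
    have hkcont : Continuous fun p : ℝ × ℝ => (1/h) * Real.exp ((p.2 - p.1)/h) :=
      continuous_const.mul (Real.continuous_exp.comp ((continuous_snd.sub
        continuous_fst).div_const h))
    have hAmeas : Measurable A :=
      (ENNReal.measurable_ofReal.comp
        (Real.continuous_exp.comp ((continuous_id.neg).div_const h)).measurable).mul_const _
    -- measurability of B-type functions (with exponent e on the norm)
    have hBgen : ∀ e : ℝ, (0 ≤ e) → Measurable (fun t => ∫⁻ s in Set.Ioo 0 t,
        ENNReal.ofReal ((1/h) * Real.exp ((s-t)/h)) * (‖w s‖₊ : ℝ≥0∞) ^ e) := by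
      intro e _
      have hS : MeasurableSet {p : ℝ × ℝ | 0 < p.2 ∧ p.2 < p.1} :=
        (measurableSet_lt measurable_const measurable_snd).inter
          (measurableSet_lt measurable_snd measurable_fst)
      have hF : Measurable fun p : ℝ × ℝ =>
          ENNReal.ofReal ((1/h) * Real.exp ((p.2-p.1)/h)) * (‖w p.2‖₊ : ℝ≥0∞) ^ e :=
        (ENNReal.measurable_ofReal.comp hkcont.measurable).mul
          ((ENNReal.continuous_rpow_const.measurable).comp (hwEmeas.comp measurable_snd))
      have hInd : Measurable fun p : ℝ × ℝ =>
          ({p : ℝ × ℝ | 0 < p.2 ∧ p.2 < p.1}).indicator (fun p =>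
            ENNReal.ofReal ((1/h) * Real.exp ((p.2-p.1)/h)) * (‖w p.2‖₊ : ℝ≥0∞) ^ e) p :=
        hF.indicator hS
      have heq : ∀ t, (∫⁻ s in Set.Ioo 0 t,
          ENNReal.ofReal ((1/h) * Real.exp ((s-t)/h)) * (‖w s‖₊ : ℝ≥0∞) ^ e) =
          ∫⁻ s, ({p : ℝ × ℝ | 0 < p.2 ∧ p.2 < p.1}).indicator (fun p =>
            ENNReal.ofReal ((1/h) * Real.exp ((p.2-p.1)/h)) * (‖w p.2‖₊ : ℝ≥0∞) ^ e) (t, s) := by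
        intro t
        rw [← lintegral_indicator measurableSet_Ioo]
        exact lintegral_congr fun s => by
          simp only [Set.indicator_apply, Set.mem_Ioo, Set.mem_setOf_eq]
      simp_rw [heq]
      exact Measurable.lintegral_prod_right (f := fun t s =>
        ({p : ℝ × ℝ | 0 < p.2 ∧ p.2 < p.1}).indicator (fun p =>
          ENNReal.ofReal ((1/h) * Real.exp ((p.2-p.1)/h)) * (‖w p.2‖₊ : ℝ≥0∞) ^ e) (t, s)) hInd
    have hBmeas : Measurable B := by
      have := hBgen 1 zero_le_one
      simp only [ENNReal.rpow_one] at this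
      exact this
    have step1 : ∀ t ∈ Set.Ioo (0:ℝ) t_o, (‖landes h v_o v t‖₊ : ℝ≥0∞) ≤ A t + B t := by
      intro t ht
      have htT : t < T := lt_of_lt_of_le ht.2 ht_o.2
      have hsub' : Set.Ioc (0:ℝ) t ⊆ Set.Ioo 0 T :=
        fun s hs => ⟨hs.1, lt_of_le_of_lt hs.2 htT⟩
      have hvw' : ∀ᵐ s ∂(volume.restrict (Set.Ioc (0:ℝ) t)), v s = w s :=
        ae_restrict_of_ae_restrict_of_subset hsub' hvw
      have hgweq : (∫ s in Set.Ioc (0:ℝ) t, Real.exp (s/h) • v s)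
          = ∫ s in Set.Ioc (0:ℝ) t, gw s :=
        integral_congr_ae (hvw'.mono fun s hs => by simp only [hgw_def]; rw [hs])
      have hgwt : IntegrableOn gw (Set.Ioc 0 t) volume :=
        hgwint.mono_measure (Measure.restrict_mono hsub' le_rfl)
      have hnorm : ‖landes h v_o v t‖ ≤ Real.exp (-t/h) * ‖v_o‖
          + (Real.exp (-t/h)/h) * ∫ s in Set.Ioc (0:ℝ) t, ‖gw s‖ := by
        rw [landes_eq h v_o v ht.1.le, hgweq]
        refine (norm_add_le _ _).trans (add_le_add ?_ ?_)
        · rw [norm_smul, Real.norm_eq_abs, abs_of_pos (Real.exp_pos _)]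
        · rw [norm_smul, Real.norm_eq_abs, abs_of_pos (div_pos (Real.exp_pos _) hh)]
          exact mul_le_mul_of_nonneg_left (norm_integral_le_integral_norm _)
            (div_pos (Real.exp_pos _) hh).le
      have hBeq : ENNReal.ofReal ((Real.exp (-t/h)/h) * ∫ s in Set.Ioc (0:ℝ) t, ‖gw s‖)
          = B t := by
        calc ENNReal.ofReal ((Real.exp (-t/h)/h) * ∫ s in Set.Ioc (0:ℝ) t, ‖gw s‖)
            = ENNReal.ofReal (Real.exp (-t/h)/h)
                * ENNReal.ofReal (∫ s in Set.Ioc (0:ℝ) t, ‖gw s‖) :=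
              ENNReal.ofReal_mul (div_pos (Real.exp_pos _) hh).le
          _ = ENNReal.ofReal (Real.exp (-t/h)/h)
                * ∫⁻ s in Set.Ioc (0:ℝ) t, ENNReal.ofReal ‖gw s‖ := by
              rw [ofReal_integral_eq_lintegral_ofReal hgwt.norm
                (Filter.Eventually.of_forall fun s => norm_nonneg _)]
          _ = ∫⁻ s in Set.Ioc (0:ℝ) t,
                ENNReal.ofReal (Real.exp (-t/h)/h) * ENNReal.ofReal ‖gw s‖ :=
              (lintegral_const_mul' _ _ ENNReal.ofReal_ne_top).symm
          _ = ∫⁻ s in Set.Ioc (0:ℝ) t,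
                ENNReal.ofReal ((1/h) * Real.exp ((s-t)/h)) * (‖w s‖₊ : ℝ≥0∞) := by
              refine lintegral_congr fun s => ?_
              rw [← ENNReal.ofReal_mul (div_pos (Real.exp_pos _) hh).le]
              have e1 : Real.exp (-t/h) * Real.exp (s/h) = Real.exp ((s-t)/h) := by
                rw [← Real.exp_add]; congr 1; ring
              have e2 : (Real.exp (-t/h)/h) * ‖gw s‖
                  = ((1/h) * Real.exp ((s-t)/h)) * ‖w s‖ := by
                simp only [hgw_def]
                rw [norm_smul, Real.norm_eq_abs, abs_of_pos (Real.exp_pos _), ← e1]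
                ring
              rw [e2, ENNReal.ofReal_mul (by positivity), my_ofReal_norm]
          _ = B t := (setLIntegral_congr (Ioo_ae_eq_Ioc (μ := volume) (a := (0:ℝ))
                (b := t))).symm
      calc (‖landes h v_o v t‖₊ : ℝ≥0∞) = ENNReal.ofReal ‖landes h v_o v t‖ :=
            (my_ofReal_norm _).symm
        _ ≤ ENNReal.ofReal (Real.exp (-t/h) * ‖v_o‖
              + (Real.exp (-t/h)/h) * ∫ s in Set.Ioc (0:ℝ) t, ‖gw s‖) :=
            ENNReal.ofReal_le_ofReal hnorm
        _ ≤ ENNReal.ofReal (Real.exp (-t/h) * ‖v_o‖)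
              + ENNReal.ofReal ((Real.exp (-t/h)/h) * ∫ s in Set.Ioc (0:ℝ) t, ‖gw s‖) :=
            ENNReal.ofReal_add_le
        _ = A t + B t := by
            rw [hBeq, hA_def]
            simp only
            rw [ENNReal.ofReal_mul (Real.exp_pos _).le, my_ofReal_norm]
    -- the A-term
    have hAr : ∫⁻ t in Set.Ioo (0:ℝ) t_o, A t ^ r
        = ENNReal.ofReal ((h/r) * (1 - Real.exp (-(t_o*r)/h))) * (‖v_o‖₊ : ℝ≥0∞) ^ r := by
      have hpt : ∀ t : ℝ, A t ^ r
          = ENNReal.ofReal (Real.exp (-(t*r)/h)) * (‖v_o‖₊ : ℝ≥0∞) ^ r := by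
        intro t
        simp only [hA_def]
        rw [ENNReal.mul_rpow_of_nonneg _ _ hr0.le]
        congr 1
        rw [ENNReal.ofReal_rpow_of_nonneg (Real.exp_pos _).le hr0.le]
        congr 1
        rw [Real.rpow_def_of_pos (Real.exp_pos _), Real.log_exp]
        congr 1; ring
      simp_rw [hpt]
      rw [lintegral_mul_const' _ _ (ENNReal.rpow_ne_top_of_nonneg hr0.le ENNReal.coe_ne_top)]
      congr 1
      rw [my_lint_ofReal (f := fun t => Real.exp (-(t*r)/h)) (by fun_prop)
        (fun x => (Real.exp_pos _).le) 0 t_o]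
      rw [my_aterm hh hr0 ht_o.1.le]
    -- the B-term
    have hBr : ∫⁻ t in Set.Ioo (0:ℝ) t_o, B t ^ r
        ≤ ∫⁻ s in Set.Ioo (0:ℝ) t_o, (‖w s‖₊ : ℝ≥0∞) ^ r := by
      have hjen : ∀ t ∈ Set.Ioo (0:ℝ) t_o, B t ^ r ≤ ∫⁻ s in Set.Ioo (0:ℝ) t,
          ENNReal.ofReal ((1/h) * Real.exp ((s-t)/h)) * (‖w s‖₊ : ℝ≥0∞) ^ r := by
        intro t ht
        have hdcont : Continuous fun s => (1/h) * Real.exp ((s-t)/h) :=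
          continuous_const.mul (Real.continuous_exp.comp
            ((continuous_id.sub continuous_const).div_const h))
        have hdmeas : Measurable fun s => ENNReal.ofReal ((1/h) * Real.exp ((s-t)/h)) :=
          ENNReal.measurable_ofReal.comp hdcont.measurable
        set μt := (volume.restrict (Set.Ioo (0:ℝ) t)).withDensity
          (fun s => ENNReal.ofReal ((1/h) * Real.exp ((s-t)/h))) with hμt
        have h1 : B t = ∫⁻ s, (‖w s‖₊ : ℝ≥0∞) ∂μt := by
          rw [hμt, lintegral_withDensity_eq_lintegral_mul _ hdmeas hwEmeas]
          rfl
        have h2 : ∫⁻ s, (‖w s‖₊ : ℝ≥0∞) ^ r ∂μt = ∫⁻ s in Set.Ioo (0:ℝ) t,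
            ENNReal.ofReal ((1/h) * Real.exp ((s-t)/h)) * (‖w s‖₊ : ℝ≥0∞) ^ r := by
          have hg : Measurable fun s => (‖w s‖₊ : ℝ≥0∞) ^ r :=
            ENNReal.continuous_rpow_const.measurable.comp hwEmeas
          rw [hμt, lintegral_withDensity_eq_lintegral_mul _ hdmeas
            (g := fun s => (‖w s‖₊ : ℝ≥0∞) ^ r) hg]
          rfl
        have hmass : μt Set.univ ≤ 1 := by
          rw [hμt, withDensity_apply _ MeasurableSet.univ, Measure.restrict_univ]
          rw [my_lint_ofReal hdcont (fun x => by positivity) 0 t]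
          rw [my_mass1 hh 0 t t ht.1.le]
          refine ENNReal.ofReal_le_one.2 ?_
          have e0 : (t - t)/h = 0 := by rw [sub_self, zero_div]
          rw [e0, Real.exp_zero]
          linarith [Real.exp_pos ((0-t)/h)]
        rw [h1, ← h2]
        exact my_jensen μt hwEmeas.aemeasurable hr hmass
      have hS : MeasurableSet {p : ℝ × ℝ | 0 < p.2 ∧ p.2 < p.1} :=
        (measurableSet_lt measurable_const measurable_snd).inter
          (measurableSet_lt measurable_snd measurable_fst)
      set F : ℝ × ℝ → ℝ≥0∞ := fun p => ({p : ℝ × ℝ | 0 < p.2 ∧ p.2 < p.1}).indicator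
        (fun p => ENNReal.ofReal ((1/h) * Real.exp ((p.2-p.1)/h))
          * (‖w p.2‖₊ : ℝ≥0∞) ^ r) p with hF_def
      have hFmeas : Measurable F :=
        (((ENNReal.measurable_ofReal.comp hkcont.measurable).mul
          ((ENNReal.continuous_rpow_const.measurable).comp
            (hwEmeas.comp measurable_snd)))).indicator hS
      have hrwF : ∀ t, (∫⁻ s in Set.Ioo (0:ℝ) t,
          ENNReal.ofReal ((1/h) * Real.exp ((s-t)/h)) * (‖w s‖₊ : ℝ≥0∞) ^ r)
          = ∫⁻ s, F (t, s) := by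
        intro t
        rw [← lintegral_indicator measurableSet_Ioo]
        exact lintegral_congr fun s => by
          simp only [hF_def, Set.indicator_apply, Set.mem_Ioo, Set.mem_setOf_eq]
      calc ∫⁻ t in Set.Ioo (0:ℝ) t_o, B t ^ r
          ≤ ∫⁻ t in Set.Ioo (0:ℝ) t_o, ∫⁻ s, F (t, s) := by
            refine setLIntegral_mono (Measurable.lintegral_prod_right
              (f := fun t s => F (t, s)) hFmeas) fun t ht => ?_
            rw [← hrwF t]
            exact hjen t ht
        _ = ∫⁻ s, ∫⁻ t in Set.Ioo (0:ℝ) t_o, F (t, s) :=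
            lintegral_lintegral_swap hFmeas.aemeasurable
        _ ≤ ∫⁻ s, (Set.Ioo (0:ℝ) t_o).indicator (fun s => (‖w s‖₊ : ℝ≥0∞) ^ r) s := by
            refine lintegral_mono fun s => ?_
            by_cases hs : s ∈ Set.Ioo (0:ℝ) t_o
            · rw [Set.indicator_of_mem hs]
              have hptw : ∀ t, F (t, s) = (Set.Ioi s).indicator
                  (fun t => ENNReal.ofReal ((1/h) * Real.exp ((s-t)/h))
                    * (‖w s‖₊ : ℝ≥0∞) ^ r) t := by
                intro t
                simp only [hF_def, Set.indicator_apply, Set.mem_setOf_eq, Set.mem_Ioi,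
                  hs.1, true_and]
              simp_rw [hptw]
              rw [lintegral_indicator measurableSet_Ioi,
                Measure.restrict_restrict measurableSet_Ioi]
              rw [show Set.Ioi s ∩ Set.Ioo (0:ℝ) t_o = Set.Ioo s t_o from
                Set.ext fun t => ⟨fun hx => ⟨hx.1, hx.2.2⟩,
                  fun hx => ⟨hx.1, lt_trans hs.1 hx.1, hx.2⟩⟩]
              rw [lintegral_mul_const' _ _
                (ENNReal.rpow_ne_top_of_nonneg hr0.le ENNReal.coe_ne_top)]
              have hm2 : (∫⁻ t in Set.Ioo s t_o,
                  ENNReal.ofReal ((1/h) * Real.exp ((s-t)/h))) ≤ 1 := by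
                rw [my_lint_ofReal (f := fun t => (1/h) * Real.exp ((s-t)/h)) (by fun_prop)
                  (fun x => by positivity) s t_o]
                rw [my_mass2 hh s t_o s hs.2.le]
                refine ENNReal.ofReal_le_one.2 ?_
                have e0 : (s - s)/h = 0 := by rw [sub_self, zero_div]
                rw [e0, Real.exp_zero]
                linarith [Real.exp_pos ((s-t_o)/h)]
              calc (∫⁻ t in Set.Ioo s t_o,
                    ENNReal.ofReal ((1/h) * Real.exp ((s-t)/h))) * (‖w s‖₊ : ℝ≥0∞) ^ r
                  ≤ 1 * (‖w s‖₊ : ℝ≥0∞) ^ r := mul_le_mul_left hm2 _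
                _ = (‖w s‖₊ : ℝ≥0∞) ^ r := one_mul _
            · rw [Set.indicator_of_notMem hs]
              have hz : ∀ t ∈ Set.Ioo (0:ℝ) t_o, F (t, s) = 0 := by
                intro t ht
                simp only [hF_def, Set.indicator_apply, Set.mem_setOf_eq]
                rw [if_neg]
                rintro ⟨h1, h2⟩
                exact hs ⟨h1, h2.trans ht.2⟩
              rw [setLIntegral_congr_fun_ae measurableSet_Ioo (ae_of_all _ hz)]
              simp
        _ = ∫⁻ s in Set.Ioo (0:ℝ) t_o, (‖w s‖₊ : ℝ≥0∞) ^ r :=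
            lintegral_indicator measurableSet_Ioo _
    -- nonnegativity of the constant
    have hexp1 : Real.exp (-(t_o*r)/h) ≤ 1 := by
      have h1 : (0:ℝ) ≤ t_o * r := mul_nonneg ht_o.1.le hr0.le
      calc Real.exp (-(t_o*r)/h) ≤ Real.exp 0 := Real.exp_le_exp.2 (by
            rw [neg_div]; exact neg_nonpos.2 (div_nonneg h1 hh.le))
        _ = 1 := Real.exp_zero
    have hC0 : (0:ℝ) ≤ (h/r) * (1 - Real.exp (-(t_o*r)/h)) := by
      apply mul_nonneg (by positivity)
      linarith
    -- assembling
    calc (∫⁻ t in Set.Ioo (0:ℝ) t_o, (‖landes h v_o v t‖₊ : ℝ≥0∞) ^ r) ^ (1/r)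
        ≤ (∫⁻ t in Set.Ioo (0:ℝ) t_o, (A t + B t) ^ r) ^ (1/r) := by
          refine ENNReal.rpow_le_rpow ?_ (by positivity)
          refine setLIntegral_mono (ENNReal.continuous_rpow_const.measurable.comp
            (hAmeas.add hBmeas)) fun t ht => ?_
          exact ENNReal.rpow_le_rpow (step1 t ht) hr0.le
      _ ≤ (∫⁻ t in Set.Ioo (0:ℝ) t_o, A t ^ r) ^ (1/r)
            + (∫⁻ t in Set.Ioo (0:ℝ) t_o, B t ^ r) ^ (1/r) := by
          have := ENNReal.lintegral_Lp_add_le (μ := volume.restrict (Set.Ioo (0:ℝ) t_o))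
            hAmeas.aemeasurable hBmeas.aemeasurable hr
          simpa using this
      _ ≤ (ENNReal.ofReal ((h/r) * (1 - Real.exp (-(t_o*r)/h)))
              * (‖v_o‖₊ : ℝ≥0∞) ^ r) ^ (1/r)
            + (∫⁻ s in Set.Ioo (0:ℝ) t_o, (‖w s‖₊ : ℝ≥0∞) ^ r) ^ (1/r) := by
          rw [hAr]
          exact add_le_add le_rfl (ENNReal.rpow_le_rpow hBr (by positivity))
      _ = (∫⁻ t in Set.Ioo (0:ℝ) t_o, (‖v t‖₊ : ℝ≥0∞) ^ r) ^ (1/r)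
            + ENNReal.ofReal (((h/r) * (1 - Real.exp (-(t_o*r)/h))) ^ (1/r))
              * (‖v_o‖₊ : ℝ≥0∞) := by
          rw [add_comm]
          congr 1
          · refine congrArg (fun x => x ^ (1/r)) (lintegral_congr_ae ?_)
            filter_upwards [ae_restrict_of_ae_restrict_of_subset hsub hvw] with s hs
            rw [hs]
          · rw [ENNReal.mul_rpow_of_nonneg _ _ (by positivity),
              ENNReal.ofReal_rpow_of_nonneg hC0 (by positivity),
              ← ENNReal.rpow_mul, mul_one_div_cancel hr0.ne', ENNReal.rpow_one]
  -- finiteness of the v-integral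
  have hfin_v : (∫⁻ t in Set.Ioo (0:ℝ) T, (‖v t‖₊ : ℝ≥0∞) ^ r) < ∞ := by
    have h2 := hv.2
    rw [eLpNorm_eq_lintegral_rpow_enorm_toReal hp0 hptop, hpreal] at h2
    exact (ENNReal.rpow_lt_top_iff_of_pos (by positivity)).1 h2
  have hmem : MemLp (landes h v_o v) (ENNReal.ofReal r) (volume.restrict (Set.Ioo 0 T)) := by
    refine ⟨hmeas, ?_⟩
    rw [eLpNorm_eq_lintegral_rpow_enorm_toReal hp0 hptop, hpreal]
    refine lt_of_le_of_lt (core T ⟨hT, le_refl T⟩) ?_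
    apply ENNReal.add_lt_top.2
    constructor
    · exact ENNReal.rpow_lt_top_of_nonneg (by positivity) hfin_v.ne
    · exact ENNReal.mul_lt_top ENNReal.ofReal_lt_top ENNReal.coe_lt_top
  refine ⟨hmem, ?_⟩
  intro t_o ht_o
  have hsub : Set.Ioo (0:ℝ) t_o ⊆ Set.Ioo 0 T :=
    fun x hx => ⟨hx.1, lt_of_lt_of_le hx.2 ht_o.2⟩
  have hcore := core t_o ht_o
  have hexp1 : Real.exp (-(t_o*r)/h) ≤ 1 := by
    have h1 : (0:ℝ) ≤ t_o * r := mul_nonneg ht_o.1.le hr0.le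
    calc Real.exp (-(t_o*r)/h) ≤ Real.exp 0 := Real.exp_le_exp.2 (by
          rw [neg_div]; exact neg_nonpos.2 (div_nonneg h1 hh.le))
      _ = 1 := Real.exp_zero
  have hC0 : (0:ℝ) ≤ (h/r) * (1 - Real.exp (-(t_o*r)/h)) := by
    apply mul_nonneg (by positivity)
    linarith
  have hLv_fin : (∫⁻ t in Set.Ioo (0:ℝ) t_o, (‖v t‖₊ : ℝ≥0∞) ^ r) < ∞ :=
    lt_of_le_of_lt (lintegral_mono_set hsub) hfin_v
  have hterm1_ne : ((∫⁻ t in Set.Ioo (0:ℝ) t_o, (‖v t‖₊ : ℝ≥0∞) ^ r) ^ (1/r)) ≠ ∞ :=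
    (ENNReal.rpow_lt_top_of_nonneg (by positivity) hLv_fin.ne).ne
  have hterm2_ne : (ENNReal.ofReal (((h/r) * (1 - Real.exp (-(t_o*r)/h))) ^ (1/r))
      * (‖v_o‖₊ : ℝ≥0∞)) ≠ ∞ :=
    (ENNReal.mul_lt_top ENNReal.ofReal_lt_top ENNReal.coe_lt_top).ne
  have hRHS_ne : ((∫⁻ t in Set.Ioo (0:ℝ) t_o, (‖v t‖₊ : ℝ≥0∞) ^ r) ^ (1/r)
      + ENNReal.ofReal (((h/r) * (1 - Real.exp (-(t_o*r)/h))) ^ (1/r))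
        * (‖v_o‖₊ : ℝ≥0∞)) ≠ ∞ :=
    ENNReal.add_ne_top.2 ⟨hterm1_ne, hterm2_ne⟩
  have hconv : ∀ (f : ℝ → X), AEStronglyMeasurable f (volume.restrict (Set.Ioo (0:ℝ) t_o)) →
      ∫ t in Set.Ioo (0:ℝ) t_o, ‖f t‖ ^ r
        = (∫⁻ t in Set.Ioo (0:ℝ) t_o, (‖f t‖₊ : ℝ≥0∞) ^ r).toReal := by
    intro f hf
    rw [integral_eq_lintegral_of_nonneg_ae
      (Filter.Eventually.of_forall fun t => Real.rpow_nonneg (norm_nonneg _) r)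
      ((Real.continuous_rpow_const hr0.le).comp_aestronglyMeasurable hf.norm)]
    congr 1
    refine lintegral_congr fun t => ?_
    rw [← my_ofReal_norm]
    exact (ENNReal.ofReal_rpow_of_nonneg (norm_nonneg _) hr0.le).symm
  rw [hconv _ (hmeas.mono_measure (Measure.restrict_mono hsub le_rfl)),
    hconv _ (hv.1.mono_measure (Measure.restrict_mono hsub le_rfl))]
  have hmono := ENNReal.toReal_mono hRHS_ne hcore
  rw [ENNReal.toReal_add hterm1_ne hterm2_ne, ENNReal.toReal_mul,
    ENNReal.toReal_ofReal (Real.rpow_nonneg hC0 _),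
    ← ENNReal.toReal_rpow, ← ENNReal.toReal_rpow] at hmono
  simpa [ENNReal.coe_toReal, coe_nnnorm] using hmono
end

section
/- Let X be a real Banach space, 0 < T < ∞, 1 ≤ r < ∞, v_o ∈ X, and v ∈ L^r(0,T;X). Then [v]_h → v strongly in L^r(0,T;X) in the limit h ↓ 0, i.e. ∫_0^T ‖[v]_h(t) − v(t)‖_X^r dt → 0 as h ↓ 0. -/
open MeasureTheory

section Aux
open Set Filter intervalIntegral
open scoped ENNReal NNReal Topology

lemma int_exp_right {h : ℝ} (c a b : ℝ) :
    ∫ s in a..b, Real.exp ((s - c) / h) / h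
      = Real.exp ((b - c) / h) - Real.exp ((a - c) / h) := by
  have key : ∀ s : ℝ, HasDerivAt (fun s => Real.exp ((s - c) / h))
      (Real.exp ((s - c) / h) / h) s := by
    intro s
    have h1 : HasDerivAt (fun s : ℝ => (s - c) / h) (1 / h) s :=
      ((hasDerivAt_id s).sub_const c).div_const h
    have := (Real.hasDerivAt_exp ((s - c) / h)).comp s h1
    rw [mul_one_div] at this
    exact this
  exact intervalIntegral.integral_eq_sub_of_hasDerivAt (fun s _ => key s)
    ((Continuous.div_const (by fun_prop) h).intervalIntegrable a b)

lemma int_exp_left {h : ℝ} (c a b : ℝ) :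
    ∫ t in a..b, Real.exp ((c - t) / h) / h
      = Real.exp ((c - a) / h) - Real.exp ((c - b) / h) := by
  have key : ∀ t : ℝ, HasDerivAt (fun t => -Real.exp ((c - t) / h))
      (Real.exp ((c - t) / h) / h) t := by
    intro t
    have h1 : HasDerivAt (fun t : ℝ => (c - t) / h) (-1 / h) t :=
      ((hasDerivAt_id t).const_sub c).div_const h
    have := ((Real.hasDerivAt_exp ((c - t) / h)).comp t h1).neg
    rw [show -(Real.exp ((c - t) / h) * (-1 / h)) = Real.exp ((c - t) / h) / h by ring] at this
    exact this
  have := intervalIntegral.integral_eq_sub_of_hasDerivAt (fun t _ => key t)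
    ((Continuous.div_const (by fun_prop) h).intervalIntegrable a b)
  rw [this]; ring

lemma jensen_step {ν : Measure ℝ} {w F : ℝ → ℝ≥0∞} {r : ℝ}
    (hw : Measurable w) (hF : AEMeasurable F ν)
    (hw0 : ∀ s, w s ≠ 0) (hwtop : ∀ s, w s ≠ ⊤)
    (hm : ∫⁻ s, w s ∂ν ≤ 1) (hr : 1 ≤ r) :
    (∫⁻ s, w s * F s ∂ν) ^ r ≤ ∫⁻ s, w s * F s ^ r ∂ν := by
  rcases eq_or_lt_of_le hr with hr1 | hr1
  · simp [← hr1]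
  · have hpq : r.HolderConjugate (r / (r - 1)) := Real.HolderConjugate.conjExponent hr1
    set q : ℝ := r / (r - 1) with hq
    have hr0 : (0:ℝ) < r := lt_trans one_pos hr1
    have hq0 : (0:ℝ) < q := hpq.symm.pos
    have key := ENNReal.lintegral_mul_le_Lp_mul_Lq ν hpq.symm
      (f := fun s => w s ^ (1/q)) (g := fun s => w s ^ (1/r) * F s)
      (hw.pow_const _).aemeasurable (((hw.pow_const _).aemeasurable).mul hF)
    have hab : ∀ s, w s ^ (1/q) * (w s ^ (1/r) * F s) = w s * F s := by
      intro s
      rw [← mul_assoc, ← ENNReal.rpow_add _ _ (hw0 s) (hwtop s)]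
      rw [show (1:ℝ)/q + 1/r = 1 by rw [one_div, one_div]; exact hpq.symm.inv_add_inv_eq_one,
        ENNReal.rpow_one]
    have haq : ∀ s, (w s ^ (1/q)) ^ q = w s := by
      intro s
      rw [← ENNReal.rpow_mul, one_div, inv_mul_cancel₀ (ne_of_gt hq0), ENNReal.rpow_one]
    have hbr : ∀ s, (w s ^ (1/r) * F s) ^ r = w s * F s ^ r := by
      intro s
      rw [ENNReal.mul_rpow_of_nonneg _ _ (le_of_lt hr0), ← ENNReal.rpow_mul, one_div,
        inv_mul_cancel₀ (ne_of_gt hr0), ENNReal.rpow_one]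
    simp only [Pi.mul_apply, hab, haq, hbr] at key
    calc (∫⁻ s, w s * F s ∂ν) ^ r
        ≤ ((∫⁻ s, w s ∂ν) ^ (1/q) * (∫⁻ s, w s * F s ^ r ∂ν) ^ (1/r)) ^ r :=
          ENNReal.rpow_le_rpow key (le_of_lt hr0)
      _ ≤ (1 * (∫⁻ s, w s * F s ^ r ∂ν) ^ (1/r)) ^ r := by
          gcongr
          exact ENNReal.rpow_le_one hm (by positivity)
      _ = ∫⁻ s, w s * F s ^ r ∂ν := by
          rw [one_mul, ← ENNReal.rpow_mul, one_div, inv_mul_cancel₀ (ne_of_gt hr0),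
            ENNReal.rpow_one]

lemma contraction {X : Type*} [NormedAddCommGroup X] [NormedSpace ℝ X] [CompleteSpace X]
    {T r h : ℝ} (hT : 0 < T) (hr : 1 ≤ r) (hh : 0 < h) {f : ℝ → X}
    (hf : AEStronglyMeasurable f (volume.restrict (Set.Ioo 0 T))) :
    ∫⁻ t in Set.Ioo 0 T,
        (‖(1/h) • ∫ s in (0:ℝ)..t, Real.exp ((s - t)/h) • f s‖₊ : ℝ≥0∞) ^ r
      ≤ ∫⁻ s in Set.Ioo 0 T, (‖f s‖₊ : ℝ≥0∞) ^ r := by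
  have hr0 : (0:ℝ) < r := lt_of_lt_of_le one_pos hr
  set μT := volume.restrict (Set.Ioo 0 T) with hμT
  -- measurable representative of the ennnorm of f
  obtain ⟨G, hGmeas, hG⟩ :
      ∃ G : ℝ → ℝ≥0∞, Measurable G ∧ (fun s => (‖f s‖₊ : ℝ≥0∞)) =ᵐ[μT] G :=
    ⟨hf.enorm.mk _, hf.enorm.measurable_mk, hf.enorm.ae_eq_mk⟩
  set w : ℝ → ℝ → ℝ≥0∞ := fun t s => ENNReal.ofReal (Real.exp ((s - t)/h) / h) with hw
  have hwmeas : ∀ t, Measurable (w t) := fun t =>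
    Measurable.ennreal_ofReal (Continuous.div_const (by fun_prop) h).measurable
  have hwpos : ∀ t s, w t s ≠ 0 := by
    intro t s
    simp only [hw, ne_eq, ENNReal.ofReal_eq_zero, not_le]
    positivity
  have hwtop : ∀ t s, w t s ≠ ⊤ := fun t s => ENNReal.ofReal_ne_top
  -- mass bounds
  have mass1 : ∀ t ∈ Set.Ioo (0:ℝ) T, ∫⁻ s in Set.Ioc 0 t, w t s ≤ 1 := by
    intro t ht
    have hint : IntegrableOn (fun s => Real.exp ((s - t)/h) / h) (Set.Ioc 0 t) :=
      (Continuous.div_const (by fun_prop) h).integrableOn_Ioc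
    have hnn : (0:ℝ → ℝ) ≤ᵐ[volume.restrict (Set.Ioc 0 t)] fun s => Real.exp ((s - t)/h) / h := by
      filter_upwards with s
      positivity
    rw [hw]
    rw [← ofReal_integral_eq_lintegral_ofReal hint hnn]
    rw [← intervalIntegral.integral_of_le (le_of_lt ht.1)]
    rw [int_exp_right]
    calc ENNReal.ofReal (Real.exp ((t - t)/h) - Real.exp ((0 - t)/h))
        ≤ ENNReal.ofReal 1 := by
          apply ENNReal.ofReal_le_ofReal
          simp only [sub_self, zero_div, Real.exp_zero]
          have := Real.exp_pos ((0 - t)/h)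
          linarith
      _ = 1 := ENNReal.ofReal_one
  have mass2 : ∀ s ∈ Set.Ioo (0:ℝ) T, ∫⁻ t in Set.Ico s T, w t s ≤ 1 := by
    intro s hs
    have hint : IntegrableOn (fun t => Real.exp ((s - t)/h) / h) (Set.Ioc s T) :=
      (Continuous.div_const (by fun_prop) h).integrableOn_Ioc
    have hnn : (0:ℝ → ℝ) ≤ᵐ[volume.restrict (Set.Ioc s T)] fun t => Real.exp ((s - t)/h) / h := by
      filter_upwards with t
      positivity
    rw [Measure.restrict_congr_set Ico_ae_eq_Ioc]
    have : ∫⁻ t in Set.Ioc s T, w t s = ∫⁻ t in Set.Ioc s T,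
        ENNReal.ofReal (Real.exp ((s - t)/h) / h) := rfl
    rw [this, ← ofReal_integral_eq_lintegral_ofReal hint hnn]
    rw [← intervalIntegral.integral_of_le (le_of_lt hs.2)]
    rw [int_exp_left]
    calc ENNReal.ofReal (Real.exp ((s - s)/h) - Real.exp ((s - T)/h))
        ≤ ENNReal.ofReal 1 := by
          apply ENNReal.ofReal_le_ofReal
          simp only [sub_self, zero_div, Real.exp_zero]
          have := Real.exp_pos ((s - T)/h)
          linarith
      _ = 1 := ENNReal.ofReal_one
  have hwmeas2 : ∀ s, Measurable (fun t => w t s) := fun s =>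
    Measurable.ennreal_ofReal (Continuous.div_const (by fun_prop) h).measurable
  -- Step A: pointwise bound
  have stepA : ∀ t ∈ Set.Ioo (0:ℝ) T,
      (‖(1/h) • ∫ s in (0:ℝ)..t, Real.exp ((s - t)/h) • f s‖₊ : ℝ≥0∞)
        ≤ ∫⁻ s in Set.Ioc 0 t, w t s * (‖f s‖₊ : ℝ≥0∞) := by
    intro t ht
    rw [intervalIntegral.integral_of_le (le_of_lt ht.1)]
    have e1 : (‖(1/h) • ∫ s in Set.Ioc 0 t, Real.exp ((s - t)/h) • f s‖₊ : ℝ≥0∞)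
        = ENNReal.ofReal (1/h) * (‖∫ s in Set.Ioc 0 t, Real.exp ((s - t)/h) • f s‖₊ : ℝ≥0∞) := by
      rw [nnnorm_smul, ENNReal.coe_mul, ← enorm_eq_nnnorm (1/h), Real.enorm_eq_ofReal (by positivity)]
    rw [e1]
    calc ENNReal.ofReal (1/h) * (‖∫ s in Set.Ioc 0 t, Real.exp ((s - t)/h) • f s‖₊ : ℝ≥0∞)
        ≤ ENNReal.ofReal (1/h) * ∫⁻ s in Set.Ioc 0 t, (‖Real.exp ((s - t)/h) • f s‖₊ : ℝ≥0∞) :=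
          mul_le_mul_right (enorm_integral_le_lintegral_enorm _) _
      _ = ∫⁻ s in Set.Ioc 0 t, ENNReal.ofReal (1/h) * (‖Real.exp ((s - t)/h) • f s‖₊ : ℝ≥0∞) :=
          (lintegral_const_mul' _ _ ENNReal.ofReal_ne_top).symm
      _ = ∫⁻ s in Set.Ioc 0 t, w t s * (‖f s‖₊ : ℝ≥0∞) := by
          apply lintegral_congr
          intro s
          rw [nnnorm_smul, ENNReal.coe_mul, ← enorm_eq_nnnorm (Real.exp ((s - t)/h)),
            Real.enorm_eq_ofReal (Real.exp_pos _).le,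
            ← mul_assoc, ← ENNReal.ofReal_mul (by positivity)]
          congr 2
          rw [one_div]
          field_simp
  -- the product kernel
  set Q : ℝ × ℝ → ℝ≥0∞ :=
    fun p => if p.2 ∈ Set.Ioc 0 p.1 then w p.1 p.2 * G p.2 ^ r else 0 with hQ
  have hsetmeas : MeasurableSet {p : ℝ × ℝ | p.2 ∈ Set.Ioc 0 p.1} :=
    (measurableSet_lt measurable_const measurable_snd).inter
      (measurableSet_le measurable_snd measurable_fst)
  have hQmeas : Measurable Q := by
    apply Measurable.ite hsetmeas
    · exact (Measurable.ennreal_ofReal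
        ((Continuous.div_const (by fun_prop) h).measurable)).mul
        ((hGmeas.comp measurable_snd).pow_const r)
    · exact measurable_const
  calc ∫⁻ t in Set.Ioo 0 T,
        (‖(1/h) • ∫ s in (0:ℝ)..t, Real.exp ((s - t)/h) • f s‖₊ : ℝ≥0∞) ^ r
      ≤ ∫⁻ t in Set.Ioo 0 T, (∫⁻ s in Set.Ioc 0 t, w t s * (‖f s‖₊ : ℝ≥0∞)) ^ r := by
        apply lintegral_mono_ae
        filter_upwards [ae_restrict_mem measurableSet_Ioo] with t ht
        exact ENNReal.rpow_le_rpow (stepA t ht) (le_of_lt hr0)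
    _ = ∫⁻ t in Set.Ioo 0 T, (∫⁻ s in Set.Ioc 0 t, w t s * G s) ^ r := by
        apply lintegral_congr_ae
        filter_upwards [ae_restrict_mem measurableSet_Ioo] with t ht
        congr 1
        apply lintegral_congr_ae
        have hsub : Set.Ioc 0 t ⊆ Set.Ioo 0 T :=
          fun s hs => ⟨hs.1, lt_of_le_of_lt hs.2 ht.2⟩
        filter_upwards [ae_restrict_of_ae_restrict_of_subset hsub hG] with s hs
        rw [hs]
    _ ≤ ∫⁻ t in Set.Ioo 0 T, ∫⁻ s in Set.Ioc 0 t, w t s * G s ^ r := by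
        apply lintegral_mono_ae
        filter_upwards [ae_restrict_mem measurableSet_Ioo] with t ht
        exact jensen_step (hwmeas t) hGmeas.aemeasurable (hwpos t) (hwtop t) (mass1 t ht) hr
    _ = ∫⁻ t in Set.Ioo 0 T, ∫⁻ s in Set.Ioo 0 T, Q (t, s) := by
        apply lintegral_congr_ae
        filter_upwards [ae_restrict_mem measurableSet_Ioo] with t ht
        have hind : ∫⁻ s in Set.Ioo 0 T, Q (t, s)
            = ∫⁻ s in Set.Ioo 0 T, (Set.Ioc 0 t).indicator (fun s => w t s * G s ^ r) s :=
          lintegral_congr fun s => by simp only [hQ, Set.indicator_apply]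
        have hsub : Set.Ioc 0 t ⊆ Set.Ioo 0 T :=
          fun s hs => ⟨hs.1, lt_of_le_of_lt hs.2 ht.2⟩
        rw [hind, lintegral_indicator measurableSet_Ioc _, Measure.restrict_restrict
          measurableSet_Ioc, Set.inter_eq_self_of_subset_left hsub]
    _ = ∫⁻ s in Set.Ioo 0 T, ∫⁻ t in Set.Ioo 0 T, Q (t, s) := by
        apply lintegral_lintegral_swap
        exact (hQmeas.comp (measurable_fst.prodMk measurable_snd)).aemeasurable
    _ ≤ ∫⁻ s in Set.Ioo 0 T, G s ^ r := by
        apply lintegral_mono_ae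
        filter_upwards [ae_restrict_mem measurableSet_Ioo] with s hs
        have hind : ∫⁻ t in Set.Ioo 0 T, Q (t, s)
            = ∫⁻ t in Set.Ioo 0 T, (Set.Ici s).indicator (fun t => w t s * G s ^ r) t :=
          lintegral_congr fun t => by
            simp only [hQ, Set.indicator_apply, Set.mem_Ioc, Set.mem_Ici]
            by_cases hst : s ≤ t
            · simp [hst, hs.1]
            · simp [hst]
        rw [hind, lintegral_indicator measurableSet_Ici _, Measure.restrict_restrict
          measurableSet_Ici]
        have hinter : Set.Ici s ∩ Set.Ioo 0 T = Set.Ico s T := by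
          ext x
          simp only [Set.mem_inter_iff, Set.mem_Ici, Set.mem_Ioo, Set.mem_Ico]
          constructor
          · rintro ⟨h1, _, h3⟩; exact ⟨h1, h3⟩
          · rintro ⟨h1, h2⟩; exact ⟨h1, lt_of_lt_of_le hs.1 h1, h2⟩
        rw [hinter]
        calc ∫⁻ t in Set.Ico s T, w t s * G s ^ r
            = ∫⁻ t in Set.Ico s T, G s ^ r * w t s := by
              apply lintegral_congr; intro t; ring
          _ = G s ^ r * ∫⁻ t in Set.Ico s T, w t s :=
              lintegral_const_mul _ (hwmeas2 s)
          _ ≤ G s ^ r * 1 := mul_le_mul_right (mass2 s hs) _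
          _ = G s ^ r := mul_one _
    _ = ∫⁻ s in Set.Ioo 0 T, (‖f s‖₊ : ℝ≥0∞) ^ r := by
        apply lintegral_congr_ae
        filter_upwards [hG] with s hs
        rw [hs]

lemma kmap_continuousOn {X : Type*} [NormedAddCommGroup X] [NormedSpace ℝ X] [CompleteSpace X]
    {T h : ℝ} (hT : 0 < T) (hh : 0 < h) {f : ℝ → X}
    (hf : IntegrableOn f (Set.Ioo 0 T)) :
    ContinuousOn (fun t => (1/h) • ∫ s in (0:ℝ)..t, Real.exp ((s - t)/h) • f s)
      (Set.Icc 0 T) := by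
  have h1 : IntegrableOn f (Set.Icc 0 T) := by
    rw [integrableOn_Icc_iff_integrableOn_Ioo]; exact hf
  have hfI : IntegrableOn (fun s => Real.exp (s/h) • f s) (Set.Icc 0 T) := by
    apply h1.smul_of_top_right
    apply memLp_top_of_bound
      (Continuous.aestronglyMeasurable (by fun_prop : Continuous fun s : ℝ => Real.exp (s/h)))
      (Real.exp (T/h))
    filter_upwards [ae_restrict_mem measurableSet_Icc] with s hs
    rw [Real.norm_eq_abs, abs_of_pos (Real.exp_pos _)]
    apply Real.exp_le_exp.2
    gcongr
    exact hs.2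
  have hP : ContinuousOn (fun t => ∫ s in (0:ℝ)..t, Real.exp (s/h) • f s) (Set.Icc 0 T) := by
    have := intervalIntegral.continuousOn_primitive_interval
      (a := (0:ℝ)) (b := T) (μ := volume) (f := fun s => Real.exp (s/h) • f s)
      (by rwa [Set.uIcc_of_le hT.le])
    rwa [Set.uIcc_of_le hT.le] at this
  have key : (fun t => (1/h) • ∫ s in (0:ℝ)..t, Real.exp ((s - t)/h) • f s)
      = fun t => (1/h) • Real.exp (-t/h) • ∫ s in (0:ℝ)..t, Real.exp (s/h) • f s := by
    funext t
    rw [← intervalIntegral.integral_smul, ← intervalIntegral.integral_smul,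
      ← intervalIntegral.integral_smul]
    apply intervalIntegral.integral_congr
    intro s _
    simp only [smul_smul]
    congr 1
    rw [← Real.exp_add]
    congr 1
    ring
  rw [key]
  exact continuousOn_const.smul
    (((Real.continuous_exp.comp (continuous_id.neg.div_const h)).continuousOn).smul hP)

lemma exp_decay_aux {δ : ℝ} (hδ : 0 < δ) :
    Tendsto (fun h : ℝ => Real.exp (-δ/h) / h) (𝓝[>] 0) (𝓝 0) := by
  have l1 : Tendsto (fun h : ℝ => 1/h) (𝓝[>] (0:ℝ)) atTop := by
    simpa [one_div] using tendsto_inv_nhdsGT_zero (𝕜 := ℝ)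
  have l2 : Tendsto (fun y : ℝ => y * Real.exp (-δ * y)) atTop (𝓝 0) := by
    have := tendsto_rpow_mul_exp_neg_mul_atTop_nhds_zero 1 δ hδ
    refine this.congr' ?_
    filter_upwards with y
    rw [Real.rpow_one]
  have comp := l2.comp l1
  refine comp.congr ?_
  intro h
  simp only [Function.comp_apply]
  rw [mul_one_div, one_div_mul_eq_div]

lemma exp_neg_div_tendsto {t : ℝ} (ht : 0 < t) :
    Tendsto (fun h : ℝ => Real.exp (-t/h)) (𝓝[>] 0) (𝓝 0) := by
  have l1 : Tendsto (fun h : ℝ => 1/h) (𝓝[>] (0:ℝ)) atTop := by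
    simpa [one_div] using tendsto_inv_nhdsGT_zero (𝕜 := ℝ)
  have l2 : Tendsto (fun h : ℝ => t * (1/h)) (𝓝[>] 0) atTop :=
    l1.const_mul_atTop ht
  have l3 : Tendsto (fun h : ℝ => -(t * (1/h))) (𝓝[>] 0) atBot :=
    tendsto_neg_atTop_atBot.comp l2
  have l4 := Real.tendsto_exp_atBot.comp l3
  refine l4.congr ?_
  intro h
  simp only [Function.comp_apply]
  rw [mul_one_div, neg_div]

lemma landes_pointwise {X : Type*} [NormedAddCommGroup X] [NormedSpace ℝ X] [CompleteSpace X]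
    (v_o : X) {g : ℝ → X} (hg : Continuous g) {t : ℝ} (ht : 0 < t) :
    Tendsto (fun h : ℝ => Real.exp (-t/h) • v_o
       + (1/h) • ∫ s in (0:ℝ)..t, Real.exp ((s - t)/h) • g s) (𝓝[>] 0) (𝓝 (g t)) := by
  have h1 : Tendsto (fun h : ℝ => Real.exp (-t/h) • v_o) (𝓝[>] 0) (𝓝 0) := by
    have := (exp_neg_div_tendsto ht).smul_const v_o
    rwa [zero_smul] at this
  set φ : ℝ → ℝ → ℝ := fun h x => Real.exp ((x - t)/h) / h with hφ
  have h2 : Tendsto (fun h : ℝ => ∫ x in Set.Ioc 0 t, φ h x • g x) (𝓝[>] 0) (𝓝 (g t)) := by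
    apply tendsto_setIntegral_peak_smul_of_integrableOn_of_tendsto
      (measurableSet_Ioc) (measurableSet_Ioc) (subset_rfl) (self_mem_nhdsWithin)
      (by rw [Real.volume_Ioc]; exact ENNReal.ofReal_ne_top)
    · filter_upwards [self_mem_nhdsWithin] with h (hh : (0:ℝ) < h)
      intro x _
      exact le_of_lt (div_pos (Real.exp_pos _) hh)
    · intro u hu htu
      obtain ⟨δ, hδ, hball⟩ := Metric.isOpen_iff.1 hu t htu
      rw [Metric.tendstoUniformlyOn_iff]
      intro ε hε
      filter_upwards [(Metric.tendsto_nhds.1 (exp_decay_aux hδ)) ε hε,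
        self_mem_nhdsWithin] with h hsmall (hh : (0:ℝ) < h)
      intro x hx
      have hxt : x - t ≤ -δ := by
        have h1 : x ≤ t := hx.1.2
        have h2 : δ ≤ dist x t := by
          by_contra hcon
          exact hx.2 (hball (Metric.mem_ball.2 (not_le.1 hcon)))
        rw [Real.dist_eq, abs_of_nonpos (by linarith)] at h2
        linarith
      have hb1 : φ h x ≤ Real.exp (-δ/h) / h := by
        have e1 : (x - t)/h ≤ -δ/h := (div_le_div_iff_of_pos_right hh).2 hxt
        exact (div_le_div_iff_of_pos_right hh).2 (Real.exp_le_exp.2 e1)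
      have hb2 : Real.exp (-δ/h)/h < ε := by
        rwa [Real.dist_0_eq_abs,
          abs_of_pos (div_pos (Real.exp_pos _) hh)] at hsmall
      rw [Pi.zero_apply, dist_comm, Real.dist_0_eq_abs,
        abs_of_pos (div_pos (Real.exp_pos _) hh)]
      exact lt_of_le_of_lt hb1 hb2
    · have key : ∀ h : ℝ, ∫ x in Set.Ioc 0 t, φ h x
          = Real.exp ((t - t)/h) - Real.exp ((0 - t)/h) := by
        intro h
        rw [← intervalIntegral.integral_of_le ht.le, hφ]
        exact int_exp_right t 0 t
      simp only [key]
      have : Tendsto (fun h : ℝ => Real.exp ((t - t)/h) - Real.exp ((0 - t)/h)) (𝓝[>] 0)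
          (𝓝 (1 - 0)) := by
        apply Tendsto.sub
        · simp only [sub_self, zero_div, Real.exp_zero]; exact tendsto_const_nhds
        · simpa only [zero_sub, neg_div] using exp_neg_div_tendsto ht
      simpa using this
    · filter_upwards with h
      exact Continuous.aestronglyMeasurable (by fun_prop)
    · exact hg.integrableOn_Ioc
    · exact (hg.tendsto t).mono_left nhdsWithin_le_nhds
  have key : (fun h : ℝ => Real.exp (-t/h) • v_o + ∫ x in Set.Ioc 0 t, φ h x • g x)
      =ᶠ[𝓝[>] (0:ℝ)] (fun h : ℝ => Real.exp (-t/h) • v_o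
        + (1/h) • ∫ s in (0:ℝ)..t, Real.exp ((s - t)/h) • g s) := by
    filter_upwards [self_mem_nhdsWithin] with h (hh : (0:ℝ) < h)
    congr 1
    rw [intervalIntegral.integral_of_le ht.le, ← MeasureTheory.integral_smul]
    apply setIntegral_congr_fun measurableSet_Ioc
    intro x _
    show φ h x • g x = (1/h) • Real.exp ((x - t)/h) • g x
    rw [smul_smul, hφ]
    congr 1
    simp only []
    field_simp
  have := (h1.add h2)
  rw [zero_add] at this
  exact Filter.Tendsto.congr' key this


lemma kmap_continuous {X : Type*} [NormedAddCommGroup X] [NormedSpace ℝ X] [CompleteSpace X]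
    {h : ℝ} {g : ℝ → X} (hg : Continuous g) :
    Continuous (fun t => (1/h) • ∫ s in (0:ℝ)..t, Real.exp ((s - t)/h) • g s) := by
  have hP : Continuous (fun t => ∫ s in (0:ℝ)..t, Real.exp (s/h) • g s) :=
    intervalIntegral.continuous_primitive
      (fun a b => (Continuous.intervalIntegrable (by fun_prop) a b)) 0
  have keyf : (fun t => (1/h) • ∫ s in (0:ℝ)..t, Real.exp ((s - t)/h) • g s)
      = fun t => (1/h) • Real.exp (-t/h) • ∫ s in (0:ℝ)..t, Real.exp (s/h) • g s := by
    funext t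
    rw [← intervalIntegral.integral_smul, ← intervalIntegral.integral_smul,
      ← intervalIntegral.integral_smul]
    apply intervalIntegral.integral_congr
    intro s _
    simp only [smul_smul]
    congr 1
    rw [← Real.exp_add]
    congr 1
    ring
  rw [keyf]
  exact continuous_const.smul
    ((by fun_prop : Continuous fun t : ℝ => Real.exp (-t/h)).smul hP)

lemma landes_cont {X : Type*} [NormedAddCommGroup X] [NormedSpace ℝ X] [CompleteSpace X]
    {T r : ℝ} (hT : 0 < T) (hr : 1 ≤ r) (v_o : X) {g : ℝ → X}
    (hg : Continuous g) {C : ℝ} (hC : ∀ x, ‖g x‖ ≤ C) :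
    Tendsto (fun h : ℝ => ∫⁻ t in Set.Ioo 0 T,
        (‖(Real.exp (-t/h) • v_o + (1/h) • ∫ s in (0:ℝ)..t, Real.exp ((s - t)/h) • g s)
          - g t‖₊ : ℝ≥0∞) ^ r)
      (𝓝[>] 0) (𝓝 0) := by
  have hr0 : (0:ℝ) < r := lt_of_lt_of_le one_pos hr
  have hC0 : 0 ≤ C := le_trans (norm_nonneg (g 0)) (hC 0)
  set M : ℝ := ‖v_o‖ + C + C with hM
  have hM0 : 0 ≤ M := by positivity
  have key := tendsto_lintegral_filter_of_dominated_convergence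
    (μ := volume.restrict (Set.Ioo 0 T)) (l := 𝓝[>] (0:ℝ))
    (F := fun h t => (‖(Real.exp (-t/h) • v_o
        + (1/h) • ∫ s in (0:ℝ)..t, Real.exp ((s - t)/h) • g s) - g t‖₊ : ℝ≥0∞) ^ r)
    (f := fun _ => 0) (bound := fun _ => ENNReal.ofReal M ^ r)
    ?_ ?_ ?_ ?_
  · simpa using key
  · -- measurability
    filter_upwards [self_mem_nhdsWithin] with h (hh : (0:ℝ) < h)
    have hcont : Continuous (fun t => (Real.exp (-t/h) • v_o
        + (1/h) • ∫ s in (0:ℝ)..t, Real.exp ((s - t)/h) • g s) - g t) := by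
      apply Continuous.sub ?_ hg
      apply Continuous.add (by fun_prop)
      have hP : Continuous (fun t => ∫ s in (0:ℝ)..t, Real.exp (s/h) • g s) :=
        intervalIntegral.continuous_primitive
          (fun a b => (Continuous.intervalIntegrable (by fun_prop) a b)) 0
      have keyf : (fun t => (1/h) • ∫ s in (0:ℝ)..t, Real.exp ((s - t)/h) • g s)
          = fun t => (1/h) • Real.exp (-t/h) • ∫ s in (0:ℝ)..t, Real.exp (s/h) • g s := by
        funext t
        rw [← intervalIntegral.integral_smul, ← intervalIntegral.integral_smul,
          ← intervalIntegral.integral_smul]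
        apply intervalIntegral.integral_congr
        intro s _
        simp only [smul_smul]
        congr 1
        rw [← Real.exp_add]
        congr 1
        ring
      rw [keyf]
      exact continuous_const.smul ((by fun_prop : Continuous fun t : ℝ =>
        Real.exp (-t/h)).smul hP)
    exact (hcont.nnnorm.measurable.coe_nnreal_ennreal).pow_const r
  · -- bound
    filter_upwards [self_mem_nhdsWithin] with h (hh : (0:ℝ) < h)
    filter_upwards [ae_restrict_mem measurableSet_Ioo] with t ht
    apply ENNReal.rpow_le_rpow ?_ (le_of_lt hr0)
    rw [← enorm_eq_nnnorm, ← ofReal_norm]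
    apply ENNReal.ofReal_le_ofReal
    have hK : ‖(1/h) • ∫ s in (0:ℝ)..t, Real.exp ((s - t)/h) • g s‖ ≤ C := by
      rw [norm_smul, Real.norm_eq_abs, abs_of_pos (by positivity)]
      have i0 : ‖∫ s in (0:ℝ)..t, Real.exp ((s - t)/h) • g s‖
          ≤ ∫ s in (0:ℝ)..t, ‖Real.exp ((s - t)/h) • g s‖ :=
        intervalIntegral.norm_integral_le_integral_norm ht.1.le
      have i1 : ∫ s in (0:ℝ)..t, ‖Real.exp ((s - t)/h) • g s‖
          ≤ ∫ s in (0:ℝ)..t, Real.exp ((s - t)/h) * C := by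
        apply intervalIntegral.integral_mono_on ht.1.le
        · exact Continuous.intervalIntegrable (by fun_prop) _ _
        · exact Continuous.intervalIntegrable (by fun_prop) _ _
        · intro s _
          rw [norm_smul, Real.norm_eq_abs, abs_of_pos (Real.exp_pos _)]
          exact mul_le_mul_of_nonneg_left (hC s) (Real.exp_pos _).le
      have i2 : ∫ s in (0:ℝ)..t, Real.exp ((s - t)/h) * C
          = (1 - Real.exp (-t/h)) * (h * C) := by
        have e1 : ∀ s : ℝ, Real.exp ((s - t)/h) * C = (Real.exp ((s - t)/h) / h) * (h * C) := by
          intro s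
          field_simp
        rw [intervalIntegral.integral_congr (fun s _ => e1 s),
          intervalIntegral.integral_mul_const, int_exp_right]
        congr 2
        simp [Real.exp_zero]
        congr 1
        ring
      have he : 0 < Real.exp (-t/h) := Real.exp_pos _
      have he1 : Real.exp (-t/h) ≤ 1 := by
        rw [Real.exp_le_one_iff]
        apply div_nonpos_of_nonpos_of_nonneg (by linarith [ht.1]) hh.le
      calc (1/h) * ‖∫ s in (0:ℝ)..t, Real.exp ((s - t)/h) • g s‖
          ≤ (1/h) * ((1 - Real.exp (-t/h)) * (h * C)) := by
            apply mul_le_mul_of_nonneg_left _ (by positivity)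
            rw [← i2]
            exact le_trans i0 i1
        _ = (1 - Real.exp (-t/h)) * C := by field_simp
        _ ≤ C := by nlinarith
    have hVo : ‖Real.exp (-t/h) • v_o‖ ≤ ‖v_o‖ := by
      rw [norm_smul, Real.norm_eq_abs, abs_of_pos (Real.exp_pos _)]
      have he1 : Real.exp (-t/h) ≤ 1 := by
        rw [Real.exp_le_one_iff]
        apply div_nonpos_of_nonpos_of_nonneg (by linarith [ht.1]) hh.le
      nlinarith [norm_nonneg v_o]
    calc ‖(Real.exp (-t/h) • v_o + (1/h) • ∫ s in (0:ℝ)..t, Real.exp ((s - t)/h) • g s)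
          - g t‖
        ≤ ‖Real.exp (-t/h) • v_o + (1/h) • ∫ s in (0:ℝ)..t, Real.exp ((s - t)/h) • g s‖
          + ‖g t‖ := norm_sub_le _ _
      _ ≤ (‖Real.exp (-t/h) • v_o‖
            + ‖(1/h) • ∫ s in (0:ℝ)..t, Real.exp ((s - t)/h) • g s‖) + ‖g t‖ := by
          gcongr
          exact norm_add_le _ _
      _ ≤ (‖v_o‖ + C) + C := add_le_add (add_le_add hVo hK) (hC t)
      _ = M := by rw [hM]
  · -- finiteness of bound integral
    rw [lintegral_const]
    apply ENNReal.mul_ne_top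
    · exact (ENNReal.rpow_lt_top_of_nonneg (le_of_lt hr0) ENNReal.ofReal_ne_top).ne
    · rw [Measure.restrict_apply_univ]
      exact (measure_Ioo_lt_top).ne
  · -- pointwise limit
    filter_upwards [ae_restrict_mem measurableSet_Ioo] with t ht
    have hpt := landes_pointwise v_o hg ht.1
    have hd : Tendsto (fun h : ℝ => (Real.exp (-t/h) • v_o
        + (1/h) • ∫ s in (0:ℝ)..t, Real.exp ((s - t)/h) • g s) - g t) (𝓝[>] 0) (𝓝 0) := by
      have := hpt.sub (tendsto_const_nhds (x := g t))
      rwa [sub_self] at this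
    have hn : Tendsto (fun h : ℝ => ‖(Real.exp (-t/h) • v_o
        + (1/h) • ∫ s in (0:ℝ)..t, Real.exp ((s - t)/h) • g s) - g t‖) (𝓝[>] 0) (𝓝 0) := by
      have := hd.norm
      rwa [norm_zero] at this
    have hrp : Tendsto (fun h : ℝ => ‖(Real.exp (-t/h) • v_o
        + (1/h) • ∫ s in (0:ℝ)..t, Real.exp ((s - t)/h) • g s) - g t‖ ^ r) (𝓝[>] 0) (𝓝 0) := by
      have := hn.rpow_const (Or.inr (le_of_lt hr0))
      rwa [Real.zero_rpow (ne_of_gt hr0)] at this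
    have := (ENNReal.continuous_ofReal.tendsto 0).comp hrp
    rw [ENNReal.ofReal_zero] at this
    refine this.congr ?_
    intro h
    simp only [Function.comp_apply]
    rw [← ENNReal.ofReal_rpow_of_nonneg (norm_nonneg _) (le_of_lt hr0),
      ofReal_norm, enorm_eq_nnnorm]

end Aux

open Set Filter
open scoped ENNReal NNReal Topology

/-- If `v ∈ L^r(0,T;X)` with `1 ≤ r < ∞` and `v_o ∈ X`, then `[v]_h → v` strongly in
`L^r(0,T;X)` as `h ↓ 0`, i.e. `∫_0^T ‖[v]_h(t) − v(t)‖^r dt → 0`. -/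
theorem stmt8 {X : Type*} [NormedAddCommGroup X] [NormedSpace ℝ X] [CompleteSpace X]
    (T r : ℝ) (hT : 0 < T) (hr : 1 ≤ r) (v_o : X) (v : ℝ → X)
    (hv : MemLp v (ENNReal.ofReal r) (volume.restrict (Set.Ioo 0 T))) :
    Filter.Tendsto (fun h : ℝ => ∫ t in Set.Ioo (0:ℝ) T, ‖landes h v_o v t - v t‖ ^ r)
      (nhdsWithin 0 (Set.Ioi 0)) (nhds 0) := by
  have hr0 : (0:ℝ) < r := lt_of_lt_of_le one_pos hr
  set μT := volume.restrict (Set.Ioo (0:ℝ) T) with hμTdef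
  haveI : IsFiniteMeasure μT := ⟨by
    rw [hμTdef, Measure.restrict_apply_univ]; exact measure_Ioo_lt_top⟩
  set p : ℝ≥0∞ := ENNReal.ofReal r with hpdef
  have hp0 : p ≠ 0 := by
    rw [hpdef, ne_eq, ENNReal.ofReal_eq_zero, not_le]; exact hr0
  have hptop : p ≠ ∞ := ENNReal.ofReal_ne_top
  have hpr : p.toReal = r := ENNReal.toReal_ofReal hr0.le
  have hp1 : 1 ≤ p := by
    rw [hpdef, ← ENNReal.ofReal_one]; exact ENNReal.ofReal_le_ofReal hr
  have hvInt : IntegrableOn v (Set.Ioo 0 T) := hv.integrable hp1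
  have hmeasL : ∀ h : ℝ, 0 < h → AEStronglyMeasurable (fun t => landes h v_o v t) μT := by
    intro h hh
    have hK := kmap_continuousOn hT hh hvInt
    have hcont : ContinuousOn (fun t => landes h v_o v t) (Set.Ioo 0 T) := by
      simp only [landes]
      apply ContinuousOn.add
      · exact Continuous.continuousOn (by fun_prop)
      · exact (hK.mono Set.Ioo_subset_Icc_self)
    exact hcont.aestronglyMeasurable measurableSet_Ioo
  -- main eLpNorm' convergence
  have E : Tendsto (fun h : ℝ => eLpNorm' (fun t => landes h v_o v t - v t) r μT)
      (𝓝[>] 0) (𝓝 0) := by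
    rw [ENNReal.tendsto_nhds_zero]
    intro ε hε
    set ε' : ℝ≥0∞ := min ε 1 with hε'def
    have hε'0 : ε' ≠ 0 := by
      rw [hε'def]
      exact (lt_min hε one_pos).ne'
    have hε'top : ε' ≠ ∞ := by
      rw [hε'def]
      exact (lt_of_le_of_lt (min_le_right _ _) ENNReal.one_lt_top).ne
    set δ : ℝ≥0∞ := ε' / 3 with hδdef
    have hδ0 : δ ≠ 0 := by
      rw [hδdef]
      simp [ENNReal.div_eq_zero_iff, hε'0]
    have hδtop : δ ≠ ∞ := by
      rw [hδdef]
      exact (ENNReal.div_lt_top hε'top (by norm_num)).ne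
    have h3δ : δ + δ + δ ≤ ε := by
      have : δ + δ + δ = ε' := by
        rw [hδdef, ENNReal.div_add_div_same, ENNReal.div_add_div_same,
          show ε' + ε' + ε' = 3 * ε' by ring,
          mul_comm, mul_div_assoc, ENNReal.div_self (by norm_num) (by norm_num), mul_one]
      rw [this, hε'def]
      exact min_le_left _ _
    -- density
    have hv' : MemLp ((Set.Ioo (0:ℝ) T).indicator v) p volume :=
      (memLp_indicator_iff_restrict measurableSet_Ioo).2 hv
    obtain ⟨g, g_supp, hgδ, g_cont, g_mem⟩ :=
      hv'.exists_hasCompactSupport_eLpNorm_sub_le hptop hδ0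
    obtain ⟨C, hC⟩ := g_supp.exists_bound_of_continuous g_cont
    have hvg : eLpNorm' (fun t => v t - g t) r μT ≤ δ := by
      have e2 : eLpNorm ((Set.Ioo (0:ℝ) T).indicator v - g) p μT
          = eLpNorm (fun t => v t - g t) p μT := by
        apply eLpNorm_congr_ae
        filter_upwards [indicator_ae_eq_restrict (μ := volume) (f := v)
          measurableSet_Ioo] with t htt
        simp only [Pi.sub_apply]
        rw [htt]
      calc eLpNorm' (fun t => v t - g t) r μT
          = eLpNorm (fun t => v t - g t) p μT := by
            rw [eLpNorm_eq_eLpNorm' hp0 hptop, hpr]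
        _ = eLpNorm ((Set.Ioo (0:ℝ) T).indicator v - g) p μT := e2.symm
        _ ≤ eLpNorm ((Set.Ioo (0:ℝ) T).indicator v - g) p volume :=
            eLpNorm_mono_measure _ Measure.restrict_le_self
        _ ≤ δ := hgδ
    have hgInt : IntegrableOn g (Set.Ioo 0 T) :=
      (g_cont.integrableOn_Icc).mono_set Set.Ioo_subset_Icc_self
    have hP2ev : ∀ᶠ h : ℝ in 𝓝[>] (0:ℝ), ∫⁻ t in Set.Ioo 0 T,
        (‖(Real.exp (-t/h) • v_o + (1/h) • ∫ s in (0:ℝ)..t, Real.exp ((s - t)/h) • g s)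
          - g t‖₊ : ℝ≥0∞) ^ r ≤ δ ^ r :=
      ENNReal.tendsto_nhds_zero.1 (landes_cont hT hr v_o g_cont hC) (δ ^ r)
        (ENNReal.rpow_pos (zero_lt_iff.2 hδ0) hδtop)
    filter_upwards [hP2ev, self_mem_nhdsWithin] with h hP2 (hh : (0:ℝ) < h)
    set P1 : ℝ → X := fun t => (1/h) • ∫ s in (0:ℝ)..t, Real.exp ((s - t)/h) • (v s - g s)
      with hP1def
    set P2 : ℝ → X := fun t => (Real.exp (-t/h) • v_o
      + (1/h) • ∫ s in (0:ℝ)..t, Real.exp ((s - t)/h) • g s) - g t with hP2def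
    set P3 : ℝ → X := fun t => g t - v t with hP3def
    have hdecomp : (fun t => landes h v_o v t - v t) =ᵐ[μT] (P1 + (P2 + P3)) := by
      filter_upwards [ae_restrict_mem measurableSet_Ioo] with t ht
      have hsub : Set.Ioc 0 t ⊆ Set.Ioo 0 T :=
        fun s hs => ⟨hs.1, lt_of_le_of_lt hs.2 ht.2⟩
      have hIv : IntervalIntegrable (fun s => Real.exp ((s - t)/h) • v s) volume 0 t := by
        rw [intervalIntegrable_iff_integrableOn_Ioc_of_le ht.1.le]
        apply Integrable.smul_of_top_right (hvInt.mono_set hsub)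
        apply memLp_top_of_bound
          (Continuous.aestronglyMeasurable
            (by fun_prop : Continuous fun s : ℝ => Real.exp ((s - t)/h))) 1
        filter_upwards [ae_restrict_mem measurableSet_Ioc] with s hs
        rw [Real.norm_eq_abs, abs_of_pos (Real.exp_pos _)]
        rw [Real.exp_le_one_iff]
        apply div_nonpos_of_nonpos_of_nonneg (by linarith [hs.2]) hh.le
      have hIg : IntervalIntegrable (fun s => Real.exp ((s - t)/h) • g s) volume 0 t :=
        Continuous.intervalIntegrable (by fun_prop) _ _
      have hsplit : ∫ s in (0:ℝ)..t, Real.exp ((s - t)/h) • (v s - g s)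
          = (∫ s in (0:ℝ)..t, Real.exp ((s - t)/h) • v s)
            - ∫ s in (0:ℝ)..t, Real.exp ((s - t)/h) • g s := by
        rw [← intervalIntegral.integral_sub hIv hIg]
        apply intervalIntegral.integral_congr
        intro s _
        simp [smul_sub]
      simp only [landes, Pi.add_apply, hP1def, hP2def, hP3def]
      rw [hsplit, smul_sub]
      abel
    rw [eLpNorm'_congr_ae hdecomp]
    have m1 : AEStronglyMeasurable P1 μT := by
      have := kmap_continuousOn hT hh (hvInt.sub hgInt)
      exact (this.mono Set.Ioo_subset_Icc_self).aestronglyMeasurable measurableSet_Ioo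
    have m2 : AEStronglyMeasurable P2 μT :=
      (((by fun_prop : Continuous fun t : ℝ => Real.exp (-t/h) • v_o).add
        (kmap_continuous g_cont)).sub g_cont).aestronglyMeasurable
    have m3 : AEStronglyMeasurable P3 μT := g_cont.aestronglyMeasurable.sub hv.1
    calc eLpNorm' (P1 + (P2 + P3)) r μT
        ≤ eLpNorm' P1 r μT + eLpNorm' (P2 + P3) r μT :=
          eLpNorm'_add_le m1 (m2.add m3) hr
      _ ≤ eLpNorm' P1 r μT + (eLpNorm' P2 r μT + eLpNorm' P3 r μT) := by
          gcongr
          exact eLpNorm'_add_le m2 m3 hr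
      _ ≤ δ + (δ + δ) := by
          gcongr
          · -- P1 : contraction
            have hco := contraction (r := r) hT hr hh
              (f := fun s => v s - g s) (hv.1.sub g_cont.aestronglyMeasurable)
            calc eLpNorm' P1 r μT
                = (∫⁻ t in Set.Ioo 0 T, (‖P1 t‖₊ : ℝ≥0∞) ^ r) ^ (1/r) := rfl
              _ ≤ (∫⁻ s in Set.Ioo 0 T, (‖v s - g s‖₊ : ℝ≥0∞) ^ r) ^ (1/r) :=
                  ENNReal.rpow_le_rpow hco (by positivity)
              _ = eLpNorm' (fun t => v t - g t) r μT := rfl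
              _ ≤ δ := hvg
          · -- P2
            calc eLpNorm' P2 r μT
                = (∫⁻ t in Set.Ioo 0 T, (‖P2 t‖₊ : ℝ≥0∞) ^ r) ^ (1/r) := rfl
              _ ≤ (δ ^ r) ^ (1/r) := ENNReal.rpow_le_rpow hP2 (by positivity)
              _ = δ := by
                  rw [← ENNReal.rpow_mul, mul_one_div, div_self (ne_of_gt hr0),
                    ENNReal.rpow_one]
          · -- P3
            have e3 : eLpNorm' P3 r μT = eLpNorm' (fun t => v t - g t) r μT := by
              rw [show P3 = -(fun t => v t - g t) from funext fun t => by
                simp [hP3def, neg_sub]]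
              exact eLpNorm'_neg _ _ _
            rw [e3]
            exact hvg
      _ = δ + δ + δ := by ring
      _ ≤ ε := h3δ
  -- convert to the real integral
  have hL : Tendsto (fun h : ℝ => ∫⁻ t in Set.Ioo 0 T,
      (‖landes h v_o v t - v t‖₊ : ℝ≥0∞) ^ r) (𝓝[>] 0) (𝓝 0) := by
    have cont : Tendsto (fun x : ℝ≥0∞ => x ^ r) (𝓝 0) (𝓝 0) := by
      have := (ENNReal.continuous_rpow_const (y := r)).tendsto 0
      rwa [ENNReal.zero_rpow_of_pos hr0] at this
    have := cont.comp E
    refine this.congr ?_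
    intro h
    simp only [Function.comp_apply, eLpNorm']
    rw [← ENNReal.rpow_mul, one_div, inv_mul_cancel₀ (ne_of_gt hr0), ENNReal.rpow_one]
    rfl
  have heq : (fun h : ℝ => (∫⁻ t in Set.Ioo 0 T,
      (‖landes h v_o v t - v t‖₊ : ℝ≥0∞) ^ r).toReal)
      =ᶠ[𝓝[>] (0:ℝ)] (fun h : ℝ => ∫ t in Set.Ioo (0:ℝ) T, ‖landes h v_o v t - v t‖ ^ r) := by
    filter_upwards [self_mem_nhdsWithin] with h (hh : (0:ℝ) < h)
    have hD : AEStronglyMeasurable (fun t => landes h v_o v t - v t) μT :=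
      (hmeasL h hh).sub hv.1
    rw [integral_eq_lintegral_of_nonneg_ae]
    · congr 1
      apply lintegral_congr
      intro t
      rw [← ENNReal.ofReal_rpow_of_nonneg (norm_nonneg _) hr0.le,
        ofReal_norm, enorm_eq_nnnorm]
    · filter_upwards with t
      positivity
    · exact (hD.norm.aemeasurable.pow_const r).aestronglyMeasurable
  have htr := (ENNReal.tendsto_toReal (a := 0) (by simp)).comp hL
  rw [ENNReal.toReal_zero] at htr
  exact Filter.Tendsto.congr' heq htr
end

section
/- Let n ≥ 1, N ≥ 1, q > 0, 0 < T < ∞, let Ω ⊆ ℝ^n be measurable with finite measure, and let u ∈ L^{q+1}(Ω × (0,T), ℝ^N), extended by u(x,t) := 0 for t > T. Then lim_{h ↓ 0} ∫_0^T ∫_Ω (1/h) ∫_t^{t+h} 𝔟[u(x,s), u(x,t)] ds dx dt = 0; that is, the Steklov averages (x,t) ↦ ⨍_t^{t+h} 𝔟[u(x,s), u(x,t)] ds converge to 𝔟[u(x,t), u(x,t)] = 0 in L^1(Ω × (0,T)) as h ↓ 0. -/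
open MeasureTheory intervalIntegral Filter Set
open scoped ENNReal Topology
set_option maxHeartbeats 1000000

lemma cesaro_aux {δ : ℝ → ℝ}
    (hlim : Filter.Tendsto δ (nhdsWithin 0 (Set.Ioi 0)) (nhds 0)) :
    Filter.Tendsto (fun h : ℝ => (1/h) * ∫ r in Set.Ioc 0 h, δ r)
      (nhdsWithin 0 (Set.Ioi 0)) (nhds 0) := by
  rw [Metric.tendsto_nhdsWithin_nhds] at hlim ⊢
  intro ε hε
  obtain ⟨d, hd, hball⟩ := hlim (ε/2) (by positivity)
  refine ⟨d, hd, fun {h} hh hhd => ?_⟩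
  have hh0 : (0:ℝ) < h := hh
  have hhd' : h < d := by
    rw [Real.dist_eq, sub_zero, abs_of_pos hh0] at hhd; exact hhd
  have hsub : ∀ r ∈ Set.Ioc (0:ℝ) h, ‖δ r‖ ≤ ε/2 := by
    intro r hr
    have h1 : dist (δ r) 0 < ε/2 := by
      refine hball hr.1 ?_
      rw [Real.dist_eq, sub_zero, abs_of_pos hr.1]
      exact lt_of_le_of_lt hr.2 hhd'
    rw [Real.dist_eq, sub_zero] at h1
    exact h1.le
  have hvol : volume (Set.Ioc (0:ℝ) h) < ∞ := by
    simp [Real.volume_Ioc]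
  have hb := norm_setIntegral_le_of_norm_le_const hvol hsub
  have hvol2 : volume.real (Set.Ioc (0:ℝ) h) = h := by
    simp [Measure.real, Real.volume_Ioc, ENNReal.toReal_ofReal hh0.le]
  rw [hvol2] at hb
  rw [Real.dist_eq, sub_zero, abs_mul, abs_of_pos (show (0:ℝ) < 1/h by positivity)]
  calc 1/h * |∫ r in Set.Ioc 0 h, δ r| ≤ 1/h * (ε/2 * h) := by
        refine mul_le_mul_of_nonneg_left ?_ (by positivity)
        exact hb
    _ = ε/2 := by field_simp
    _ < ε := by linarith


/-- For `u ∈ L^{q+1}(Ω × (0,T), ℝ^N)`, extended by zero for `t > T` and with `Ω` of finite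
measure, the Steklov averages `(x,t) ↦ ⨍_t^{t+h} 𝔟[u(x,s), u(x,t)] ds` converge to
`𝔟[u(x,t),u(x,t)] = 0` in `L^1(Ω × (0,T))` as `h ↓ 0`:
`lim_{h ↓ 0} ∫_0^T ∫_Ω (1/h) ∫_t^{t+h} 𝔟[u(x,s), u(x,t)] ds dx dt = 0`. -/
theorem stmt17 (n N : ℕ) (hn : 1 ≤ n) (hN : 1 ≤ N) (q T : ℝ) (hq : 0 < q) (hT : 0 < T)
    (Ω : Set (EuclideanSpace ℝ (Fin n))) (hΩ : MeasurableSet Ω) (hΩfin : volume Ω < ⊤)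
    (u : EuclideanSpace ℝ (Fin n) × ℝ → EuclideanSpace ℝ (Fin N))
    (humeas : Measurable u)
    (hext : ∀ (x : EuclideanSpace ℝ (Fin n)) (t : ℝ), T < t → u (x, t) = 0)
    (hLp : MemLp u (ENNReal.ofReal (q + 1)) (volume.restrict (Ω ×ˢ Set.Ioo 0 T))) :
    Filter.Tendsto
      (fun h : ℝ => ∫ z in Ω ×ˢ Set.Ioo (0:ℝ) T,
        (1 / h) * ∫ s in z.2..(z.2 + h), bterm q (u (z.1, s)) (u (z.1, z.2)))
      (nhdsWithin 0 (Set.Ioi 0)) (nhds 0) := by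
  have hq1 : (0:ℝ) < q + 1 := by linarith
  set S : Set (EuclideanSpace ℝ (Fin n) × ℝ) := Ω ×ˢ Set.Ioo 0 T with hSdef
  have hS : MeasurableSet S := hΩ.prod measurableSet_Ioo
  set μ : Measure (EuclideanSpace ℝ (Fin n) × ℝ) := volume.restrict S with hμdef
  set p : ℝ≥0∞ := ENNReal.ofReal (q+1) with hpdef
  set p' : ℝ≥0∞ := ENNReal.ofReal ((q+1)/q) with hp'def
  have hp_ne_top : p ≠ ∞ := ENNReal.ofReal_ne_top
  have hp'_ne_top : p' ≠ ∞ := ENNReal.ofReal_ne_top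
  have hp_toReal : p.toReal = q + 1 := ENNReal.toReal_ofReal hq1.le
  have hp_ne_zero : p ≠ 0 := by
    simp only [hpdef, ne_eq, ENNReal.ofReal_eq_zero, not_le]; linarith
  haveI : Fact ((1:ℝ≥0∞) ≤ p) := ⟨ENNReal.one_le_ofReal.mpr (by linarith)⟩
  haveI : Fact ((1:ℝ≥0∞) ≤ p') := ⟨ENNReal.one_le_ofReal.mpr (by
    rw [le_div_iff₀ hq]; linarith)⟩
  have hinv' : 1/p' = ENNReal.ofReal (q/(q+1)) := by
    rw [hp'def, one_div, ← ENNReal.ofReal_inv_of_pos (by positivity), inv_div]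
  have hinv : 1/p = ENNReal.ofReal (1/(q+1)) := by
    rw [hpdef, one_div, ← ENNReal.ofReal_inv_of_pos hq1, one_div]
  have h11 : (1:ℝ≥0∞)/1 = 1/p' + 1/p := by
    rw [hinv, hinv', ← ENNReal.ofReal_add (by positivity) (by positivity)]
    rw [← add_div, div_self (by linarith)]
    simp
  -- the function v
  set v : EuclideanSpace ℝ (Fin n) × ℝ → EuclideanSpace ℝ (Fin N) := S.indicator u with hvdef
  have hv_me : Measurable v := humeas.indicator hS
  have hvLp : MemLp v p volume := (memLp_indicator_iff_restrict hS).2 hLp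
  have hvμ : MemLp v p μ := hvLp.restrict S
  -- g
  set g : EuclideanSpace ℝ (Fin n) × ℝ → ℝ := fun z => ‖v z‖ ^ (q+1) with hgdef
  have hg_me : Measurable g := by
    exact hv_me.norm.pow measurable_const
  have hg_nonneg : ∀ z, 0 ≤ g z := fun z => Real.rpow_nonneg (norm_nonneg _) _
  have hg_int : Integrable g volume := by
    have := hvLp.norm_rpow hp_ne_zero hp_ne_top
    rw [hp_toReal] at this
    exact memLp_one_iff_integrable.mp this
  -- w
  set w : EuclideanSpace ℝ (Fin n) × ℝ → EuclideanSpace ℝ (Fin N) := fun z => vpow q (v z)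
    with hwdef
  have hw_me : Measurable w := (hv_me.norm.pow measurable_const).smul hv_me
  have hw_norm : ∀ z, ‖w z‖ = ‖v z‖ ^ q := by
    intro z
    show ‖(‖v z‖ ^ (q-1)) • v z‖ = _
    rw [norm_smul, Real.norm_of_nonneg (Real.rpow_nonneg (norm_nonneg _) _)]
    rcases eq_or_ne (v z) 0 with h | h
    · simp [h, Real.zero_rpow hq.ne']
    · rw [← Real.rpow_add_one (norm_ne_zero_iff.2 h), sub_add_cancel]
  have hw_inner : ∀ z, (inner ℝ (w z) (v z) : ℝ) = g z := by
    intro z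
    show (inner ℝ ((‖v z‖ ^ (q-1)) • v z) (v z) : ℝ) = ‖v z‖ ^ (q+1)
    rw [real_inner_smul_left, real_inner_self_eq_norm_mul_norm]
    rcases eq_or_ne (v z) 0 with h | h
    · simp [h, Real.zero_rpow (show q + 1 ≠ 0 by linarith)]
    · have hx : ‖v z‖ ≠ 0 := norm_ne_zero_iff.2 h
      rw [← mul_assoc, ← Real.rpow_add_one hx, sub_add_cancel, ← Real.rpow_add_one hx]
  have hwLp : MemLp w p' volume := by
    refine ⟨hw_me.aestronglyMeasurable, ?_⟩
    have h1 : eLpNorm w p' volume = eLpNorm (fun z => ‖v z‖ ^ q) p' volume := by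
      rw [← eLpNorm_norm w]
      congr 1
      funext z
      exact hw_norm z
    rw [h1, eLpNorm_norm_rpow v hq]
    have h2 : p' * ENNReal.ofReal q = p := by
      rw [hp'def, hpdef, ← ENNReal.ofReal_mul (by positivity), div_mul_cancel₀ _ hq.ne']
    rw [h2]
    exact ENNReal.rpow_lt_top_of_nonneg hq.le hvLp.eLpNorm_ne_top
  have hwμ : MemLp w p' μ := hwLp.restrict S
  -- translations
  let c : ℝ → C(EuclideanSpace ℝ (Fin n) × ℝ, EuclideanSpace ℝ (Fin n) × ℝ) :=
    fun r => ⟨fun z => (z.1, z.2 + r), by fun_prop⟩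
  have hpres : ∀ r, MeasurePreserving (c r) volume volume := by
    intro r
    rw [Measure.volume_eq_prod]
    exact (MeasurePreserving.id _).prod (measurePreserving_add_right volume r)
  have hccont : Continuous c := by
    apply ContinuousMap.continuous_of_continuous_uncurry
    show Continuous fun rz : ℝ × (EuclideanSpace ℝ (Fin n) × ℝ) => (rz.2.1, rz.2.2 + rz.1)
    fun_prop
  set G : Lp ℝ 1 volume := (memLp_one_iff_integrable.2 hg_int).toLp g with hGdef
  set W : Lp (EuclideanSpace ℝ (Fin N)) p' volume := hwLp.toLp w with hWdef
  set T1 : ℝ → Lp ℝ 1 volume := fun r => Lp.compMeasurePreserving (c r) (hpres r) G with hT1def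
  set T2 : ℝ → Lp (EuclideanSpace ℝ (Fin N)) p' volume :=
    fun r => Lp.compMeasurePreserving (c r) (hpres r) W with hT2def
  have hT1cont : Continuous T1 :=
    continuous_const.compMeasurePreservingLp hccont hpres ENNReal.one_ne_top
  have hT2cont : Continuous T2 :=
    continuous_const.compMeasurePreservingLp hccont hpres hp'_ne_top
  have hc0 : ⇑(c 0) = id := by
    funext z
    simp [c]
  have hT10 : T1 0 = G := by
    refine Lp.ext ?_
    refine (Lp.coeFn_compMeasurePreserving G (hpres 0)).trans ?_
    rw [hc0]
    rfl
  have hT20 : T2 0 = W := by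
    refine Lp.ext ?_
    refine (Lp.coeFn_compMeasurePreserving W (hpres 0)).trans ?_
    rw [hc0]
    rfl
  have hGae : ⇑G =ᵐ[volume] g := (memLp_one_iff_integrable.2 hg_int).coeFn_toLp
  have hWae : ⇑W =ᵐ[volume] w := hwLp.coeFn_toLp
  have hdist1 : ∀ r, (eLpNorm (fun z => g (c r z) - g z) 1 volume).toReal = dist (T1 r) G := by
    intro r
    rw [Lp.dist_def]
    congr 1
    apply eLpNorm_congr_ae
    have h1 : ⇑(T1 r) =ᵐ[volume] fun z => g (c r z) := by
      refine (Lp.coeFn_compMeasurePreserving G (hpres r)).trans ?_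
      exact (hpres r).quasiMeasurePreserving.ae_eq_comp hGae
    filter_upwards [h1, hGae] with z h1z h2z
    simp [Pi.sub_apply, h1z, h2z]
  have hdist2 : ∀ r,
      (eLpNorm (fun z => w (c r z) - w z) p' volume).toReal = dist (T2 r) W := by
    intro r
    rw [Lp.dist_def]
    congr 1
    apply eLpNorm_congr_ae
    have h1 : ⇑(T2 r) =ᵐ[volume] fun z => w (c r z) := by
      refine (Lp.coeFn_compMeasurePreserving W (hpres r)).trans ?_
      exact (hpres r).quasiMeasurePreserving.ae_eq_comp hWae
    filter_upwards [h1, hWae] with z h1z h2z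
    simp [Pi.sub_apply, h1z, h2z]
  -- algebraic identity
  have hBexp : ∀ (r : ℝ) z, bterm q (v (c r z)) (v z)
      = (q/(q+1)) * (g (c r z) - g z) - (inner ℝ (w (c r z) - w z) (v z) : ℝ) := by
    intro r z
    have h1 : (inner ℝ (w (c r z) - w z) (v z) : ℝ)
        = (inner ℝ (w (c r z)) (v z) : ℝ) - g z := by
      rw [inner_sub_left, hw_inner]
    rw [h1]
    show (1 / (q + 1)) * ‖v z‖ ^ (q + 1) + (q / (q + 1)) * ‖v (c r z)‖ ^ (q + 1)
        - (inner ℝ (vpow q (v (c r z))) (v z) : ℝ) = _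
    have h2 : (inner ℝ (vpow q (v (c r z))) (v z) : ℝ) = (inner ℝ (w (c r z)) (v z) : ℝ) := rfl
    rw [h2]
    have h3 : ‖v z‖ ^ (q+1) = g z := rfl
    have h4 : ‖v (c r z)‖ ^ (q+1) = g (c r z) := rfl
    rw [h3, h4]
    field_simp
    ring
  -- Hölder helper
  have hIP : ∀ a : EuclideanSpace ℝ (Fin n) × ℝ → EuclideanSpace ℝ (Fin N), MemLp a p' μ →
      Integrable (fun z => (inner ℝ (a z) (v z) : ℝ)) μ ∧
      |∫ z, (inner ℝ (a z) (v z) : ℝ) ∂μ|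
        ≤ (eLpNorm a p' μ).toReal * (eLpNorm v p μ).toReal := by
    intro a ha
    have hF : MemLp ((fun z => ‖a z‖) • v) 1 μ := hvμ.smul ha.norm (hpqr := ⟨by simpa [one_div] using h11.symm⟩)
    have hFint : Integrable ((fun z => ‖a z‖) • v) μ := memLp_one_iff_integrable.1 hF
    have hFnorm : ∀ z, ‖((fun z => ‖a z‖) • v) z‖ = ‖a z‖ * ‖v z‖ := by
      intro z
      show ‖(‖a z‖ : ℝ) • v z‖ = _
      rw [norm_smul, norm_norm]
    have hpt : ∀ z, ‖(inner ℝ (a z) (v z) : ℝ)‖ ≤ ‖((fun z => ‖a z‖) • v) z‖ := by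
      intro z
      rw [hFnorm z, Real.norm_eq_abs]
      exact abs_real_inner_le_norm _ _
    have hint : Integrable (fun z => (inner ℝ (a z) (v z) : ℝ)) μ := by
      refine Integrable.mono' hFint.norm (ha.1.inner hvμ.1) ?_
      exact Eventually.of_forall hpt
    refine ⟨hint, ?_⟩
    calc |∫ z, (inner ℝ (a z) (v z) : ℝ) ∂μ| ≤ ∫ z, ‖(inner ℝ (a z) (v z) : ℝ)‖ ∂μ := by
          rw [← Real.norm_eq_abs]
          exact norm_integral_le_integral_norm _
      _ ≤ ∫ z, ‖((fun z => ‖a z‖) • v) z‖ ∂μ :=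
          integral_mono hint.norm hFint.norm hpt
      _ = (eLpNorm ((fun z => ‖a z‖) • v) 1 μ).toReal := by
          rw [integral_norm_eq_lintegral_enorm hFint.aestronglyMeasurable,
            eLpNorm_one_eq_lintegral_enorm]
      _ ≤ ((eLpNorm (fun z => ‖a z‖) p' μ) * eLpNorm v p μ).toReal := by
          refine ENNReal.toReal_mono ?_ ?_
          · exact ENNReal.mul_ne_top (by simpa using ha.norm.eLpNorm_ne_top) hvμ.eLpNorm_ne_top
          · exact eLpNorm_smul_le_mul_eLpNorm hvμ.1 ha.1.norm (hpqr := ⟨by simpa [one_div] using h11.symm⟩)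
      _ = (eLpNorm a p' μ).toReal * (eLpNorm v p μ).toReal := by
          rw [eLpNorm_norm, ENNReal.toReal_mul]
  -- integrability of translates
  have hcm : ∀ r : ℝ, Measurable (c r) := fun r => (c r).continuous.measurable
  have hgτ : ∀ r : ℝ, Integrable (fun z => g (c r z)) volume := by
    intro r
    have := ((hpres r).integrable_comp hg_int.aestronglyMeasurable).2 hg_int
    exact this
  have hwτ : ∀ r : ℝ, MemLp (fun z => w (c r z)) p' volume := by
    intro r
    refine ⟨(hw_me.comp (hcm r)).aestronglyMeasurable, ?_⟩
    have h1 : eLpNorm (w ∘ (c r)) p' volume = eLpNorm w p' volume :=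
      eLpNorm_comp_measurePreserving hwLp.1 (hpres r)
    have h2 : (fun z => w (c r z)) = w ∘ (c r) := rfl
    rw [h2, h1]
    exact hwLp.2
  -- δ and its limit
  set δ : ℝ → ℝ := fun r => ∫ z, bterm q (v (c r z)) (v z) ∂μ with hδdef
  have hδ_bound : ∀ r, |δ r| ≤ (q/(q+1)) * dist (T1 r) G
      + dist (T2 r) W * (eLpNorm v p μ).toReal := by
    intro r
    have h1 : Integrable (fun z => g (c r z) - g z) μ :=
      ((hgτ r).restrict (s := S)).sub (hg_int.restrict (s := S))
    have haw : MemLp (fun z => w (c r z) - w z) p' μ := ((hwτ r).sub hwLp).restrict S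
    have h2 := hIP _ haw
    have heq : δ r = (q/(q+1)) * (∫ z, (g (c r z) - g z) ∂μ)
        - ∫ z, (inner ℝ (w (c r z) - w z) (v z) : ℝ) ∂μ := by
      rw [hδdef]
      simp only
      rw [show (fun z => bterm q (v (c r z)) (v z))
          = fun z => (q/(q+1)) * (g (c r z) - g z)
            - (inner ℝ (w (c r z) - w z) (v z) : ℝ) from funext (hBexp r)]
      rw [integral_sub (h1.const_mul _) h2.1, MeasureTheory.integral_const_mul]
    rw [heq]
    have hb1 : |∫ z, (g (c r z) - g z) ∂μ| ≤ dist (T1 r) G := by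
      have hstep1 : |∫ z, (g (c r z) - g z) ∂μ| ≤ ∫ z, |g (c r z) - g z| ∂μ := by
        simpa using norm_integral_le_integral_norm (μ := μ) (f := fun z => g (c r z) - g z)
      have hstep2 : ∫ z, |g (c r z) - g z| ∂μ ≤ ∫ z, |g (c r z) - g z| := by
        refine integral_mono_measure Measure.restrict_le_self ?_ ?_
        · exact Eventually.of_forall fun z => abs_nonneg _
        · exact ((hgτ r).sub hg_int).abs
      have hstep3 : ∫ z, |g (c r z) - g z| = dist (T1 r) G := by
        have hm : Measurable fun z => g (c r z) - g z := (hg_me.comp (hcm r)).sub hg_me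
        rw [← hdist1 r, eLpNorm_one_eq_lintegral_enorm,
          ← integral_norm_eq_lintegral_enorm hm.aestronglyMeasurable]
        simp [Real.norm_eq_abs]
      linarith
    have hb2 : |∫ z, (inner ℝ (w (c r z) - w z) (v z) : ℝ) ∂μ|
        ≤ dist (T2 r) W * (eLpNorm v p μ).toReal := by
      refine le_trans (hIP _ haw).2 ?_
      refine mul_le_mul_of_nonneg_right ?_ ENNReal.toReal_nonneg
      rw [← hdist2 r]
      refine ENNReal.toReal_mono ?_ (eLpNorm_mono_measure _ Measure.restrict_le_self)
      exact ((hwτ r).sub hwLp).eLpNorm_ne_top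
    calc |(q/(q+1)) * (∫ z, (g (c r z) - g z) ∂μ)
        - ∫ z, (inner ℝ (w (c r z) - w z) (v z) : ℝ) ∂μ|
        ≤ |(q/(q+1)) * (∫ z, (g (c r z) - g z) ∂μ)|
          + |∫ z, (inner ℝ (w (c r z) - w z) (v z) : ℝ) ∂μ| := abs_sub _ _
      _ ≤ (q/(q+1)) * dist (T1 r) G + dist (T2 r) W * (eLpNorm v p μ).toReal := by
          rw [abs_mul, abs_of_nonneg (by positivity : (0:ℝ) ≤ q/(q+1))]
          exact add_le_add (mul_le_mul_of_nonneg_left hb1 (by positivity)) hb2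
  have hδ_lim : Tendsto δ (nhdsWithin 0 (Set.Ioi 0)) (nhds 0) := by
    have h1 : Tendsto (fun r => dist (T1 r) G) (nhds (0:ℝ)) (nhds 0) := by
      have := (hT1cont.tendsto 0).dist (tendsto_const_nhds (x := G))
      rw [hT10, dist_self] at this
      exact this
    have h2 : Tendsto (fun r => dist (T2 r) W) (nhds (0:ℝ)) (nhds 0) := by
      have := (hT2cont.tendsto 0).dist (tendsto_const_nhds (x := W))
      rw [hT20, dist_self] at this
      exact this
    have hb : Tendsto (fun r => (q/(q+1)) * dist (T1 r) G
        + dist (T2 r) W * (eLpNorm v p μ).toReal) (nhds (0:ℝ)) (nhds 0) := by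
      have hb2 := (h1.const_mul (q/(q+1))).add (h2.mul_const (eLpNorm v p μ).toReal)
      rw [mul_zero, zero_mul, add_zero] at hb2
      exact hb2
    exact squeeze_zero_norm hδ_bound (hb.mono_left nhdsWithin_le_nhds)
  -- joint integrability and Fubini
  have hτme : Measurable fun zr : (EuclideanSpace ℝ (Fin n) × ℝ) × ℝ => (c zr.2) zr.1 := by
    show Measurable fun zr : (EuclideanSpace ℝ (Fin n) × ℝ) × ℝ =>
      ((zr.1.1, zr.1.2 + zr.2) : EuclideanSpace ℝ (Fin n) × ℝ)
    fun_prop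
  have hBdef : ∀ (r : ℝ) z, bterm q (v (c r z)) (v z)
      = (1/(q+1)) * g z + (q/(q+1)) * g (c r z) - (inner ℝ (w (c r z)) (v z) : ℝ) := by
    intro r z
    rfl
  have hCfin : ∫⁻ z, ‖g z‖₊ ∂volume < ⊤ := hg_int.2
  have hMfin : eLpNorm w p' volume * eLpNorm v p μ < ⊤ :=
    ENNReal.mul_lt_top hwLp.eLpNorm_lt_top hvμ.eLpNorm_lt_top
  have hinner_bound : ∀ r : ℝ, ∫⁻ z, ‖(inner ℝ (w (c r z)) (v z) : ℝ)‖₊ ∂μ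
      ≤ eLpNorm w p' volume * eLpNorm v p μ := by
    intro r
    have hsmul : ∀ z, ‖(inner ℝ (w (c r z)) (v z) : ℝ)‖ ≤ ‖((fun z => ‖w (c r z)‖) • v) z‖ := by
      intro z
      have : ‖((fun z => ‖w (c r z)‖) • v) z‖ = ‖w (c r z)‖ * ‖v z‖ := by
        show ‖(‖w (c r z)‖ : ℝ) • v z‖ = _
        rw [norm_smul, norm_norm]
      rw [this, Real.norm_eq_abs]
      exact abs_real_inner_le_norm _ _
    calc ∫⁻ z, ‖(inner ℝ (w (c r z)) (v z) : ℝ)‖₊ ∂μ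
        = eLpNorm (fun z => (inner ℝ (w (c r z)) (v z) : ℝ)) 1 μ :=
          (eLpNorm_one_eq_lintegral_enorm (f := fun z => (inner ℝ (w (c r z)) (v z) : ℝ))).symm
      _ ≤ eLpNorm ((fun z => ‖w (c r z)‖) • v) 1 μ := eLpNorm_mono hsmul
      _ ≤ eLpNorm (fun z => ‖w (c r z)‖) p' μ * eLpNorm v p μ :=
          eLpNorm_smul_le_mul_eLpNorm hvμ.1 ((hw_me.comp (hcm r)).norm).aestronglyMeasurable (hpqr := ⟨by simpa [one_div] using h11.symm⟩)
      _ = eLpNorm (fun z => w (c r z)) p' μ * eLpNorm v p μ := by rw [eLpNorm_norm]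
      _ ≤ eLpNorm (fun z => w (c r z)) p' volume * eLpNorm v p μ := by
          exact mul_le_mul_left (eLpNorm_mono_measure _ Measure.restrict_le_self) _
      _ = eLpNorm w p' volume * eLpNorm v p μ := by
          rw [show (fun z => w (c r z)) = w ∘ ⇑(c r) from rfl,
            eLpNorm_comp_measurePreserving hwLp.1 (hpres r)]
  have hBint : ∀ h : ℝ, 0 < h → Integrable
      (fun zr : (EuclideanSpace ℝ (Fin n) × ℝ) × ℝ => bterm q (v (c zr.2 zr.1)) (v zr.1))
      (μ.prod (volume.restrict (Set.Ioc 0 h))) := by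
    intro h hh
    set ν : Measure ℝ := volume.restrict (Set.Ioc 0 h) with hνdef
    haveI : IsFiniteMeasure ν := by
      constructor
      rw [Measure.restrict_apply_univ]
      simp [Real.volume_Ioc]
    have hm1 : Measurable fun zr : (EuclideanSpace ℝ (Fin n) × ℝ) × ℝ => g zr.1 :=
      hg_me.comp measurable_fst
    have hm2 : Measurable fun zr : (EuclideanSpace ℝ (Fin n) × ℝ) × ℝ => g (c zr.2 zr.1) :=
      hg_me.comp hτme
    have I1 : Integrable (fun zr : (EuclideanSpace ℝ (Fin n) × ℝ) × ℝ => g zr.1) (μ.prod ν) := by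
      refine ⟨hm1.aestronglyMeasurable, ?_⟩
      show ∫⁻ zr, ‖g zr.1‖₊ ∂(μ.prod ν) < ⊤
      rw [lintegral_prod _ (hm1.nnnorm.coe_nnreal_ennreal).aemeasurable]
      simp only [lintegral_const]
      calc ∫⁻ z, (‖g z‖₊ : ℝ≥0∞) * ν Set.univ ∂μ = (∫⁻ z, ‖g z‖₊ ∂μ) * ν Set.univ :=
            lintegral_mul_const' _ _ (measure_ne_top _ _)
        _ < ⊤ := ENNReal.mul_lt_top
            (lt_of_le_of_lt (lintegral_mono' Measure.restrict_le_self le_rfl) hCfin)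
            (measure_lt_top _ _)
    have I2 : Integrable (fun zr : (EuclideanSpace ℝ (Fin n) × ℝ) × ℝ => g (c zr.2 zr.1))
        (μ.prod ν) := by
      refine ⟨hm2.aestronglyMeasurable, ?_⟩
      show ∫⁻ zr, ‖g (c zr.2 zr.1)‖₊ ∂(μ.prod ν) < ⊤
      rw [lintegral_prod_symm _ (hm2.nnnorm.coe_nnreal_ennreal).aemeasurable]
      calc ∫⁻ r, ∫⁻ z, (‖g (c r z)‖₊ : ℝ≥0∞) ∂μ ∂ν
          ≤ ∫⁻ _, (∫⁻ z, ‖g z‖₊ ∂volume) ∂ν := by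
            refine lintegral_mono fun r => ?_
            calc ∫⁻ z, (‖g (c r z)‖₊ : ℝ≥0∞) ∂μ ≤ ∫⁻ z, (‖g (c r z)‖₊ : ℝ≥0∞) ∂volume :=
                  lintegral_mono' Measure.restrict_le_self le_rfl
              _ = ∫⁻ z, ‖g z‖₊ ∂volume :=
                  (hpres r).lintegral_comp hg_me.nnnorm.coe_nnreal_ennreal
        _ = (∫⁻ z, ‖g z‖₊ ∂volume) * ν Set.univ := lintegral_const _
        _ < ⊤ := ENNReal.mul_lt_top hCfin (measure_lt_top _ _)
    have I3 : Integrable (fun zr : (EuclideanSpace ℝ (Fin n) × ℝ) × ℝ =>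
        (inner ℝ (w (c zr.2 zr.1)) (v zr.1) : ℝ)) (μ.prod ν) := by
      have hme : Measurable fun zr : (EuclideanSpace ℝ (Fin n) × ℝ) × ℝ =>
          (inner ℝ (w (c zr.2 zr.1)) (v zr.1) : ℝ) :=
        (hw_me.comp hτme).inner (hv_me.comp measurable_fst)
      refine ⟨hme.aestronglyMeasurable, ?_⟩
      show ∫⁻ zr, ‖(inner ℝ (w (c zr.2 zr.1)) (v zr.1) : ℝ)‖₊ ∂(μ.prod ν) < ⊤
      rw [lintegral_prod_symm _ (hme.nnnorm.coe_nnreal_ennreal).aemeasurable]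
      calc ∫⁻ r, ∫⁻ z, (‖(inner ℝ (w (c r z)) (v z) : ℝ)‖₊ : ℝ≥0∞) ∂μ ∂ν
          ≤ ∫⁻ _, (eLpNorm w p' volume * eLpNorm v p μ) ∂ν :=
            lintegral_mono fun r => hinner_bound r
        _ = (eLpNorm w p' volume * eLpNorm v p μ) * ν Set.univ := lintegral_const _
        _ < ⊤ := ENNReal.mul_lt_top hMfin (measure_lt_top _ _)
    have : (fun zr : (EuclideanSpace ℝ (Fin n) × ℝ) × ℝ => bterm q (v (c zr.2 zr.1)) (v zr.1))
        = fun zr => (1/(q+1)) * g zr.1 + (q/(q+1)) * g (c zr.2 zr.1)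
          - (inner ℝ (w (c zr.2 zr.1)) (v zr.1) : ℝ) := by
      funext zr
      exact hBdef zr.2 zr.1
    rw [this]
    exact ((I1.const_mul _).add (I2.const_mul _)).sub I3
  -- key identity
  have key : ∀ h : ℝ, 0 < h →
      (∫ z, ((1/h) * ∫ s in z.2..(z.2 + h), bterm q (u (z.1, s)) (u (z.1, z.2))) ∂μ)
        = (1/h) * ∫ r in Set.Ioc (0:ℝ) h, δ r := by
    intro h hh
    have hTa : ∀ᵐ s : ℝ, s ≠ T := by
      have := (Set.countable_singleton T).ae_notMem (μ := volume)
      simpa using this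
    have hz : ∀ᵐ z ∂μ, (1/h) * (∫ s in z.2..(z.2 + h), bterm q (u (z.1, s)) (u (z.1, z.2)))
        = (1/h) * ∫ r in Set.Ioc (0:ℝ) h, bterm q (v (c r z)) (v z) := by
      filter_upwards [ae_restrict_mem hS] with z hzS
      have hx : z.1 ∈ Ω := hzS.1
      have ht : z.2 ∈ Set.Ioo 0 T := hzS.2
      have huvz : u (z.1, z.2) = v z := (Set.indicator_of_mem hzS u).symm
      congr 1
      have step1 : (∫ s in z.2..(z.2 + h), bterm q (u (z.1, s)) (u (z.1, z.2)))
          = ∫ s in z.2..(z.2 + h), bterm q (v (z.1, s)) (v z) := by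
        apply intervalIntegral.integral_congr_ae
        filter_upwards [hTa] with s hsT hs
        rw [Set.uIoc_of_le (by linarith : z.2 ≤ z.2 + h)] at hs
        have hs0 : (0:ℝ) < s := lt_trans ht.1 hs.1
        have huvs : u (z.1, s) = v (z.1, s) := by
          rcases lt_or_gt_of_ne hsT with hlt | hgt
          · exact (Set.indicator_of_mem (show ((z.1, s)) ∈ S from ⟨hx, hs0, hlt⟩) u).symm
          · rw [hext z.1 s hgt]
            exact (Set.indicator_of_notMem
              (fun hmem => absurd hmem.2.2 (not_lt.2 hgt.le)) u).symm
        rw [huvs, huvz]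
      rw [step1]
      have step2 : (∫ r in (0:ℝ)..h, bterm q (v (z.1, z.2 + r)) (v z))
          = ∫ s in z.2..(z.2 + h), bterm q (v (z.1, s)) (v z) := by
        rw [intervalIntegral.integral_comp_add_left
          (fun s => bterm q (v (z.1, s)) (v z)) z.2, add_zero]
      rw [← step2, intervalIntegral.integral_of_le hh.le]
      rfl
    rw [integral_congr_ae hz, MeasureTheory.integral_const_mul]
    congr 1
    exact integral_integral_swap (f := fun z r => bterm q (v (c r z)) (v z)) (hBint h hh)
  -- final assembly
  refine Filter.Tendsto.congr' ?_ (cesaro_aux hδ_lim)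
  filter_upwards [self_mem_nhdsWithin] with h hh
  exact (key h hh).symm
end
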